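/- arXiv:2005.14125 — 8 statements merged into one kernel-verified Lean document; each statement's English description precedes it below -/
import Mathlib

section
/- Let X be an arbitrary set and h_1, ..., h_r : X → ℝ be arbitrarily fixed functions. A function f : X → ℝ belongs to B(h_1, ..., h_r; X) if and only if for every cycle {x_1, ..., x_n} ⊆ X with respect to h_1, ..., h_r and every associated vector of nonzero reals λ_1, ..., λ_n, one has ∑_{j=1}^n λ_j f(x_j) = 0. -/
/-- A function `f : X → ℝ` is a sum `∑ᵢ gᵢ ∘ hᵢ` (i.e. belongs to
`B(h₁,...,h_r; X)`) if and only if `∑ⱼ λⱼ f(xⱼ) = 0` for every cycle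
`{x₁,...,x_n} ⊆ X` with respect to `h₁,...,h_r` and every associated vector
of nonzero reals `λ₁,...,λ_n`. -/
theorem stmt0 {X : Type*} {r : ℕ} (h : Fin r → X → ℝ) (f : X → ℝ) :
    (∃ g : Fin r → ℝ → ℝ, ∀ x : X, f x = ∑ i, g i (h i x)) ↔
    (∀ (n : ℕ) (x : Fin n → X) (lam : Fin n → ℝ),
      Function.Injective x → (∀ j, lam j ≠ 0) →
      (∀ (i : Fin r) (t : ℝ),
        ∑ j ∈ Finset.univ.filter (fun j => h i (x j) = t), lam j = 0) →
      ∑ j, lam j * f (x j) = 0) := by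
  classical
  constructor
  · rintro ⟨g, hg⟩ n x lam hinj hne hcyc
    have key : ∀ i : Fin r, ∑ j, lam j * g i (h i (x j)) = 0 := by
      intro i
      rw [← Finset.sum_fiberwise_of_maps_to
        (g := fun j => h i (x j)) (t := Finset.univ.image fun j => h i (x j))
        (fun j _ => Finset.mem_image_of_mem _ (Finset.mem_univ j))]
      apply Finset.sum_eq_zero
      intro t _
      have : ∑ j ∈ Finset.univ.filter (fun j => h i (x j) = t), lam j * g i (h i (x j))
          = ∑ j ∈ Finset.univ.filter (fun j => h i (x j) = t), lam j * g i t := by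
        refine Finset.sum_congr rfl fun j hj => ?_
        rw [(Finset.mem_filter.mp hj).2]
      rw [this, ← Finset.sum_mul, hcyc i t, zero_mul]
    calc ∑ j, lam j * f (x j) = ∑ j, ∑ i, lam j * g i (h i (x j)) := by
          simp [hg, Finset.mul_sum]
      _ = ∑ i, ∑ j, lam j * g i (h i (x j)) := Finset.sum_comm
      _ = 0 := by simp [key]
  · intro H
    set T : (X →₀ ℝ) →ₗ[ℝ] (Fin r → (ℝ →₀ ℝ)) :=
      LinearMap.pi (fun i => Finsupp.lmapDomain ℝ ℝ (h i)) with hT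
    set φ : (X →₀ ℝ) →ₗ[ℝ] ℝ := Finsupp.linearCombination ℝ f with hφ
    -- mapDomain evaluated at a point
    have hmap : ∀ (l : X →₀ ℝ) (i : Fin r) (t : ℝ),
        Finsupp.mapDomain (h i) l t = ∑ a ∈ l.support, if h i a = t then l a else 0 := by
      intro l i t
      rw [Finsupp.mapDomain, Finsupp.sum, Finsupp.finset_sum_apply]
      exact Finset.sum_congr rfl fun a _ => Finsupp.single_apply
    have hker : LinearMap.ker T ≤ LinearMap.ker φ := by
      intro l hl
      have hl' : ∀ (i : Fin r) (t : ℝ), ∑ a ∈ l.support, (if h i a = t then l a else 0) = 0 := by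
        intro i t
        rw [← hmap l i t]
        have : T l = 0 := hl
        have := congrFun this i
        simp only [hT, LinearMap.pi_apply, Finsupp.lmapDomain_apply] at this
        rw [this]; rfl
      set s := l.support with hs
      set e := s.equivFin with he
      set x : Fin s.card → X := fun j => (e.symm j : X) with hx
      set lam : Fin s.card → ℝ := fun j => l (e.symm j) with hlam
      have hinj : Function.Injective x :=
        Subtype.val_injective.comp e.symm.injective
      have hne : ∀ j, lam j ≠ 0 := fun j => Finsupp.mem_support_iff.mp (e.symm j).2
      have htrans : ∀ F : X → ℝ, ∑ j, F (x j) = ∑ a ∈ s, F a := by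
        intro F
        rw [← Finset.sum_coe_sort s F]
        exact Fintype.sum_equiv e.symm _ _ fun j => rfl
      have hcyc : ∀ (i : Fin r) (t : ℝ),
          ∑ j ∈ Finset.univ.filter (fun j => h i (x j) = t), lam j = 0 := by
        intro i t
        rw [Finset.sum_filter]
        have : ∑ j, (if h i (x j) = t then lam j else 0)
            = ∑ a ∈ s, (if h i a = t then l a else 0) :=
          htrans (fun a => if h i a = t then l a else 0)
        rw [this, hl' i t]
      have := H s.card x lam hinj hne hcyc
      have hφl : φ l = ∑ j, lam j * f (x j) := by
        rw [hφ, Finsupp.linearCombination_apply, Finsupp.sum,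
          htrans (fun a => l a * f a)]
        simp [smul_eq_mul, hs]
      simpa [LinearMap.mem_ker, hφl] using this
    obtain ⟨ψ, hψ⟩ := LinearMap.exists_extend
      (((LinearMap.ker T).liftQ φ hker).comp (T.quotKerEquivRange).symm.toLinearMap)
    have key : ∀ v, ψ (T v) = φ v := by
      intro v
      have h1 : (⟨T v, LinearMap.mem_range_self T v⟩ : LinearMap.range T)
          = T.quotKerEquivRange (Submodule.Quotient.mk v) := by
        ext
        rw [LinearMap.quotKerEquivRange_apply_mk]
      have h2 : ψ (T v) = ψ ((LinearMap.range T).subtype ⟨T v, LinearMap.mem_range_self T v⟩) :=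
        rfl
      rw [h2, ← LinearMap.comp_apply, hψ, h1]
      simp
    refine ⟨fun i t => ψ (Pi.single i (Finsupp.single t 1)), fun x => ?_⟩
    have h3 : ∀ i, (T (Finsupp.single x 1)) i = Finsupp.single (h i x) 1 := by
      intro i
      simp [hT, Finsupp.mapDomain_single]
    calc f x = φ (Finsupp.single x 1) := by simp [hφ]
      _ = ψ (T (Finsupp.single x 1)) := (key _).symm
      _ = ψ (∑ i, Pi.single i (Finsupp.single (h i x) 1)) := by
          congr 1
          simp_rw [← h3]
          exact (Finset.univ_sum_single _).symm
      _ = ∑ i, ψ (Pi.single i (Finsupp.single (h i x) 1)) := map_sum ψ _ _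
end

section
/- Let X be an arbitrary set and h_1, ..., h_r : X → ℝ be arbitrarily fixed functions. Then B(h_1, ..., h_r; X) = T(X) if and only if X contains no cycle with respect to the functions h_1, ..., h_r. -/
/-- `B(h₁,...,h_r; X) = T(X)`, i.e. every function `f : X → ℝ` can be written
as `∑ᵢ gᵢ ∘ hᵢ`, if and only if `X` contains no cycle with respect to the
functions `h₁,...,h_r`. -/
theorem stmt1 {X : Type*} {r : ℕ} (h : Fin r → X → ℝ) :
    (∀ f : X → ℝ, ∃ g : Fin r → ℝ → ℝ, ∀ x : X, f x = ∑ i, g i (h i x)) ↔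
    ¬ ∃ (n : ℕ) (x : Fin n → X) (lam : Fin n → ℝ),
        0 < n ∧ Function.Injective x ∧ (∀ j, lam j ≠ 0) ∧
        ∀ (i : Fin r) (t : ℝ),
          ∑ j ∈ Finset.univ.filter (fun j => h i (x j) = t), lam j = 0 := by
  classical
  constructor
  · rintro hrep ⟨n, x, lam, hn, hinj, hlam, hcyc⟩
    set j0 : Fin n := ⟨0, hn⟩ with hj0
    obtain ⟨g, hg⟩ := hrep (fun y => if y = x j0 then (1 : ℝ) else 0)
    have key1 : ∑ j, lam j * (if x j = x j0 then (1 : ℝ) else 0) = lam j0 := by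
      rw [Finset.sum_eq_single j0]
      · simp
      · intro j _ hj
        rw [if_neg (fun hx => hj (hinj hx)), mul_zero]
      · simp
    have key2 : ∑ j, lam j * (if x j = x j0 then (1 : ℝ) else 0) = 0 := by
      have : ∀ j, (if x j = x j0 then (1 : ℝ) else 0) = ∑ i, g i (h i (x j)) := fun j => hg (x j)
      simp_rw [this, Finset.mul_sum]
      rw [Finset.sum_comm]
      refine Finset.sum_eq_zero fun i _ => ?_
      have hfib : ∑ t ∈ Finset.univ.image (fun j => h i (x j)),
          ∑ j ∈ Finset.univ.filter (fun j => h i (x j) = t), lam j * g i (h i (x j))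
          = ∑ j, lam j * g i (h i (x j)) :=
        Finset.sum_fiberwise_of_maps_to (fun j _ => Finset.mem_image_of_mem _ (Finset.mem_univ j)) _
      rw [← hfib]
      refine Finset.sum_eq_zero fun t _ => ?_
      have : ∑ j ∈ Finset.univ.filter (fun j => h i (x j) = t), lam j * g i (h i (x j))
          = (∑ j ∈ Finset.univ.filter (fun j => h i (x j) = t), lam j) * g i t := by
        rw [Finset.sum_mul]
        refine Finset.sum_congr rfl fun j hj => ?_
        rw [(Finset.mem_filter.mp hj).2]
      rw [this, hcyc i t, zero_mul]
    exact hlam j0 (key1 ▸ key2)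
  · intro hnc f
    -- the pushforward map on finitely supported measures
    set D : (X →₀ ℝ) →ₗ[ℝ] ((Fin r × ℝ) →₀ ℝ) :=
      Finsupp.lsum ℝ (fun a : X => ∑ i, Finsupp.lsingle (i, h i a)) with hD
    have hDval : ∀ (μ : X →₀ ℝ) (i : Fin r) (t : ℝ),
        D μ (i, t) = ∑ a ∈ μ.support.filter (fun a => h i a = t), μ a := by
      intro μ i t
      rw [hD, Finsupp.lsum_apply, Finsupp.sum_apply]
      rw [Finsupp.sum, Finset.sum_filter]
      refine Finset.sum_congr rfl fun a _ => ?_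
      rw [LinearMap.sum_apply, Finsupp.finset_sum_apply]
      rw [Finset.sum_eq_single i]
      · simp only [Finsupp.lsingle_apply, Finsupp.single_apply, Prod.mk.injEq, true_and]
      · intro i' _ hi'
        simp [Finsupp.lsingle_apply, Finsupp.single_apply, Prod.ext_iff, hi']
      · simp
    have hker : LinearMap.ker D = ⊥ := by
      rw [LinearMap.ker_eq_bot']
      intro μ hμ
      by_contra hμ0
      refine hnc ⟨μ.support.card, fun j => (μ.support.equivFin.symm j : X),
        fun j => μ ((μ.support.equivFin.symm j : X)), ?_, ?_, ?_, ?_⟩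
      · rwa [Finset.card_pos, Finsupp.support_nonempty_iff]
      · exact Subtype.coe_injective.comp μ.support.equivFin.symm.injective
      · intro j
        exact Finsupp.mem_support_iff.mp (μ.support.equivFin.symm j).2
      · intro i t
        have := hDval μ i t
        rw [hμ] at this
        simp only [Finsupp.coe_zero, Pi.zero_apply] at this
        rw [Finset.sum_filter]
        rw [Fintype.sum_equiv μ.support.equivFin.symm _
          (fun a : μ.support => if h i a = t then μ a else 0) (fun j => rfl)]
        rw [Finset.sum_coe_sort μ.support (fun a => if h i a = t then μ a else 0),
          ← Finset.sum_filter]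
        exact this.symm
    obtain ⟨L, hL⟩ := D.exists_leftInverse_of_injective hker
    set F : (X →₀ ℝ) →ₗ[ℝ] ℝ := Finsupp.linearCombination ℝ f with hF
    refine ⟨fun i t => F (L (Finsupp.single (i, t) 1)), fun x => ?_⟩
    have h1 : Finsupp.single x (1 : ℝ) = L (D (Finsupp.single x 1)) := by
      rw [← LinearMap.comp_apply, hL, LinearMap.id_apply]
    have h2 : D (Finsupp.single x 1) = ∑ i, Finsupp.single (i, h i x) (1 : ℝ) := by
      rw [hD, Finsupp.lsum_single, LinearMap.sum_apply]
      simp [Finsupp.lsingle_apply]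
    calc f x = F (Finsupp.single x 1) := by rw [hF]; simp
      _ = F (L (D (Finsupp.single x 1))) := by rw [← h1]
      _ = ∑ i, F (L (Finsupp.single (i, h i x) 1)) := by
          rw [h2, map_sum, map_sum]
end

section
/- Let X be a compact subset of ℝ^d and a^1, ..., a^r be nonzero vectors (directions) in ℝ^d. If every continuous function on X can be written as ∑_{i=1}^r g_i(a^i·x) with each summand g_i(a^i·x) continuous on X (i.e., R_c(a^1, ..., a^r; X) = C(X)), then every real-valued function on X, without any regularity assumption, can be written as ∑_{i=1}^r g_i(a^i·x) for some functions g_i : ℝ → ℝ (i.e., R(a^1, ..., a^r; X) = T(X)). -/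
open Finsupp

/-- Continuous interpolation of arbitrary data on a finite set in `ℝᵈ`. -/
lemma interp_aux {d : ℕ} (F : Finset (Fin d → ℝ)) (f : (Fin d → ℝ) → ℝ) :
    ∃ h : (Fin d → ℝ) → ℝ, Continuous h ∧ ∀ p ∈ F, h p = f p := by
  classical
  refine ⟨fun x => ∑ p ∈ F, f p * ∏ q ∈ F.erase p, dist x q / dist p q, ?_, ?_⟩
  · apply continuous_finset_sum
    intro p _
    exact continuous_const.mul <| continuous_finset_prod _ fun q _ =>
      ((continuous_id.dist continuous_const).div_const _)
  · intro p hp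
    dsimp only
    rw [Finset.sum_eq_single p]
    · rw [Finset.prod_congr rfl (fun q hq => ?_), Finset.prod_const_one, mul_one]
      exact div_self (dist_ne_zero.mpr (Finset.ne_of_mem_erase hq).symm)
    · intro b hb hbp
      have : dist p p / dist b p = 0 := by simp
      rw [Finset.prod_eq_zero (Finset.mem_erase.mpr ⟨Ne.symm hbp, hp⟩) this, mul_zero]
    · intro h; exact absurd hp h

/-- If every continuous function on a compact set `X ⊆ ℝᵈ` is a sum of ridge
functions with fixed directions `a¹,...,aʳ` and continuous summands
(`R_c(a¹,...,aʳ; X) = C(X)`), then every real-valued function on `X` is a sum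
of ridge functions with these directions (`R(a¹,...,aʳ; X) = T(X)`). -/
theorem stmt2 {d r : ℕ} (X : Set (Fin d → ℝ)) (hX : IsCompact X)
    (a : Fin r → Fin d → ℝ) (ha : ∀ i, a i ≠ 0)
    (hyp : ∀ f : (Fin d → ℝ) → ℝ, ContinuousOn f X →
      ∃ g : Fin r → ℝ → ℝ,
        (∀ i, ContinuousOn (fun x : Fin d → ℝ => g i (∑ t, a i t * x t)) X) ∧
        ∀ x ∈ X, f x = ∑ i, g i (∑ t, a i t * x t)) :
    ∀ f : (Fin d → ℝ) → ℝ, ∃ g : Fin r → ℝ → ℝ,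
      ∀ x ∈ X, f x = ∑ i, g i (∑ t, a i t * x t) := by
  classical
  intro f
  set π : Fin r → (Fin d → ℝ) → ℝ := fun i x => ∑ t, a i t * x t with hπ
  let φ : X → (Fin r × ℝ →₀ ℝ) := fun x => ∑ i, Finsupp.single (i, π i x.val) 1
  let T : (↥X →₀ ℝ) →ₗ[ℝ] (Fin r × ℝ →₀ ℝ) := Finsupp.linearCombination ℝ φ
  let ev : (↥X →₀ ℝ) →ₗ[ℝ] ℝ := Finsupp.linearCombination ℝ (fun x : X => f x.val)
  have hker : LinearMap.ker T ≤ LinearMap.ker ev := by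
    intro c hc
    obtain ⟨h, hcont, hinterp⟩ := interp_aux (c.support.image Subtype.val) f
    obtain ⟨g, _, hg⟩ := hyp h hcont.continuousOn
    let μ : (Fin r × ℝ →₀ ℝ) →ₗ[ℝ] ℝ := Finsupp.linearCombination ℝ (fun p : Fin r × ℝ => g p.1 p.2)
    have hμφ : ∀ x : X, μ (φ x) = ∑ i, g i (π i x.val) := by
      intro x
      simp only [φ, map_sum]
      simp [μ, Finsupp.linearCombination_single]
    have hfx : ∀ x ∈ c.support, f (x : X).val = μ (φ x) := by
      intro x hx
      rw [hμφ x, ← hg x.val x.2, hinterp x.val (Finset.mem_image_of_mem _ hx)]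
    have hTc : μ (T c) = ev c := by
      simp only [T, ev, Finsupp.linearCombination_apply, Finsupp.sum, map_sum, map_smul]
      refine Finset.sum_congr rfl fun x hx => ?_
      rw [smul_eq_mul, smul_eq_mul, ← hfx x hx]
    have : T c = 0 := hc
    simp only [LinearMap.mem_ker, ev]
    rw [← hTc, this, map_zero]
  let q : ((↥X →₀ ℝ) ⧸ LinearMap.ker T) →ₗ[ℝ] ℝ := Submodule.liftQ _ ev hker
  let e := T.quotKerEquivRange
  let L0 : LinearMap.range T →ₗ[ℝ] ℝ := q ∘ₗ (e.symm : LinearMap.range T →ₗ[ℝ] _)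
  obtain ⟨L, hL⟩ := LinearMap.exists_extend L0
  refine ⟨fun i t => L (Finsupp.single (i, t) 1), fun x hx => ?_⟩
  have hmem : φ ⟨x, hx⟩ ∈ LinearMap.range T := by
    refine ⟨Finsupp.single ⟨x, hx⟩ 1, ?_⟩
    simp [T, Finsupp.linearCombination_single]
  have h1 : L (φ ⟨x, hx⟩) = f x := by
    have : L (φ ⟨x, hx⟩) = L0 ⟨φ ⟨x, hx⟩, hmem⟩ := by
      rw [← hL]; rfl
    rw [this]
    have he : e (Submodule.Quotient.mk (Finsupp.single (⟨x, hx⟩ : X) 1)) =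
        ⟨φ ⟨x, hx⟩, hmem⟩ := by
      apply Subtype.ext
      rw [LinearMap.quotKerEquivRange_apply_mk]
      simp [T, Finsupp.linearCombination_single]
    have : e.symm ⟨φ ⟨x, hx⟩, hmem⟩ =
        Submodule.Quotient.mk (Finsupp.single (⟨x, hx⟩ : X) 1) := by
      rw [← he, LinearEquiv.symm_apply_apply]
    show q (e.symm ⟨φ ⟨x, hx⟩, hmem⟩) = f x
    rw [this, Submodule.liftQ_apply]
    simp [ev, Finsupp.linearCombination_single]
  calc f x = L (φ ⟨x, hx⟩) := h1.symm
    _ = ∑ i, L (Finsupp.single (i, π i x) 1) := by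
        simp only [φ, map_sum]
    _ = ∑ i, (fun i t => L (Finsupp.single (i, t) 1)) i (∑ t, a i t * x t) := rfl
end

section
/- Let a = (a_1, a_2) and b = (b_1, b_2) be linearly independent vectors in ℝ², let c_1 < d_1 and c_2 < d_2, and let Ω = {x ∈ ℝ² : c_1 ≤ a·x ≤ d_1, c_2 ≤ b·x ≤ d_2}. Suppose f ∈ C(Ω) has continuous second partial derivatives ∂²f/∂x_1², ∂²f/∂x_1∂x_2, ∂²f/∂x_2² on Ω and that for all x ∈ Ω, (∂²f/∂x_1∂x_2)(a_1b_2 + a_2b_1) − (∂²f/∂x_1²)a_2b_2 − (∂²f/∂x_2²)a_1b_1 ≥ 0. Then E(f, R(a, b)) = (1/4)(f_1(c_1, c_2) + f_1(d_1, d_2) − f_1(c_1, d_2) − f_1(d_1, c_2)), where f_1(y_1, y_2) = f((y_1b_2 − y_2a_2)/(a_1b_2 − a_2b_1), (y_2a_1 − y_1b_1)/(a_1b_2 − a_2b_1)). -/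
set_option maxHeartbeats 1000000
open Set

lemma stmt4_line1 (w z : ℝ × ℝ) (x : ℝ) (S : Set ℝ) :
    HasDerivWithinAt (fun σ : ℝ => σ • w + z) w S x := by
  simpa using (((hasDerivAt_id x).smul_const w).add_const z).hasDerivWithinAt

lemma stmt4_line2 (w z : ℝ × ℝ) (x : ℝ) (S : Set ℝ) :
    HasDerivWithinAt (fun σ : ℝ => z + σ • w) w S x := by
  simpa using (((hasDerivAt_id x).smul_const w).const_add z).hasDerivWithinAt

lemma stmt4_super {Ω : Set (ℝ × ℝ)} (huni : UniqueDiffOn ℝ Ω)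
    {f : ℝ × ℝ → ℝ} (hf : ContDiffOn ℝ 2 f Ω) (u v : ℝ × ℝ)
    (hsign : ∀ q ∈ Ω, 0 ≤ fderivWithin ℝ (fderivWithin ℝ f Ω) Ω q v u)
    {c1 d1 c2 d2 : ℝ}
    (hPm : ∀ σ τ, σ ∈ Icc c1 d1 → τ ∈ Icc c2 d2 → (σ • u + τ • v) ∈ Ω)
    {s s' t t' : ℝ} (hs : c1 ≤ s) (hss : s ≤ s') (hs' : s' ≤ d1)
    (ht : c2 ≤ t) (htt : t ≤ t') (ht' : t' ≤ d2) :
    0 ≤ f (s • u + t • v) + f (s' • u + t' • v) - f (s • u + t' • v) - f (s' • u + t • v) := by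
  have ht2 : t ∈ Icc c2 d2 := ⟨ht, htt.trans ht'⟩
  have ht'2 : t' ∈ Icc c2 d2 := ⟨ht.trans htt, ht'⟩
  have hfd : DifferentiableOn ℝ f Ω := hf.differentiableOn (by norm_num)
  have hf' : ContDiffOn ℝ 1 (fderivWithin ℝ f Ω) Ω := hf.fderivWithin huni (by norm_num)
  have hfd' : DifferentiableOn ℝ (fderivWithin ℝ f Ω) Ω := hf'.differentiableOn (by norm_num)
  have inner : ∀ σ ∈ Icc c1 d1,
      MonotoneOn (fun τ => fderivWithin ℝ f Ω (σ • u + τ • v) u) (Icc c2 d2) := by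
    intro σ hσ
    refine monotoneOn_of_hasDerivWithinAt_nonneg (convex_Icc c2 d2)
      (f' := fun τ => fderivWithin ℝ (fderivWithin ℝ f Ω) Ω (σ • u + τ • v) v u) ?_ ?_ ?_
    · have hc : ContinuousOn (fun τ : ℝ => σ • u + τ • v) (Icc c2 d2) :=
        ((continuous_const.add (continuous_id.smul continuous_const)).continuousOn)
      have h2 : ContinuousOn (fderivWithin ℝ f Ω ∘ fun τ : ℝ => σ • u + τ • v) (Icc c2 d2) :=
        hf'.continuousOn.comp hc (fun τ hτ => hPm σ τ hσ hτ)
      exact (ContinuousLinearMap.apply ℝ ℝ u).continuous.comp_continuousOn h2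
    · intro τ hτ
      have hq : (σ • u + τ • v) ∈ Ω := hPm σ τ hσ (interior_subset hτ)
      have hcomp : HasDerivWithinAt (fderivWithin ℝ f Ω ∘ fun τ : ℝ => σ • u + τ • v)
          (fderivWithin ℝ (fderivWithin ℝ f Ω) Ω (σ • u + τ • v) v)
          (interior (Icc c2 d2)) τ :=
        (hfd' _ hq).hasFDerivWithinAt.comp_hasDerivWithinAt τ (stmt4_line2 v (σ • u) τ _)
          (fun τ' hτ' => hPm σ τ' hσ (interior_subset hτ'))
      exact ((ContinuousLinearMap.apply ℝ ℝ u).hasFDerivAt.comp_hasDerivWithinAt τ hcomp)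
    · intro τ hτ
      exact hsign _ (hPm σ τ hσ (interior_subset hτ))
  have outer : MonotoneOn (fun σ => f (σ • u + t' • v) - f (σ • u + t • v)) (Icc c1 d1) := by
    refine monotoneOn_of_hasDerivWithinAt_nonneg (convex_Icc c1 d1)
      (f' := fun σ => fderivWithin ℝ f Ω (σ • u + t' • v) u - fderivWithin ℝ f Ω (σ • u + t • v) u)
      ?_ ?_ ?_
    · have k : ∀ τ0, τ0 ∈ Icc c2 d2 → ContinuousOn (fun σ : ℝ => f (σ • u + τ0 • v)) (Icc c1 d1) := by
        intro τ0 hτ0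
        exact hf.continuousOn.comp (((continuous_id.smul continuous_const).add continuous_const).continuousOn)
          (fun σ hσ => hPm σ τ0 hσ hτ0)
      exact (k t' ht'2).sub (k t ht2)
    · intro σ hσ
      have k : ∀ τ0, τ0 ∈ Icc c2 d2 → HasDerivWithinAt (fun σ : ℝ => f (σ • u + τ0 • v))
          (fderivWithin ℝ f Ω (σ • u + τ0 • v) u) (interior (Icc c1 d1)) σ := by
        intro τ0 hτ0
        exact (hfd _ (hPm σ τ0 (interior_subset hσ) hτ0)).hasFDerivWithinAt.comp_hasDerivWithinAt σ
          (stmt4_line1 u (τ0 • v) σ _) (fun σ' hσ' => hPm σ' τ0 (interior_subset hσ') hτ0)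
      exact (k t' ht'2).sub (k t ht2)
    · intro σ hσ
      have h2 : fderivWithin ℝ f Ω (σ • u + t • v) u ≤ fderivWithin ℝ f Ω (σ • u + t' • v) u :=
        inner σ (interior_subset hσ) ht2 ht'2 htt
      change 0 ≤ fderivWithin ℝ f Ω (σ • u + t' • v) u - fderivWithin ℝ f Ω (σ • u + t • v) u
      linarith
  have h : f (s • u + t' • v) - f (s • u + t • v) ≤ f (s' • u + t' • v) - f (s' • u + t • v) :=
    outer ⟨hs, hss.trans hs'⟩ ⟨hs.trans hss, hs'⟩ hss
  linarith

/-- Explicit formula for the error of best uniform approximation of a function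
`f` satisfying a second-order differential inequality on the parallelogram
`Ω = {x : c₁ ≤ a·x ≤ d₁, c₂ ≤ b·x ≤ d₂}` by sums `g₁(a·x) + g₂(b·x)` of ridge
functions with linearly independent directions `a = (a₁,a₂)`, `b = (b₁,b₂)`. -/
theorem stmt4 (a1 a2 b1 b2 c1 d1 c2 d2 : ℝ) (hc1 : c1 < d1) (hc2 : c2 < d2)
    (hind : LinearIndependent ℝ ![((a1, a2) : ℝ × ℝ), ((b1, b2) : ℝ × ℝ)])
    (Ω : Set (ℝ × ℝ))
    (hΩ : Ω = {p : ℝ × ℝ | c1 ≤ a1 * p.1 + a2 * p.2 ∧ a1 * p.1 + a2 * p.2 ≤ d1 ∧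
        c2 ≤ b1 * p.1 + b2 * p.2 ∧ b1 * p.1 + b2 * p.2 ≤ d2})
    (f : ℝ × ℝ → ℝ) (hf : ContDiffOn ℝ 2 f Ω)
    (hconv : ∀ p ∈ Ω,
      0 ≤ (iteratedFDerivWithin ℝ 2 f Ω p ![((1 : ℝ), (0 : ℝ)), ((0 : ℝ), (1 : ℝ))]) *
            (a1 * b2 + a2 * b1)
          - (iteratedFDerivWithin ℝ 2 f Ω p ![((1 : ℝ), (0 : ℝ)), ((1 : ℝ), (0 : ℝ))]) *
            (a2 * b2)
          - (iteratedFDerivWithin ℝ 2 f Ω p ![((0 : ℝ), (1 : ℝ)), ((0 : ℝ), (1 : ℝ))]) *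
            (a1 * b1))
    (f1 : ℝ → ℝ → ℝ)
    (hf1 : ∀ y1 y2 : ℝ, f1 y1 y2 =
      f ((y1 * b2 - y2 * a2) / (a1 * b2 - a2 * b1),
         (y2 * a1 - y1 * b1) / (a1 * b2 - a2 * b1))) :
    sInf {e : ℝ | ∃ g1 g2 : ℝ → ℝ, Continuous g1 ∧ Continuous g2 ∧
        e = sSup ((fun p : ℝ × ℝ =>
          |f p - g1 (a1 * p.1 + a2 * p.2) - g2 (b1 * p.1 + b2 * p.2)|) '' Ω)} =
      (1 / 4) * (f1 c1 c2 + f1 d1 d2 - f1 c1 d2 - f1 d1 c2) := by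
  -- determinant nonzero
  have hD : a1 * b2 - a2 * b1 ≠ 0 := by
    rw [linearIndependent_fin2] at hind
    obtain ⟨hb, hab⟩ := hind
    simp only [Matrix.cons_val_one, Matrix.head_cons, Matrix.cons_val_zero] at hb hab
    intro h
    by_cases hb1 : b1 = 0
    · by_cases hb2 : b2 = 0
      · exact hb (by simp [hb1, hb2, Prod.ext_iff])
      · have ha1 : a1 = 0 := by
          have : a1 * b2 = 0 := by rw [hb1] at h; linarith
          rcases mul_eq_zero.1 this with h' | h'
          · exact h'
          · exact absurd h' hb2
        apply hab (a2 / b2)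
        simp only [Prod.smul_mk, smul_eq_mul, Prod.mk.injEq]
        constructor
        · rw [hb1, ha1]; ring
        · field_simp
    · apply hab (a1 / b1)
      simp only [Prod.smul_mk, smul_eq_mul, Prod.mk.injEq]
      constructor
      · field_simp
      · field_simp
        nlinarith [h]
  obtain ⟨u, hu⟩ : ∃ u : ℝ × ℝ, u = (b2/(a1*b2-a2*b1), -b1/(a1*b2-a2*b1)) := ⟨_, rfl⟩
  obtain ⟨v, hv⟩ : ∃ v : ℝ × ℝ, v = (-a2/(a1*b2-a2*b1), a1/(a1*b2-a2*b1)) := ⟨_, rfl⟩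
  have hLa : ∀ σ τ : ℝ, a1 * (σ • u + τ • v).1 + a2 * (σ • u + τ • v).2 = σ := by
    intro σ τ
    rw [hu, hv]
    simp only [Prod.fst_add, Prod.snd_add, Prod.smul_mk, smul_eq_mul]
    field_simp
    ring
  have hLb : ∀ σ τ : ℝ, b1 * (σ • u + τ • v).1 + b2 * (σ • u + τ • v).2 = τ := by
    intro σ τ
    rw [hu, hv]
    simp only [Prod.fst_add, Prod.snd_add, Prod.smul_mk, smul_eq_mul]
    have e : b1 * (σ * (b2 / (a1 * b2 - a2 * b1)) + τ * (-a2 / (a1 * b2 - a2 * b1))) +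
        b2 * (σ * (-b1 / (a1 * b2 - a2 * b1)) + τ * (a1 / (a1 * b2 - a2 * b1))) =
        τ * ((a1 * b2 - a2 * b1) / (a1 * b2 - a2 * b1)) := by ring
    rw [e, div_self hD, mul_one]
  have hPinv : ∀ x : ℝ × ℝ, ((a1*x.1+a2*x.2) • u + (b1*x.1+b2*x.2) • v) = x := by
    intro x
    rw [hu, hv]
    refine Prod.ext ?_ ?_ <;>
      · simp only [Prod.fst_add, Prod.snd_add, Prod.smul_mk, smul_eq_mul]
        field_simp
        ring
  have hPmem : ∀ σ τ, σ ∈ Icc c1 d1 → τ ∈ Icc c2 d2 → (σ • u + τ • v) ∈ Ω := by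
    intro σ τ hσ hτ
    rw [hΩ]
    exact ⟨by rw [hLa]; exact hσ.1, by rw [hLa]; exact hσ.2,
           by rw [hLb]; exact hτ.1, by rw [hLb]; exact hτ.2⟩
  have hΩconv : Convex ℝ Ω := by
    rw [hΩ]
    intro x hx y hy α β hα hβ hαβ
    simp only [Set.mem_setOf_eq, Prod.fst_add, Prod.snd_add, Prod.smul_fst, Prod.smul_snd,
      smul_eq_mul] at hx hy ⊢
    obtain ⟨h1, h2, h3, h4⟩ := hx
    obtain ⟨k1, k2, k3, k4⟩ := hy
    have hcomb : ∀ r : ℝ, α*r + β*r = r := fun r => by rw [← add_mul, hαβ, one_mul]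
    refine ⟨?_, ?_, ?_, ?_⟩ <;>
      linarith [mul_le_mul_of_nonneg_left h1 hα, mul_le_mul_of_nonneg_left k1 hβ,
        mul_le_mul_of_nonneg_left h2 hα, mul_le_mul_of_nonneg_left k2 hβ,
        mul_le_mul_of_nonneg_left h3 hα, mul_le_mul_of_nonneg_left k3 hβ,
        mul_le_mul_of_nonneg_left h4 hα, mul_le_mul_of_nonneg_left k4 hβ,
        hcomb c1, hcomb d1, hcomb c2, hcomb d2]
  have hz0 : (((c1+d1)/2) • u + ((c2+d2)/2) • v) ∈ interior Ω := by
    have hOsub : {x : ℝ×ℝ | c1 < a1*x.1+a2*x.2 ∧ a1*x.1+a2*x.2 < d1 ∧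
        c2 < b1*x.1+b2*x.2 ∧ b1*x.1+b2*x.2 < d2} ⊆ Ω := by
      rw [hΩ]
      intro x hx
      exact ⟨hx.1.le, hx.2.1.le, hx.2.2.1.le, hx.2.2.2.le⟩
    have hOopen : IsOpen {x : ℝ×ℝ | c1 < a1*x.1+a2*x.2 ∧ a1*x.1+a2*x.2 < d1 ∧
        c2 < b1*x.1+b2*x.2 ∧ b1*x.1+b2*x.2 < d2} := by
      have hca : Continuous fun x : ℝ×ℝ => a1*x.1+a2*x.2 :=
        (continuous_const.mul continuous_fst).add (continuous_const.mul continuous_snd)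
      have hcb : Continuous fun x : ℝ×ℝ => b1*x.1+b2*x.2 :=
        (continuous_const.mul continuous_fst).add (continuous_const.mul continuous_snd)
      have heq : {x : ℝ×ℝ | c1 < a1*x.1+a2*x.2 ∧ a1*x.1+a2*x.2 < d1 ∧
          c2 < b1*x.1+b2*x.2 ∧ b1*x.1+b2*x.2 < d2} =
          (fun x : ℝ×ℝ => a1*x.1+a2*x.2) ⁻¹' (Ioo c1 d1) ∩
          (fun x : ℝ×ℝ => b1*x.1+b2*x.2) ⁻¹' (Ioo c2 d2) := by
        ext x
        simp [Set.mem_setOf_eq, and_assoc]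
      rw [heq]
      exact (isOpen_Ioo.preimage hca).inter (isOpen_Ioo.preimage hcb)
    apply interior_maximal hOsub hOopen
    refine ⟨?_, ?_, ?_, ?_⟩ <;> simp only [Set.mem_setOf_eq, hLa, hLb] <;> linarith
  have huni : UniqueDiffOn ℝ Ω := uniqueDiffOn_convex hΩconv ⟨_, hz0⟩
  have hclos : ∀ x ∈ Ω, x ∈ closure (interior Ω) := by
    intro x hx
    have hcont : Continuous (fun θ : ℝ =>
        θ • (((c1+d1)/2) • u + ((c2+d2)/2) • v) + (1-θ) • x) :=
      (continuous_id.smul continuous_const).add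
        ((continuous_const.sub continuous_id).smul continuous_const)
    have htend : Filter.Tendsto (fun θ : ℝ =>
        θ • (((c1+d1)/2) • u + ((c2+d2)/2) • v) + (1-θ) • x)
        (nhdsWithin 0 (Ioi 0)) (nhds x) := by
      have h0 := hcont.tendsto 0
      simp only [zero_smul, sub_zero, one_smul, zero_add] at h0
      exact h0.mono_left nhdsWithin_le_nhds
    apply mem_closure_of_tendsto htend
    filter_upwards [Ioo_mem_nhdsGT_of_mem (Set.left_mem_Ico.2 one_pos)] with θ hθ
    exact hΩconv.combo_interior_closure_mem_interior hz0 (subset_closure hx) hθ.1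
      (by linarith [hθ.2]) (by ring)
  have hΩcomp : IsCompact Ω := by
    have himg : Ω = (fun q : ℝ × ℝ => q.1 • u + q.2 • v) '' (Icc c1 d1 ×ˢ Icc c2 d2) := by
      apply Subset.antisymm
      · intro x hx
        have hx' := hx
        rw [hΩ] at hx'
        exact ⟨(a1*x.1+a2*x.2, b1*x.1+b2*x.2),
          ⟨⟨hx'.1, hx'.2.1⟩, hx'.2.2.1, hx'.2.2.2⟩, hPinv x⟩
      · rintro x ⟨⟨σ, τ⟩, ⟨hσ, hτ⟩, rfl⟩
        exact hPmem σ τ hσ hτ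
    rw [himg]
    exact (isCompact_Icc.prod isCompact_Icc).image
      ((continuous_fst.smul continuous_const).add (continuous_snd.smul continuous_const))
  have hsign : ∀ q ∈ Ω, 0 ≤ fderivWithin ℝ (fderivWithin ℝ f Ω) Ω q v u := by
    intro q hq
    have hsym := (hf q hq).isSymmSndFDerivWithinAt (by norm_num) huni (hclos q hq) hq
    have hA := hconv q hq
    rw [iteratedFDerivWithin_two_apply f huni hq, iteratedFDerivWithin_two_apply f huni hq,
      iteratedFDerivWithin_two_apply f huni hq] at hA
    simp only [Matrix.cons_val_zero, Matrix.cons_val_one, Matrix.head_cons] at hA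
    have hsy : fderivWithin ℝ (fderivWithin ℝ f Ω) Ω q ((0:ℝ),(1:ℝ)) ((1:ℝ),(0:ℝ)) =
        fderivWithin ℝ (fderivWithin ℝ f Ω) Ω q ((1:ℝ),(0:ℝ)) ((0:ℝ),(1:ℝ)) := hsym _ _
    have hvdec : v = (-a2/(a1*b2-a2*b1)) • ((1:ℝ),(0:ℝ)) + (a1/(a1*b2-a2*b1)) • ((0:ℝ),(1:ℝ)) := by
      rw [hv]; simp [Prod.ext_iff]
    have hudec : u = (b2/(a1*b2-a2*b1)) • ((1:ℝ),(0:ℝ)) + (-b1/(a1*b2-a2*b1)) • ((0:ℝ),(1:ℝ)) := by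
      rw [hu]; simp [Prod.ext_iff]
    have hexp : fderivWithin ℝ (fderivWithin ℝ f Ω) Ω q v u
        = (fderivWithin ℝ (fderivWithin ℝ f Ω) Ω q ((1:ℝ),(0:ℝ)) ((0:ℝ),(1:ℝ)) * (a1*b2+a2*b1)
           - fderivWithin ℝ (fderivWithin ℝ f Ω) Ω q ((1:ℝ),(0:ℝ)) ((1:ℝ),(0:ℝ)) * (a2*b2)
           - fderivWithin ℝ (fderivWithin ℝ f Ω) Ω q ((0:ℝ),(1:ℝ)) ((0:ℝ),(1:ℝ)) * (a1*b1))
          / (a1*b2-a2*b1)^2 := by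
      rw [hvdec, hudec]
      simp only [map_add, map_smul, ContinuousLinearMap.add_apply,
        ContinuousLinearMap.coe_smul', Pi.smul_apply, smul_eq_mul, hsy]
      field_simp
      ring
    rw [hexp]
    exact div_nonneg hA (sq_nonneg _)
  have hsuper : ∀ s s' t t' : ℝ, c1 ≤ s → s ≤ s' → s' ≤ d1 → c2 ≤ t → t ≤ t' → t' ≤ d2 →
      0 ≤ f (s • u + t • v) + f (s' • u + t' • v) - f (s • u + t' • v) - f (s' • u + t • v) :=
    fun s s' t t' hs hss hs' ht htt ht' =>
      stmt4_super huni hf u v hsign hPmem hs hss hs' ht htt ht'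
  have hf1F : ∀ y1 y2 : ℝ, f1 y1 y2 = f (y1 • u + y2 • v) := by
    intro y1 y2
    rw [hf1]
    congr 1
    rw [hu, hv]
    refine Prod.ext ?_ ?_ <;>
      · simp only [Prod.fst_add, Prod.snd_add, Prod.smul_mk, smul_eq_mul]
        field_simp
        ring
  set lL : ℝ := f (c1•u+c2•v) + f (d1•u+d2•v) - f (c1•u+d2•v) - f (d1•u+c2•v) with hlL
  have hL0 : 0 ≤ lL := hsuper c1 d1 c2 d2 le_rfl hc1.le le_rfl le_rfl hc2.le le_rfl
  -- key pointwise bound for the candidate approximant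
  have key : ∀ σ τ : ℝ, σ ∈ Icc c1 d1 → τ ∈ Icc c2 d2 →
      |f (σ•u+τ•v) - (f (σ•u+c2•v) + f (σ•u+d2•v))/2 -
        ((f (c1•u+τ•v) + f (d1•u+τ•v))/2 -
          (f (c1•u+c2•v) + f (c1•u+d2•v) + f (d1•u+c2•v) + f (d1•u+d2•v))/4)| ≤ lL/4 := by
    intro σ τ hσ hτ
    have A1 := hsuper c1 σ c2 τ le_rfl hσ.1 hσ.2 le_rfl hτ.1 hτ.2
    have A2 := hsuper σ d1 τ d2 hσ.1 hσ.2 le_rfl hτ.1 hτ.2 le_rfl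
    have A3 := hsuper c1 σ τ d2 le_rfl hσ.1 hσ.2 hτ.1 hτ.2 le_rfl
    have A4 := hsuper σ d1 c2 τ hσ.1 hσ.2 le_rfl le_rfl hτ.1 hτ.2
    rw [abs_le]
    constructor <;> [linarith; linarith]
  -- clamping
  have hcl1 : ∀ s : ℝ, max c1 (min s d1) ∈ Icc c1 d1 :=
    fun s => ⟨le_max_left _ _, max_le hc1.le (min_le_right _ _)⟩
  have hcl2 : ∀ t : ℝ, max c2 (min t d2) ∈ Icc c2 d2 :=
    fun t => ⟨le_max_left _ _, max_le hc2.le (min_le_right _ _)⟩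
  have hcl1eq : ∀ s ∈ Icc c1 d1, max c1 (min s d1) = s := by
    intro s hs
    rw [min_eq_left hs.2, max_eq_right hs.1]
  have hcl2eq : ∀ t ∈ Icc c2 d2, max c2 (min t d2) = t := by
    intro t ht
    rw [min_eq_left ht.2, max_eq_right ht.1]
  set G1 : ℝ → ℝ := fun s =>
    (f ((max c1 (min s d1)) • u + c2 • v) + f ((max c1 (min s d1)) • u + d2 • v)) / 2 with hG1
  set G2 : ℝ → ℝ := fun t =>
    (f (c1 • u + (max c2 (min t d2)) • v) + f (d1 • u + (max c2 (min t d2)) • v)) / 2 -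
      (f (c1•u+c2•v) + f (c1•u+d2•v) + f (d1•u+c2•v) + f (d1•u+d2•v)) / 4 with hG2
  have hclc1 : Continuous (fun s : ℝ => max c1 (min s d1)) :=
    continuous_const.max (continuous_id.min continuous_const)
  have hclc2 : Continuous (fun t : ℝ => max c2 (min t d2)) :=
    continuous_const.max (continuous_id.min continuous_const)
  have hG1c : Continuous G1 := by
    have c0 : ∀ τ0, τ0 ∈ Icc c2 d2 →
        Continuous (fun s : ℝ => f ((max c1 (min s d1)) • u + τ0 • v)) := by
      intro τ0 hτ0
      exact hf.continuousOn.comp_continuous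
        ((hclc1.smul continuous_const).add continuous_const)
        (fun s => hPmem _ _ (hcl1 s) hτ0)
    exact ((c0 c2 ⟨le_rfl, hc2.le⟩).add (c0 d2 ⟨hc2.le, le_rfl⟩)).div_const 2
  have hG2c : Continuous G2 := by
    have c0 : ∀ σ0, σ0 ∈ Icc c1 d1 →
        Continuous (fun t : ℝ => f (σ0 • u + (max c2 (min t d2)) • v)) := by
      intro σ0 hσ0
      exact hf.continuousOn.comp_continuous
        (continuous_const.add (hclc2.smul continuous_const))
        (fun t => hPmem _ _ hσ0 (hcl2 t))
    exact (((c0 c1 ⟨le_rfl, hc1.le⟩).add (c0 d1 ⟨hc1.le, le_rfl⟩)).div_const 2).sub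
      continuous_const
  -- corners in Ω
  have hccm : c1 ∈ Icc c1 d1 := ⟨le_rfl, hc1.le⟩
  have hddm : d1 ∈ Icc c1 d1 := ⟨hc1.le, le_rfl⟩
  have hccm2 : c2 ∈ Icc c2 d2 := ⟨le_rfl, hc2.le⟩
  have hddm2 : d2 ∈ Icc c2 d2 := ⟨hc2.le, le_rfl⟩
  -- lower bound for every element of the set
  have hlow : ∀ e ∈ {e : ℝ | ∃ g1 g2 : ℝ → ℝ, Continuous g1 ∧ Continuous g2 ∧
      e = sSup ((fun p : ℝ × ℝ =>
        |f p - g1 (a1 * p.1 + a2 * p.2) - g2 (b1 * p.1 + b2 * p.2)|) '' Ω)}, lL/4 ≤ e := by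
    rintro e ⟨g1, g2, hg1, hg2, rfl⟩
    have hca : Continuous fun x : ℝ×ℝ => a1*x.1+a2*x.2 :=
      (continuous_const.mul continuous_fst).add (continuous_const.mul continuous_snd)
    have hcb : Continuous fun x : ℝ×ℝ => b1*x.1+b2*x.2 :=
      (continuous_const.mul continuous_fst).add (continuous_const.mul continuous_snd)
    have hcont : ContinuousOn (fun p : ℝ×ℝ =>
        |f p - g1 (a1*p.1+a2*p.2) - g2 (b1*p.1+b2*p.2)|) Ω :=
      ((hf.continuousOn.sub (hg1.comp hca).continuousOn).sub
        (hg2.comp hcb).continuousOn).abs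
    have hbdd := hΩcomp.bddAbove_image hcont
    have hvals : ∀ σ τ, σ ∈ Icc c1 d1 → τ ∈ Icc c2 d2 →
        |f (σ•u+τ•v) - g1 σ - g2 τ| ≤ sSup ((fun p : ℝ×ℝ =>
          |f p - g1 (a1*p.1+a2*p.2) - g2 (b1*p.1+b2*p.2)|) '' Ω) := by
      intro σ τ hσ hτ
      have hle : |f (σ•u+τ•v) - g1 (a1*(σ•u+τ•v).1 + a2*(σ•u+τ•v).2) -
          g2 (b1*(σ•u+τ•v).1 + b2*(σ•u+τ•v).2)| ≤ sSup ((fun p : ℝ×ℝ =>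
          |f p - g1 (a1*p.1+a2*p.2) - g2 (b1*p.1+b2*p.2)|) '' Ω) :=
        le_csSup hbdd (mem_image_of_mem _ (hPmem σ τ hσ hτ))
      rw [hLa, hLb] at hle
      exact hle
    have e1 := hvals c1 c2 hccm hccm2
    have e2 := hvals d1 d2 hddm hddm2
    have e3 := hvals c1 d2 hccm hddm2
    have e4 := hvals d1 c2 hddm hccm2
    have b1' := le_abs_self (f (c1•u+c2•v) - g1 c1 - g2 c2)
    have b2' := le_abs_self (f (d1•u+d2•v) - g1 d1 - g2 d2)
    have b3' := neg_abs_le (f (c1•u+d2•v) - g1 c1 - g2 d2)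
    have b4' := neg_abs_le (f (d1•u+c2•v) - g1 d1 - g2 c2)
    linarith
  -- the candidate gives value ≤ lL/4
  have hup : sSup ((fun p : ℝ × ℝ =>
      |f p - G1 (a1 * p.1 + a2 * p.2) - G2 (b1 * p.1 + b2 * p.2)|) '' Ω) ≤ lL/4 := by
    apply Real.sSup_le
    · rintro y ⟨x, hx, rfl⟩
      have hx' := hx
      rw [hΩ] at hx'
      obtain ⟨h1, h2, h3, h4⟩ := hx'
      have hσI : (a1*x.1+a2*x.2) ∈ Icc c1 d1 := ⟨h1, h2⟩
      have hτI : (b1*x.1+b2*x.2) ∈ Icc c2 d2 := ⟨h3, h4⟩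
      have hkey := key _ _ hσI hτI
      have hG1v : G1 (a1*x.1+a2*x.2) =
          (f ((a1*x.1+a2*x.2) • u + c2 • v) + f ((a1*x.1+a2*x.2) • u + d2 • v)) / 2 := by
        simp only [hG1]
        rw [hcl1eq _ hσI]
      have hG2v : G2 (b1*x.1+b2*x.2) =
          (f (c1 • u + (b1*x.1+b2*x.2) • v) + f (d1 • u + (b1*x.1+b2*x.2) • v)) / 2 -
            (f (c1•u+c2•v) + f (c1•u+d2•v) + f (d1•u+c2•v) + f (d1•u+d2•v)) / 4 := by
        simp only [hG2]
        rw [hcl2eq _ hτI]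
      have hfx : f x = f ((a1*x.1+a2*x.2) • u + (b1*x.1+b2*x.2) • v) := by rw [hPinv]
      show |f x - G1 (a1*x.1+a2*x.2) - G2 (b1*x.1+b2*x.2)| ≤ lL/4
      rw [hG1v, hG2v, hfx]
      exact hkey
    · linarith
  have hmemb : sSup ((fun p : ℝ × ℝ =>
      |f p - G1 (a1 * p.1 + a2 * p.2) - G2 (b1 * p.1 + b2 * p.2)|) '' Ω) ∈
      {e : ℝ | ∃ g1 g2 : ℝ → ℝ, Continuous g1 ∧ Continuous g2 ∧
        e = sSup ((fun p : ℝ × ℝ =>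
          |f p - g1 (a1 * p.1 + a2 * p.2) - g2 (b1 * p.1 + b2 * p.2)|) '' Ω)} :=
    ⟨G1, G2, hG1c, hG2c, rfl⟩
  have hBB : BddBelow {e : ℝ | ∃ g1 g2 : ℝ → ℝ, Continuous g1 ∧ Continuous g2 ∧
      e = sSup ((fun p : ℝ × ℝ =>
        |f p - g1 (a1 * p.1 + a2 * p.2) - g2 (b1 * p.1 + b2 * p.2)|) '' Ω)} :=
    ⟨lL/4, hlow⟩
  have hrhs : (1 / 4) * (f1 c1 c2 + f1 d1 d2 - f1 c1 d2 - f1 d1 c2) = lL/4 := by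
    rw [hf1F, hf1F, hf1F, hf1F, hlL]
    ring
  rw [hrhs]
  exact le_antisymm (le_trans (csInf_le hBB hmemb) hup) (le_csInf ⟨_, hmemb⟩ hlow)
end

section
/- Let k ∈ ℕ and let f : ℝ → ℝ be a function such that for every choice of h_1, ..., h_k ∈ ℝ the function x ↦ Δ_{h_1...h_k} f(x) is continuous on ℝ. Then there exist a continuous function g : ℝ → ℝ and a polynomial function H of order k with H(0) = 0 such that f = g + H. -/
open MeasureTheory Set intervalIntegral

noncomputable section
namespace DB

/-- forward difference -/
def D (h : ℝ) (u : ℝ → ℝ) : ℝ → ℝ := fun x => u (x + h) - u x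
/-- shift -/
def sh (a : ℝ) (u : ℝ → ℝ) : ℝ → ℝ := fun x => u (x + a)
/-- iterated difference -/
def Dn (h : ℝ) : ℕ → (ℝ → ℝ) → ℝ → ℝ
  | 0, u => u
  | n+1, u => D h (Dn h n u)
/-- mixed differences along a list -/
def Dl (l : List ℝ) (u : ℝ → ℝ) : ℝ → ℝ := l.foldl (fun g h => D h g) u
/-- the class of functions whose all `k`-th mixed differences are continuous -/
def Cl (k : ℕ) (f : ℝ → ℝ) : Prop := ∀ l : List ℝ, l.length = k → Continuous (Dl l f)

lemma D_comm (a b : ℝ) (u : ℝ → ℝ) : D a (D b u) = D b (D a u) := by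
  funext x; simp only [D]; ring_nf
lemma D_add (h : ℝ) (u v : ℝ → ℝ) :
    D h (fun x => u x + v x) = fun x => D h u x + D h v x := by
  funext x; simp only [D]; ring
lemma D_sub (h : ℝ) (u v : ℝ → ℝ) :
    D h (fun x => u x - v x) = fun x => D h u x - D h v x := by
  funext x; simp only [D]; ring
lemma D_smul (h c : ℝ) (u : ℝ → ℝ) :
    D h (fun x => c * u x) = fun x => c * D h u x := by
  funext x; simp only [D]; ring
lemma D_const (h c : ℝ) : D h (fun _ => c) = fun _ => 0 := by
  funext x; simp [D]
lemma D_sh (h a : ℝ) (u : ℝ → ℝ) : D h (sh a u) = sh a (D h u) := by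
  funext x; simp only [D, sh]; ring_nf
lemma D_zero_fun (h : ℝ) : D h (fun _ => (0:ℝ)) = fun _ => 0 := D_const h 0

lemma Dn_succ' (h : ℝ) (n : ℕ) (u : ℝ → ℝ) : Dn h (n+1) u = Dn h n (D h u) := by
  induction n generalizing u with
  | zero => rfl
  | succ n ih =>
    show D h (Dn h (n+1) u) = Dn h (n+1) (D h u)
    rw [ih u]; rfl

lemma Dn_comm_D (h a : ℝ) (n : ℕ) (u : ℝ → ℝ) : Dn h n (D a u) = D a (Dn h n u) := by
  induction n with
  | zero => rfl
  | succ n ih => show D h (Dn h n (D a u)) = D a (D h (Dn h n u)); rw [ih, D_comm]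

lemma Dn_add (h : ℝ) (n : ℕ) (u v : ℝ → ℝ) :
    Dn h n (fun x => u x + v x) = fun x => Dn h n u x + Dn h n v x := by
  induction n with
  | zero => rfl
  | succ n ih => show D h (Dn h n _) = _; rw [ih, D_add]; rfl

lemma Dn_sub (h : ℝ) (n : ℕ) (u v : ℝ → ℝ) :
    Dn h n (fun x => u x - v x) = fun x => Dn h n u x - Dn h n v x := by
  induction n with
  | zero => rfl
  | succ n ih => show D h (Dn h n _) = _; rw [ih, D_sub]; rfl

lemma Dn_smul (h c : ℝ) (n : ℕ) (u : ℝ → ℝ) :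
    Dn h n (fun x => c * u x) = fun x => c * Dn h n u x := by
  induction n with
  | zero => rfl
  | succ n ih => show D h (Dn h n _) = _; rw [ih, D_smul]; rfl

lemma Dn_sh (h a : ℝ) (n : ℕ) (u : ℝ → ℝ) : Dn h n (sh a u) = sh a (Dn h n u) := by
  induction n with
  | zero => rfl
  | succ n ih => show D h (Dn h n _) = _; rw [ih, D_sh]; rfl

lemma Dn_zero_fun (h : ℝ) (n : ℕ) : Dn h n (fun _ => (0:ℝ)) = fun _ => 0 := by
  induction n with
  | zero => rfl
  | succ n ih => show D h (Dn h n _) = _; rw [ih, D_zero_fun]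

lemma Dn_add_exp (h : ℝ) (a b : ℕ) (u : ℝ → ℝ) : Dn h (a + b) u = Dn h a (Dn h b u) := by
  induction a with
  | zero => rw [Nat.zero_add]; rfl
  | succ a ih =>
    rw [Nat.succ_add]
    show D h (Dn h (a+b) u) = D h (Dn h a (Dn h b u))
    rw [ih]

lemma Dn_sum (h : ℝ) (n : ℕ) {ι : Type*} (s : Finset ι) (F : ι → ℝ → ℝ) :
    Dn h n (fun x => ∑ i ∈ s, F i x) = fun x => ∑ i ∈ s, Dn h n (F i) x := by
  classical
  induction s using Finset.induction with
  | empty => simpa using Dn_zero_fun h n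
  | insert a s hx ih =>
    funext y
    rw [show (fun x => ∑ i ∈ insert a s, F i x) = fun x => F a x + ∑ i ∈ s, F i x by
      funext x; rw [Finset.sum_insert hx], Dn_add]
    simp only [Finset.sum_insert hx, ih]

lemma Dl_cons (h : ℝ) (l : List ℝ) (u : ℝ → ℝ) : Dl (h :: l) u = Dl l (D h u) := rfl
lemma Dl_nil (u : ℝ → ℝ) : Dl [] u = u := rfl

lemma Dn_eq_Dl (h : ℝ) (n : ℕ) (u : ℝ → ℝ) : Dn h n u = Dl (List.replicate n h) u := by
  induction n generalizing u with
  | zero => rfl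
  | succ n ih =>
    rw [Dn_succ', List.replicate_succ, Dl_cons, ih]

lemma Cl_zero {f : ℝ → ℝ} : Cl 0 f ↔ Continuous f :=
  ⟨fun H => H [] rfl, fun H l hl => by rw [List.length_eq_zero_iff] at hl; subst hl; exact H⟩

lemma Cl_succ {k : ℕ} {f : ℝ → ℝ} : Cl (k+1) f ↔ ∀ h, Cl k (D h f) := by
  constructor
  · intro H h l hl
    exact H (h :: l) (by simp [hl])
  · intro H l hl
    match l, hl with
    | (h :: l'), hl => exact H h l' (by simpa using hl)

lemma Cl.D {k : ℕ} {f : ℝ → ℝ} (hf : Cl (k+1) f) (h : ℝ) : Cl k (D h f) :=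
  Cl_succ.1 hf h

lemma D_continuous {u : ℝ → ℝ} (hu : Continuous u) (h : ℝ) : Continuous (D h u) :=
  (hu.comp (continuous_id.add continuous_const)).sub hu

lemma Cl_mono {k : ℕ} {f : ℝ → ℝ} (hf : Cl k f) : Cl (k+1) f := by
  induction k generalizing f with
  | zero => exact Cl_succ.2 fun h => Cl_zero.2 (D_continuous (Cl_zero.1 hf) h)
  | succ k ih => exact Cl_succ.2 fun h => ih (hf.D h)

lemma Cl_of_le {k k' : ℕ} (hk : k ≤ k') {f : ℝ → ℝ} (hf : Cl k f) : Cl k' f := by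
  induction k' with
  | zero => simpa [Nat.le_zero.1 hk] using hf
  | succ k' ih =>
    rcases Nat.lt_or_ge k (k'+1) with h | h
    · exact Cl_mono (ih (Nat.lt_succ_iff.1 h))
    · simpa [Nat.le_antisymm hk h] using hf

lemma Cl_congr {k : ℕ} {f g : ℝ → ℝ} (hfg : ∀ x, f x = g x) (hf : Cl k f) : Cl k g := by
  have : f = g := funext hfg
  rwa [this] at hf

lemma Cl_add {k : ℕ} {f g : ℝ → ℝ} (hf : Cl k f) (hg : Cl k g) :
    Cl k (fun x => f x + g x) := by
  induction k generalizing f g with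
  | zero => exact Cl_zero.2 ((Cl_zero.1 hf).add (Cl_zero.1 hg))
  | succ k ih =>
    refine Cl_succ.2 fun h => ?_
    rw [D_add]
    exact ih (hf.D h) (hg.D h)

lemma Cl_sub {k : ℕ} {f g : ℝ → ℝ} (hf : Cl k f) (hg : Cl k g) :
    Cl k (fun x => f x - g x) := by
  induction k generalizing f g with
  | zero => exact Cl_zero.2 ((Cl_zero.1 hf).sub (Cl_zero.1 hg))
  | succ k ih =>
    refine Cl_succ.2 fun h => ?_
    rw [D_sub]
    exact ih (hf.D h) (hg.D h)

lemma Cl_smul {k : ℕ} (c : ℝ) {f : ℝ → ℝ} (hf : Cl k f) : Cl k (fun x => c * f x) := by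
  induction k generalizing f with
  | zero => exact Cl_zero.2 (continuous_const.mul (Cl_zero.1 hf))
  | succ k ih =>
    refine Cl_succ.2 fun h => ?_
    rw [D_smul]
    exact ih (hf.D h)

lemma Cl_const (k : ℕ) : ∀ c : ℝ, Cl k (fun _ => c) := by
  induction k with
  | zero => exact fun c => Cl_zero.2 continuous_const
  | succ k ih => exact fun c => Cl_succ.2 fun h => by rw [D_const]; exact ih 0

lemma Cl_xmul {k : ℕ} {f : ℝ → ℝ} (hf : Cl k f) : Cl (k+1) (fun x => x * f x) := by
  induction k generalizing f with
  | zero =>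
    refine Cl_succ.2 fun h => Cl_zero.2 ?_
    have : D h (fun x => x * f x) = fun x => x * D h f x + h * f (x + h) := by
      funext x; simp only [D]; ring
    rw [this]
    have hf0 := Cl_zero.1 hf
    exact (continuous_id.mul (D_continuous hf0 h)).add
      (continuous_const.mul (hf0.comp (continuous_id.add continuous_const)))
  | succ k ih =>
    refine Cl_succ.2 fun h => ?_
    have : D h (fun x => x * f x) = fun x => x * D h f x + (h * f x + h * D h f x) := by
      funext x; simp only [D]; ring
    rw [this]
    exact Cl_add (ih (hf.D h)) (Cl_add (Cl_smul h hf) (Cl_smul h (Cl_mono (hf.D h))))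

lemma Cl_sum {k : ℕ} {ι : Type*} (s : Finset ι) (F : ι → ℝ → ℝ)
    (hF : ∀ i ∈ s, Cl k (F i)) : Cl k (fun x => ∑ i ∈ s, F i x) := by
  classical
  induction s using Finset.induction with
  | empty => simpa using Cl_const k 0
  | insert a s hx ih =>
    refine Cl_congr (f := fun x => F a x + ∑ i ∈ s, F i x) (fun x => by
      rw [Finset.sum_insert hx]) ?_
    exact Cl_add (hF a (Finset.mem_insert_self a s)) (ih fun i hi => hF i (Finset.mem_insert_of_mem hi))

/-- continuity of `Dn x j w` in its base point -/
lemma Cl_Dn_continuous {m : ℕ} {w : ℝ → ℝ} (hw : Cl m w) {j : ℕ} (hj : m ≤ j) (x : ℝ) :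
    Continuous (Dn x j w) := by
  rw [Dn_eq_Dl]
  exact Cl_of_le hj hw _ (by simp)

/-- functions with all first differences vanishing are constant -/
lemma const_of_D_zero {g : ℝ → ℝ} (hg : ∀ h x, D h g x = 0) (x : ℝ) : g x = g 0 := by
  have := hg x 0
  simp only [D, zero_add] at this
  linarith


/-- `u` has all first differences continuous -/
def Good (u : ℝ → ℝ) : Prop := ∀ h, Continuous (D h u)

def Bop (u : ℝ → ℝ) (x : ℝ) : ℝ := ∫ s in (0:ℝ)..1, D x u s
def Cop (u : ℝ → ℝ) (x : ℝ) : ℝ := ∫ s in (0:ℝ)..x, D 1 u s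
def Aop (u : ℝ → ℝ) (x : ℝ) : ℝ := Bop u x - Cop u x

/-- sliding window identity for continuous functions -/
lemma window_slide {v : ℝ → ℝ} (hv : Continuous v) (a c : ℝ) :
    (∫ s in a..(a+c), v s) - (∫ s in (0:ℝ)..c, v s) = ∫ s in (0:ℝ)..a, (v (s + c) - v s) := by
  have hint : ∀ p q : ℝ, IntervalIntegrable v volume p q := fun p q => hv.intervalIntegrable p q
  have h1 : (∫ s in (0:ℝ)..a, v s) + (∫ s in a..(a+c), v s) = ∫ s in (0:ℝ)..(a+c), v s :=
    integral_add_adjacent_intervals (hint 0 a) (hint a (a+c))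
  have h2 : (∫ s in (0:ℝ)..c, v s) + (∫ s in c..(a+c), v s) = ∫ s in (0:ℝ)..(a+c), v s := by
    have := integral_add_adjacent_intervals (hint 0 c) (hint c (a+c))
    linarith [this]
  have h3 : (∫ s in (0:ℝ)..a, v (s + c)) = ∫ s in c..(a+c), v s := by
    have := integral_comp_add_right (a := (0:ℝ)) (b := a) v c
    simpa using this
  have h4 : (∫ s in (0:ℝ)..a, (v (s + c) - v s)) =
      (∫ s in (0:ℝ)..a, v (s + c)) - ∫ s in (0:ℝ)..a, v s := by
    apply intervalIntegral.integral_sub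
    · apply Continuous.intervalIntegrable
      exact hv.comp (continuous_add_right c)
    · exact hint 0 a
  rw [h4, h3]
  linarith

lemma Bop_zero (u : ℝ → ℝ) : Bop u 0 = 0 := by
  have : D 0 u = fun _ => (0:ℝ) := by funext s; simp [D]
  simp [Bop, this]

lemma Aop_zero (u : ℝ → ℝ) : Aop u 0 = 0 := by
  simp [Aop, Bop_zero, Cop]

lemma Cop_continuous {u : ℝ → ℝ} (hu : Good u) : Continuous (Cop u) :=
  continuous_primitive (fun a b => (hu 1).intervalIntegrable a b) 0

/-- key pointwise identity -/
lemma D_swap_pt (u : ℝ → ℝ) (y c s : ℝ) : D y u (s + c) - D y u s = D c u (s + y) - D c u s := by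
  simp only [D]; ring_nf

/-- additivity of `Aop u` -/
lemma Aop_add_arg {u : ℝ → ℝ} (hu : Good u) (x y : ℝ) :
    Aop u (x + y) = Aop u x + Aop u y := by
  have hDx : ∀ z : ℝ, Continuous (D z u) := hu
  -- Bop u (x+y) = Bop u x + ∫ s in x..x+1, D y u s
  have e1 : Bop u (x + y) = Bop u x + ∫ s in x..(x+1), D y u s := by
    have hpt : ∀ s, D (x+y) u s = D x u s + D y u (s + x) := by
      intro s; simp only [D]; ring_nf
    have : Bop u (x+y) = (∫ s in (0:ℝ)..1, (D x u s + D y u (s + x))) := by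
      unfold Bop
      congr 1; funext s; rw [hpt s]
    have hInt2 : IntervalIntegrable (fun s => D y u (s + x)) volume 0 1 := by
      apply Continuous.intervalIntegrable
      exact (hDx y).comp (continuous_add_right x)
    rw [this, integral_add ((hDx x).intervalIntegrable 0 1) hInt2]
    congr 1
    have := integral_comp_add_right (a := (0:ℝ)) (b := 1) (D y u) x
    rw [this]
    norm_num [add_comm]
  -- window slide on the second integral
  have e2 : (∫ s in x..(x+1), D y u s) - Bop u y = ∫ s in (0:ℝ)..x, (D y u (s+1) - D y u s) := by
    have := window_slide (hDx y) x 1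
    unfold Bop
    linarith [this]
  have e3 : (∫ s in (0:ℝ)..x, (D y u (s+1) - D y u s)) =
      ∫ s in (0:ℝ)..x, (D 1 u (s+y) - D 1 u s) := by
    congr 1; funext s; exact D_swap_pt u y 1 s
  have e4 : (∫ s in (0:ℝ)..x, (D 1 u (s+y) - D 1 u s)) = Cop u (x+y) - Cop u y - Cop u x := by
    have h5 : (∫ s in (0:ℝ)..x, (D 1 u (s+y) - D 1 u s)) =
        (∫ s in (0:ℝ)..x, D 1 u (s+y)) - ∫ s in (0:ℝ)..x, D 1 u s := by
      apply intervalIntegral.integral_sub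
      · apply Continuous.intervalIntegrable
        exact (hDx 1).comp (continuous_add_right y)
      · exact (hDx 1).intervalIntegrable 0 x
    have h6 : (∫ s in (0:ℝ)..x, D 1 u (s+y)) = ∫ s in y..(x+y), D 1 u s := by
      have := integral_comp_add_right (a := (0:ℝ)) (b := x) (D 1 u) y
      simpa using this
    have h7 : (∫ s in (0:ℝ)..y, D 1 u s) + (∫ s in y..(x+y), D 1 u s)
        = ∫ s in (0:ℝ)..(x+y), D 1 u s :=
      integral_add_adjacent_intervals ((hDx 1).intervalIntegrable 0 y)
        ((hDx 1).intervalIntegrable y (x+y))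
    unfold Cop
    rw [h5, h6]
    linarith
  unfold Aop
  linarith [e1, e2, e3, e4]

/-- translation invariance of `Aop` -/
lemma Aop_sh {u : ℝ → ℝ} (hu : Good u) (a x : ℝ) :
    Aop (fun z => u (z + a)) x = Aop u x := by
  have hDx : ∀ z : ℝ, Continuous (D z u) := hu
  have hDsh : ∀ z : ℝ, D z (fun w => u (w + a)) = fun s => D z u (s + a) := by
    intro z; funext s; simp only [D]; ring_nf
  have e1 : Bop (fun z => u (z + a)) x = ∫ s in a..(a+x*0+1), D x u s := by
    unfold Bop
    rw [hDsh x]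
    have := integral_comp_add_right (a := (0:ℝ)) (b := 1) (D x u) a
    rw [this]; norm_num [add_comm]
  have e2 : Cop (fun z => u (z + a)) x = ∫ s in a..(a+x), D 1 u s := by
    unfold Cop
    rw [hDsh 1]
    have := integral_comp_add_right (a := (0:ℝ)) (b := x) (D 1 u) a
    rw [this]; norm_num [add_comm]
  have w1 := window_slide (hDx x) a 1
  have w2 := window_slide (hDx 1) a x
  have e3 : (∫ s in (0:ℝ)..a, (D x u (s+1) - D x u s)) =
      ∫ s in (0:ℝ)..a, (D 1 u (s+x) - D 1 u s) := by
    congr 1; funext s; exact D_swap_pt u x 1 s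
  unfold Aop
  rw [e1, e2]
  unfold Bop Cop at *
  norm_num at *
  linarith

lemma Good_add {u v : ℝ → ℝ} (hu : Good u) (hv : Good v) :
    Good (fun x => u x + v x) := by
  intro h
  have : D h (fun x => u x + v x) = fun x => D h u x + D h v x := by
    funext x; simp only [D]; ring
  rw [this]; exact (hu h).add (hv h)

lemma Good_zero : Good (fun _ => (0:ℝ)) := by
  intro h
  have : D h (fun _ => (0:ℝ)) = fun _ => (0:ℝ) := by funext x; simp [D]
  rw [this]; exact continuous_const

lemma Aop_fun_add {u v : ℝ → ℝ} (hu : Good u) (hv : Good v) (y : ℝ) :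
    Aop (fun x => u x + v x) y = Aop u y + Aop v y := by
  have hD : D y (fun x => u x + v x) = fun x => D y u x + D y v x := by
    funext x; simp only [D]; ring
  have hD1 : D 1 (fun x => u x + v x) = fun x => D 1 u x + D 1 v x := by
    funext x; simp only [D]; ring
  unfold Aop Bop Cop
  rw [hD, hD1, integral_add ((hu y).intervalIntegrable 0 1) ((hv y).intervalIntegrable 0 1),
    integral_add ((hu 1).intervalIntegrable 0 y) ((hv 1).intervalIntegrable 0 y)]
  ring

lemma Aop_fun_smul (c : ℝ) (u : ℝ → ℝ) (y : ℝ) :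
    Aop (fun x => c * u x) y = c * Aop u y := by
  have hD : ∀ z, D z (fun x => c * u x) = fun x => c * D z u x := by
    intro z; funext x; simp only [D]; ring
  unfold Aop Bop Cop
  rw [hD y, hD 1, intervalIntegral.integral_const_mul, intervalIntegral.integral_const_mul]
  ring

lemma Aop_congr {u v : ℝ → ℝ} (h : ∀ x, u x = v x) (y : ℝ) : Aop u y = Aop v y := by
  rw [show u = v from funext h]

lemma Good_congr {u v : ℝ → ℝ} (h : ∀ x, u x = v x) (hu : Good u) : Good v := by
  rwa [show u = v from funext h] at hu

lemma Good_sum {ι : Type*} (s : Finset ι) (F : ι → ℝ → ℝ) (hF : ∀ i ∈ s, Good (F i)) :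
    Good (fun x => ∑ i ∈ s, F i x) := by
  classical
  induction s using Finset.induction with
  | empty => simpa using Good_zero
  | insert a s hx ih =>
    refine Good_congr (u := fun x => F a x + ∑ i ∈ s, F i x) (fun x => by rw [Finset.sum_insert hx]) ?_
    exact Good_add (hF a (Finset.mem_insert_self a s)) (ih fun i hi => hF i (Finset.mem_insert_of_mem hi))

lemma Aop_sum {ι : Type*} (s : Finset ι) (F : ι → ℝ → ℝ) (hF : ∀ i ∈ s, Good (F i)) (y : ℝ) :
    Aop (fun x => ∑ i ∈ s, F i x) y = ∑ i ∈ s, Aop (F i) y := by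
  classical
  induction s using Finset.induction with
  | empty =>
    simp only [Finset.sum_empty]
    unfold Aop Bop Cop
    have h0 : ∀ z : ℝ, D z (fun _ => (0:ℝ)) = fun _ => (0:ℝ) := by
      intro z; funext x; simp [D]
    rw [h0, h0]; simp
  | insert a s hx ih =>
    have hFa := hF a (Finset.mem_insert_self a s)
    have hFs : ∀ i ∈ s, Good (F i) := fun i hi => hF i (Finset.mem_insert_of_mem hi)
    have : Aop (fun x => ∑ i ∈ insert a s, F i x) y
        = Aop (fun x => F a x + ∑ i ∈ s, F i x) y :=
      Aop_congr (fun x => by rw [Finset.sum_insert hx]) y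
    rw [this, Aop_fun_add hFa (Good_sum s F hFs), ih hFs, Finset.sum_insert hx]


/-- THE analytic core: the remainder `u - Aop u` is continuous. -/
lemma Aop_remainder_continuous {u : ℝ → ℝ} (hu : Good u) :
    Continuous (fun x => u x - Aop u x) := by
  classical
  set F : ℝ → ℝ → ℝ := fun x s => D x u s - D x u 0 with hF
  have hFs : ∀ x, Continuous (fun s => F x s) := fun x => (hu x).sub continuous_const
  have hFx : ∀ s, Continuous (fun x => F x s) := by
    intro s
    have : (fun x => F x s) = fun x => D s u x - D s u 0 := by
      funext x; simp only [hF, D, zero_add]; ring_nf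
    rw [this]
    exact (hu s).sub continuous_const
  -- Baire category: uniform bound on a neighborhood of some point
  set Fset : ℕ → Set ℝ := fun n => {x : ℝ | ∀ s ∈ Icc (0:ℝ) 1, |F x s| ≤ n} with hFset
  have hclosed : ∀ n, IsClosed (Fset n) := by
    intro n
    have : Fset n = ⋂ s ∈ Icc (0:ℝ) 1, {x : ℝ | |F x s| ≤ n} := by
      ext x; simp [hFset, mem_iInter]
    rw [this]
    exact isClosed_biInter fun s _ =>
      isClosed_le ((hFx s).abs) continuous_const
  have hcover : (⋃ n, Fset n) = univ := by
    apply eq_univ_of_forall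
    intro x
    obtain ⟨s₀, hs₀, hmax⟩ :=
      isCompact_Icc.exists_isMaxOn (nonempty_Icc.2 (by norm_num : (0:ℝ) ≤ 1))
        ((hFs x).abs.continuousOn)
    refine mem_iUnion.2 ⟨⌈|F x s₀|⌉₊, fun s hs => ?_⟩
    exact le_trans (hmax hs) (Nat.le_ceil _)
  obtain ⟨N, hN⟩ := nonempty_interior_of_iUnion_of_closed hclosed hcover
  obtain ⟨x₀, hx₀⟩ := hN
  -- dominated convergence: Ψ is continuous at x₀
  set Ψ : ℝ → ℝ := fun x => ∫ s in (0:ℝ)..1, F x s with hΨ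
  have hΨc : ContinuousAt Ψ x₀ := by
    apply intervalIntegral.continuousAt_of_dominated_interval
      (bound := fun _ => (N:ℝ))
    · exact Filter.Eventually.of_forall fun x =>
        ((hFs x).aestronglyMeasurable).restrict
    · have hmem : Fset N ∈ nhds x₀ := mem_interior_iff_mem_nhds.1 hx₀
      filter_upwards [hmem] with x hx
      refine MeasureTheory.ae_of_all _ fun s hs => ?_
      have : s ∈ Icc (0:ℝ) 1 := by
        rw [Set.uIoc_of_le (by norm_num : (0:ℝ) ≤ 1)] at hs
        exact ⟨le_of_lt hs.1, hs.2⟩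
      simpa [Real.norm_eq_abs] using hx s this
    · exact intervalIntegrable_const
    · exact MeasureTheory.ae_of_all _ fun s _ => (hFx s).continuousAt
  -- express the remainder through Ψ
  have hrepr : ∀ x, u x - Aop u x = u 0 - Ψ x + Cop u x := by
    intro x
    have hB : Bop u x = Ψ x + (u x - u 0) := by
      have h1 : ∀ s, D x u s = F x s + (u x - u 0) := by
        intro s; simp only [hF, D, zero_add]; ring
      have h2 : Bop u x = ∫ s in (0:ℝ)..1, (F x s + (u x - u 0)) := by
        unfold Bop; congr 1; funext s; exact h1 s
      rw [h2, integral_add ((hFs x).intervalIntegrable 0 1) intervalIntegrable_const]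
      simp [hΨ]
    simp only [Aop, hB]
    ring
  -- continuity at x₀ of the remainder
  set r : ℝ → ℝ := fun x => u x - Aop u x with hr
  have hrx₀ : ContinuousAt r x₀ := by
    have : r = fun x => u 0 - Ψ x + Cop u x := funext hrepr
    rw [this]
    exact ((continuousAt_const.sub hΨc).add (Cop_continuous hu).continuousAt)
  -- propagate continuity to every point
  rw [continuous_iff_continuousAt]
  intro y
  have key : ∀ z, r z = r (z - (y - x₀)) + D (y - x₀) u (z - (y - x₀)) - Aop u (y - x₀) := by
    intro z
    have hAop : Aop u z = Aop u (z - (y - x₀)) + Aop u (y - x₀) := by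
      have := Aop_add_arg hu (z - (y - x₀)) (y - x₀)
      rwa [sub_add_cancel] at this
    simp only [hr, D, sub_add_cancel, hAop]
    ring
  have : ContinuousAt (fun z => r (z - (y - x₀)) + D (y - x₀) u (z - (y - x₀))
      - Aop u (y - x₀)) y := by
    have hshift : ContinuousAt (fun z : ℝ => z - (y - x₀)) y := by fun_prop
    have h1 : ContinuousAt (fun z => r (z - (y - x₀))) y := by
      have := ContinuousAt.comp (x := y) (f := fun z : ℝ => z - (y - x₀)) (g := r)
        (by simpa using hrx₀) hshift
      exact this
    have h2 : ContinuousAt (fun z => D (y - x₀) u (z - (y - x₀))) y :=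
      ContinuousAt.comp (hu (y - x₀)).continuousAt hshift
    exact (h1.add h2).sub continuousAt_const
  exact this.congr (Filter.Eventually.of_forall fun z => (key z).symm)
-- Part 4: P, Pord, and combinatorial lemmas (appended to full.lean context)

/-- the polynomial part extraction operator -/
def P : ℕ → (ℝ → ℝ) → ℝ → ℝ
  | 0, _, _ => 0
  | (m+1), f, x => (1/(m+1).factorial : ℝ) * Aop (Dn x m f) x + (x/(m+1)) * P m (D 1 f) x

lemma P_succ (m : ℕ) (f : ℝ → ℝ) (x : ℝ) :
    P (m+1) f x = (1/(m+1).factorial : ℝ) * Aop (Dn x m f) x + (x/(m+1)) * P m (D 1 f) x := rfl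

/-- generalized polynomials of order `m` (all mixed differences of order `m+1` vanish) -/
def Pord : ℕ → (ℝ → ℝ) → Prop
  | 0, g => ∀ h, D h g = fun _ => 0
  | (m+1), g => ∀ h, Pord m (D h g)

lemma Pord_congr {m : ℕ} {g g' : ℝ → ℝ} (h : ∀ x, g x = g' x) (hg : Pord m g) : Pord m g' := by
  rwa [show g = g' from funext h] at hg

lemma Pord_zero_fun (m : ℕ) : Pord m (fun _ => (0:ℝ)) := by
  induction m with
  | zero => intro h; rw [D_const]
  | succ m ih => intro h; rw [D_const]; exact ih

lemma Pord_const (m : ℕ) (c : ℝ) : Pord m (fun _ => c) := by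
  cases m with
  | zero => intro h; rw [D_const]
  | succ m => intro h; rw [D_const]; exact Pord_zero_fun m

lemma Pord_add {m : ℕ} {g g' : ℝ → ℝ} (hg : Pord m g) (hg' : Pord m g') :
    Pord m (fun x => g x + g' x) := by
  induction m generalizing g g' with
  | zero =>
    intro h; rw [D_add, hg h, hg' h]; funext x; simp
  | succ m ih =>
    intro h; rw [D_add]; exact ih (hg h) (hg' h)

lemma Pord_smul {m : ℕ} (c : ℝ) {g : ℝ → ℝ} (hg : Pord m g) : Pord m (fun x => c * g x) := by
  induction m generalizing g with
  | zero => intro h; rw [D_smul, hg h]; funext x; simp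
  | succ m ih => intro h; rw [D_smul]; exact ih (hg h)

lemma Pord_mono {m : ℕ} {g : ℝ → ℝ} (hg : Pord m g) : Pord (m+1) g := by
  induction m generalizing g with
  | zero => intro h h'; rw [hg h, D_const]
  | succ m ih => intro h; exact ih (hg h)

lemma Pord_of_le {m m' : ℕ} (hm : m ≤ m') {g : ℝ → ℝ} (hg : Pord m g) : Pord m' g := by
  induction m' with
  | zero => simpa [Nat.le_zero.1 hm] using hg
  | succ m' ih =>
    rcases Nat.lt_or_ge m (m'+1) with h | h
    · exact Pord_mono (ih (Nat.lt_succ_iff.1 h))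
    · simpa [Nat.le_antisymm hm h] using hg

lemma Pord_sum {m : ℕ} {ι : Type*} (s : Finset ι) (F : ι → ℝ → ℝ)
    (hF : ∀ i ∈ s, Pord m (F i)) : Pord m (fun x => ∑ i ∈ s, F i x) := by
  classical
  induction s using Finset.induction with
  | empty => simpa using Pord_zero_fun m
  | insert a s hx ih =>
    refine Pord_congr (g := fun x => F a x + ∑ i ∈ s, F i x)
      (fun x => by rw [Finset.sum_insert hx]) ?_
    exact Pord_add (hF a (Finset.mem_insert_self a s))
      (ih fun i hi => hF i (Finset.mem_insert_of_mem hi))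

lemma Pord_sh {m : ℕ} (a : ℝ) {g : ℝ → ℝ} (hg : Pord m g) : Pord m (sh a g) := by
  induction m generalizing g with
  | zero => intro h; rw [D_sh, hg h]; funext x; simp [sh]
  | succ m ih => intro h; rw [D_sh]; exact ih (hg h)

lemma Pord_xmul {m : ℕ} {g : ℝ → ℝ} (hg : Pord m g) : Pord (m+1) (fun x => x * g x) := by
  induction m generalizing g with
  | zero =>
    intro h
    have hc : ∀ x, g x = g 0 := by
      intro x
      have := congrFun (hg x) 0
      simp only [D, zero_add] at this
      linarith
    intro h'
    have : D h (fun x => x * g x) = fun _ => h * g 0 := by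
      funext x; simp only [D, hc (x + h), hc x]; ring
    rw [this, D_const]
  | succ m ih =>
    intro h
    have hD : D h (fun x => x * g x)
        = fun x => (x * D h g x + (h * g x + h * D h g x)) := by
      funext x; simp only [D]; ring
    rw [hD]
    exact Pord_add (ih (hg h)) (Pord_add (Pord_smul h hg)
      (Pord_smul h (Pord_mono (hg h))))

lemma Pord_to_Cl {m : ℕ} {g : ℝ → ℝ} (hg : Pord m g) : Cl m g := by
  induction m generalizing g with
  | zero =>
    refine Cl_zero.2 ?_
    have hc : ∀ x, g x = g 0 := by
      intro x
      have := congrFun (hg x) 0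
      simp only [D, zero_add] at this
      linarith
    exact Continuous.congr continuous_const (fun x => (hc x).symm)
  | succ m ih => exact Cl_succ.2 fun h => ih (hg h)

lemma Pord_Dn_zero {m : ℕ} {g : ℝ → ℝ} (hg : Pord m g) (h : ℝ) :
    Dn h (m+1) g = fun _ => 0 := by
  induction m generalizing g with
  | zero => exact hg h
  | succ m ih =>
    rw [Dn_succ']
    exact ih (hg h)

lemma Pord_Dn_zero_ge {m : ℕ} {g : ℝ → ℝ} (hg : Pord m g) {j : ℕ} (hj : m + 1 ≤ j) (h : ℝ) :
    Dn h j g = fun _ => 0 := by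
  obtain ⟨d, rfl⟩ := Nat.exists_eq_add_of_le hj
  rw [Nat.add_comm, Dn_add_exp, Pord_Dn_zero hg h, Dn_zero_fun]

lemma Pord_drop_Dn {m : ℕ} {g : ℝ → ℝ} (hg : Pord m g) (x : ℝ) : Pord 0 (Dn x m g) := by
  induction m generalizing g with
  | zero => exact hg
  | succ m ih =>
    rw [Dn_succ']
    exact ih (hg x)

lemma Pord_Dn_base_const {m : ℕ} {g : ℝ → ℝ} (hg : Pord m g) (x s : ℝ) :
    Dn x m g s = Dn x m g 0 := by
  have h0 := Pord_drop_Dn hg x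
  have := congrFun (h0 s) 0
  simp only [D, zero_add] at this
  linarith
-- Part 5: Cl_sh, Cl_Dl, expansion lemmas, binomials

lemma Cl_sh {m : ℕ} (a : ℝ) {g : ℝ → ℝ} (hg : Cl m g) : Cl m (sh a g) := by
  induction m generalizing g with
  | zero =>
    refine Cl_zero.2 ?_
    exact ((Cl_zero.1 hg).comp (continuous_add_right a) : Continuous fun x => g (x + a))
  | succ m ih =>
    refine Cl_succ.2 fun h => ?_
    rw [D_sh]
    exact ih (hg.D h)

lemma Cl_Dl : ∀ (l : List ℝ) {b : ℕ} {u : ℝ → ℝ}, Cl (l.length + b) u → Cl b (Dl l u) := by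
  intro l
  induction l with
  | nil => intro b u hu; rw [Dl_nil]; rwa [List.length_nil, Nat.zero_add] at hu
  | cons h l ih =>
    intro b u hu
    rw [Dl_cons]
    apply ih
    have : Cl (l.length + b + 1) u := by
      have e : (h :: l).length + b = l.length + b + 1 := by simp; omega
      rwa [e] at hu
    exact this.D h

lemma Cl_Dn {n b : ℕ} {u : ℝ → ℝ} (h : ℝ) (hu : Cl (n + b) u) : Cl b (Dn h n u) := by
  rw [Dn_eq_Dl]
  exact Cl_Dl (List.replicate n h) (by simpa using hu)

lemma Good_of_Cl1 {u : ℝ → ℝ} (hu : Cl 1 u) : Good u := fun h => hu [h] rfl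

lemma Good_Dn {n : ℕ} {u : ℝ → ℝ} (h : ℝ) (hu : Cl (n + 1) u) : Good (Dn h n u) :=
  Good_of_Cl1 (Cl_Dn h hu)

/-- expansion of the iterated equal-step difference -/
lemma Dn_expansion : ∀ (j : ℕ) (w : ℝ → ℝ) (x s : ℝ),
    Dn x j w s
      = ∑ i ∈ Finset.range (j+1), ((-1:ℝ))^(j+i) * (j.choose i : ℝ) * w (s + i*x) := by
  intro j
  induction j with
  | zero => intro w x s; simp [Dn]
  | succ j ih =>
    intro w x s
    rw [Dn_succ', ih (D x w) x s]
    have hD : ∀ i : ℕ, D x w (s + i*x) = w (s + (i+1:ℕ)*x) - w (s + i*x) := by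
      intro i
      have : s + (i:ℝ)*x + x = s + ((i+1:ℕ):ℝ)*x := by push_cast; ring
      simp only [D, this]
    have lhs_eq : ∑ i ∈ Finset.range (j+1), ((-1:ℝ))^(j+i) * (j.choose i : ℝ) * D x w (s + i*x)
        = (∑ i ∈ Finset.range (j+1), ((-1:ℝ))^(j+i) * (j.choose i : ℝ) * w (s + (i+1:ℕ)*x))
          - ∑ i ∈ Finset.range (j+1), ((-1:ℝ))^(j+i) * (j.choose i : ℝ) * w (s + i*x) := by
      rw [← Finset.sum_sub_distrib]
      refine Finset.sum_congr rfl fun i _ => ?_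
      rw [hD i]; ring
    rw [lhs_eq]
    -- the auxiliary alternating sum
    set G : ℕ → ℝ := fun i => ((-1:ℝ))^(j+i+1) * (j.choose i : ℝ) * w (s + i*x) with hG
    have hkey : (∑ i ∈ Finset.range (j+1), ((-1:ℝ))^(j+i) * (j.choose (i+1) : ℝ) * w (s + (i+1:ℕ)*x))
          + ((-1:ℝ))^(j+1) * w s
        = - ∑ i ∈ Finset.range (j+1), ((-1:ℝ))^(j+i) * (j.choose i : ℝ) * w (s + i*x) := by
      have e1 : ∑ i ∈ Finset.range (j+2), G i
          = (∑ i ∈ Finset.range (j+1), G (i+1)) + G 0 := Finset.sum_range_succ' G (j+1)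
      have e2 : ∑ i ∈ Finset.range (j+2), G i
          = (∑ i ∈ Finset.range (j+1), G i) + G (j+1) := Finset.sum_range_succ G (j+1)
      have hGsucc : ∀ i : ℕ, G (i+1) = ((-1:ℝ))^(j+i) * (j.choose (i+1) : ℝ) * w (s + (i+1:ℕ)*x) := by
        intro i; simp only [hG]; push_cast; ring
      have hG0 : G 0 = ((-1:ℝ))^(j+1) * w s := by
        simp only [hG, Nat.choose_zero_right, Nat.cast_one, Nat.cast_zero]
        push_cast
        ring
      have hGtop : G (j+1) = 0 := by
        simp only [hG, Nat.choose_succ_self]; push_cast; ring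
      have e3 : ∑ i ∈ Finset.range (j+1), G (i+1)
          = ∑ i ∈ Finset.range (j+1), ((-1:ℝ))^(j+i) * (j.choose (i+1) : ℝ) * w (s + (i+1:ℕ)*x) :=
        Finset.sum_congr rfl fun i _ => hGsucc i
      have e4 : ∑ i ∈ Finset.range (j+1), G i
          = - ∑ i ∈ Finset.range (j+1), ((-1:ℝ))^(j+i) * (j.choose i : ℝ) * w (s + i*x) := by
        rw [← Finset.sum_neg_distrib]
        refine Finset.sum_congr rfl fun i _ => ?_
        simp only [hG]; ring
      rw [← e3, ← hG0]
      rw [e1] at e2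
      rw [← e4]
      linarith [e2, hGtop]
    -- now expand the target
    have target : ∑ i ∈ Finset.range (j+2), ((-1:ℝ))^(j+1+i) * ((j+1).choose i : ℝ) * w (s + i*x)
        = (∑ i ∈ Finset.range (j+1),
            ((-1:ℝ))^(j+i) * (((j.choose i : ℝ)) + (j.choose (i+1) : ℝ)) * w (s + (i+1:ℕ)*x))
          + ((-1:ℝ))^(j+1) * w s := by
      rw [Finset.sum_range_succ' (fun i => ((-1:ℝ))^(j+1+i) * ((j+1).choose i : ℝ) * w (s + i*x)) (j+1)]
      congr 1
      · refine Finset.sum_congr rfl fun i _ => ?_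
        rw [Nat.choose_succ_succ]
        push_cast
        ring
      · norm_num
    rw [target]
    have split : ∑ i ∈ Finset.range (j+1),
          ((-1:ℝ))^(j+i) * (((j.choose i : ℝ)) + (j.choose (i+1) : ℝ)) * w (s + (i+1:ℕ)*x)
        = (∑ i ∈ Finset.range (j+1), ((-1:ℝ))^(j+i) * (j.choose i : ℝ) * w (s + (i+1:ℕ)*x))
          + ∑ i ∈ Finset.range (j+1), ((-1:ℝ))^(j+i) * (j.choose (i+1) : ℝ) * w (s + (i+1:ℕ)*x) := by
      rw [← Finset.sum_add_distrib]
      refine Finset.sum_congr rfl fun i _ => ?_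
      ring
    rw [split]
    linarith [hkey]

/-- differences of power functions -/
lemma Dn_pow : ∀ (m : ℕ) (j : ℕ) (h : ℝ),
    (j < m → Dn h m (fun y => y^j) = fun _ => 0) ∧
    (j = m → Dn h m (fun y => y^j) = fun _ => (m.factorial : ℝ) * h^m) := by
  intro m
  induction m with
  | zero =>
    intro j h
    refine ⟨fun hj => absurd hj (Nat.not_lt_zero j), fun hj => ?_⟩
    subst hj
    funext y; simp [Dn]
  | succ m ih =>
    intro j h
    have hDpow : D h (fun y => y^j)
        = fun y => ∑ i ∈ Finset.range j, (((j.choose i : ℝ)) * h^(j-i)) * y^i := by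
      funext y
      have hbin : (y + h)^j = ∑ i ∈ Finset.range (j+1), y^i * h^(j-i) * (j.choose i : ℝ) := by
        exact_mod_cast add_pow y h j
      simp only [D, hbin, Finset.sum_range_succ, Nat.sub_self, pow_zero, Nat.choose_self,
        Nat.cast_one]
      rw [Finset.sum_congr rfl (fun i _ => by ring : ∀ i ∈ Finset.range j,
        y^i * h^(j-i) * (j.choose i : ℝ) = (((j.choose i : ℝ)) * h^(j-i)) * y^i)]
      ring
    have hexp : Dn h (m+1) (fun y => y^j)
        = fun y => ∑ i ∈ Finset.range j, (((j.choose i : ℝ)) * h^(j-i)) * Dn h m (fun z => z^i) y := by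
      rw [Dn_succ', hDpow]
      rw [Dn_sum h m (Finset.range j) (fun i => fun y => (((j.choose i : ℝ)) * h^(j-i)) * y^i)]
      funext y
      refine Finset.sum_congr rfl fun i _ => ?_
      rw [Dn_smul]
    constructor
    · intro hj
      rw [hexp]
      funext y
      rw [Finset.sum_eq_zero]
      intro i hi
      have : i < m := lt_of_lt_of_le (Finset.mem_range.1 hi) (Nat.lt_succ_iff.1 hj)
      rw [(ih i h).1 this]
      simp
    · intro hj
      subst hj
      rw [hexp]
      funext y
      rw [Finset.sum_range_succ]
      have hzero : ∀ i ∈ Finset.range m,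
          ((((m+1).choose i : ℝ)) * h^(m+1-i)) * Dn h m (fun z => z^i) y = 0 := by
        intro i hi
        rw [(ih i h).1 (Finset.mem_range.1 hi)]
        simp
      rw [Finset.sum_eq_zero hzero, (ih m h).2 rfl]
      have h1 : m + 1 - m = 1 := by omega
      rw [h1]
      simp only [Nat.choose_succ_self_right, pow_one]
      push_cast [Nat.factorial_succ]
      ring

/-- the alternating-sum factorial identity -/
lemma alt_sum_pow (m : ℕ) :
    ∑ i ∈ Finset.range (m+1), ((-1:ℝ))^(m+i) * (m.choose i : ℝ) * ((i:ℝ))^m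
      = (m.factorial : ℝ) := by
  have e1 := Dn_expansion m (fun y => y^m) 1 0
  have e2 := congrFun ((Dn_pow m m 1).2 rfl) 0
  rw [e2] at e1
  simp only [one_pow, mul_one, zero_add] at e1
  exact e1.symm
-- Part 6: Aop binomial expansion, homogeneity, Pord of theta terms and of P

/-- binomial expansion of `Aop (Dn (a+b) n g) y` -/
lemma Aop_binom : ∀ (n : ℕ) (g : ℝ → ℝ), Cl (n+1) g → ∀ (a b y : ℝ),
    Aop (Dn (a+b) n g) y
      = ∑ c ∈ Finset.range (n+1), (n.choose c : ℝ) * Aop (Dn a (n-c) (Dn b c g)) y := by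
  intro n
  induction n with
  | zero => intro g hg a b y; simp [Dn]
  | succ n ih =>
    intro g hg a b y
    have hDag : Cl (n+1) (D a g) := hg.D a
    have hDbg : Cl (n+1) (D b g) := hg.D b
    have good1 : Good (Dn (a+b) n (D a g)) := Good_Dn (a+b) hDag
    have good2 : Good (Dn (a+b) n (D b g)) := Good_Dn (a+b) hDbg
    have hsplit : Aop (Dn (a+b) (n+1) g) y
        = Aop (Dn (a+b) n (D a g)) y + Aop (Dn (a+b) n (D b g)) y := by
      have e : Dn (a+b) (n+1) g
          = fun s => Dn (a+b) n (D a g) s + Dn (a+b) n (sh a (D b g)) s := by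
        rw [Dn_succ']
        have e2 : D (a+b) g = fun s => D a g s + sh a (D b g) s := by
          funext s; simp only [D, sh]; ring_nf
        rw [e2, Dn_add]
      rw [show Aop (Dn (a+b) (n+1) g) y
          = Aop (fun s => Dn (a+b) n (D a g) s + Dn (a+b) n (sh a (D b g)) s) y from by rw [← e]]
      have good2' : Good (Dn (a+b) n (sh a (D b g))) := by
        rw [Dn_sh]
        intro h
        rw [D_sh]
        have : Continuous (D h (Dn (a+b) n (D b g))) := good2 h
        exact (this.comp (continuous_add_right a) : Continuous fun x => D h (Dn (a+b) n (D b g)) (x + a))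
      rw [Aop_fun_add good1 good2']
      congr 1
      rw [Dn_sh]
      exact Aop_sh good2 a y
    rw [hsplit, ih (D a g) hDag a b y, ih (D b g) hDbg a b y]
    -- rewrite the two sums in canonical A-form
    have hS1 : ∀ c ∈ Finset.range (n+1),
        (n.choose c : ℝ) * Aop (Dn a (n-c) (Dn b c (D a g))) y
          = (n.choose c : ℝ) * Aop (Dn a (n+1-c) (Dn b c g)) y := by
      intro c hc
      have hcn : c ≤ n := Nat.lt_succ_iff.1 (Finset.mem_range.1 hc)
      have e : Dn a (n-c) (Dn b c (D a g)) = Dn a (n+1-c) (Dn b c g) := by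
        rw [Dn_comm_D]
        have : Dn a (n-c) (D a (Dn b c g)) = Dn a (n-c+1) (Dn b c g) := (Dn_succ' a (n-c) _).symm
        rw [this]
        have hnc : n - c + 1 = n + 1 - c := by omega
        rw [hnc]
      rw [e]
    have hS2 : ∀ c ∈ Finset.range (n+1),
        (n.choose c : ℝ) * Aop (Dn a (n-c) (Dn b c (D b g))) y
          = (n.choose c : ℝ) * Aop (Dn a (n-c) (Dn b (c+1) g)) y := by
      intro c hc
      have e : Dn b c (D b g) = Dn b (c+1) g := (Dn_succ' b c g).symm
      rw [e]
    rw [Finset.sum_congr rfl hS1, Finset.sum_congr rfl hS2]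
    -- combinatorial regrouping
    set A : ℕ → ℕ → ℝ := fun p c => Aop (Dn a p (Dn b c g)) y with hA
    have target : ∑ c ∈ Finset.range (n+2), ((n+1).choose c : ℝ) * A (n+1-c) c
        = (∑ c ∈ Finset.range (n+1), ((n.choose c : ℝ) + (n.choose (c+1) : ℝ)) * A (n-c) (c+1))
          + A (n+1) 0 := by
      rw [Finset.sum_range_succ' (fun c => ((n+1).choose c : ℝ) * A (n+1-c) c) (n+1)]
      congr 1
      · refine Finset.sum_congr rfl fun c hc => ?_
        rw [Nat.choose_succ_succ]
        have : n + 1 - (c+1) = n - c := by omega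
        rw [this]
        push_cast
        ring
      · simp
    have bracket : (∑ c ∈ Finset.range (n+1), (n.choose (c+1) : ℝ) * A (n-c) (c+1)) + A (n+1) 0
        = ∑ c ∈ Finset.range (n+1), (n.choose c : ℝ) * A (n+1-c) c := by
      set G : ℕ → ℝ := fun c => (n.choose c : ℝ) * A (n+1-c) c with hGdef
      have e1 : ∑ c ∈ Finset.range (n+2), G c
          = (∑ c ∈ Finset.range (n+1), G (c+1)) + G 0 := Finset.sum_range_succ' G (n+1)
      have e2 : ∑ c ∈ Finset.range (n+2), G c
          = (∑ c ∈ Finset.range (n+1), G c) + G (n+1) := Finset.sum_range_succ G (n+1)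
      have hGsucc : ∀ c, G (c+1) = (n.choose (c+1) : ℝ) * A (n-c) (c+1) := by
        intro c
        simp only [hGdef]
        congr 2
        omega
      have hGtop : G (n+1) = 0 := by
        simp only [hGdef, Nat.choose_succ_self]
        simp
      have hG0 : G 0 = A (n+1) 0 := by simp [hGdef]
      calc (∑ c ∈ Finset.range (n+1), (n.choose (c+1) : ℝ) * A (n-c) (c+1)) + A (n+1) 0
          = (∑ c ∈ Finset.range (n+1), G (c+1)) + G 0 := by
            rw [hG0, Finset.sum_congr rfl (fun c _ => (hGsucc c).symm)]
        _ = ∑ c ∈ Finset.range (n+2), G c := e1.symm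
        _ = (∑ c ∈ Finset.range (n+1), G c) + G (n+1) := e2
        _ = ∑ c ∈ Finset.range (n+1), (n.choose c : ℝ) * A (n+1-c) c := by
            rw [hGtop]; simp [hGdef]
    rw [target]
    have split2 : ∑ c ∈ Finset.range (n+1), ((n.choose c : ℝ) + (n.choose (c+1) : ℝ)) * A (n-c) (c+1)
        = (∑ c ∈ Finset.range (n+1), (n.choose c : ℝ) * A (n-c) (c+1))
          + ∑ c ∈ Finset.range (n+1), (n.choose (c+1) : ℝ) * A (n-c) (c+1) := by
      rw [← Finset.sum_add_distrib]
      exact Finset.sum_congr rfl fun c _ => by ring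
    rw [split2]
    have : ∑ c ∈ Finset.range (n+1), (n.choose c : ℝ) * Aop (Dn a (n+1-c) (Dn b c g)) y
        = ∑ c ∈ Finset.range (n+1), (n.choose c : ℝ) * A (n+1-c) c := rfl
    rw [this]
    rw [← bracket]
    have : ∑ c ∈ Finset.range (n+1), (n.choose c : ℝ) * Aop (Dn a (n-c) (Dn b (c+1) g)) y
        = ∑ c ∈ Finset.range (n+1), (n.choose c : ℝ) * A (n-c) (c+1) := rfl
    rw [this]
    ring
-- Part 7: homogeneity, Pord of theta diagonals, Pord of P, evaluation lemma

lemma Good_sh {u : ℝ → ℝ} (hu : Good u) (a : ℝ) : Good (sh a u) := by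
  intro h
  rw [D_sh]
  exact ((hu h).comp (continuous_add_right a) : Continuous fun x => D h u (x + a))

lemma D_nat_mul (n : ℕ) (x : ℝ) (u : ℝ → ℝ) :
    D ((n:ℝ)*x) u = fun s => ∑ i ∈ Finset.range n, D x u (s + i*x) := by
  induction n with
  | zero => funext s; simp [D]
  | succ n ih =>
    funext s
    have e1 : ((n+1:ℕ):ℝ)*x = (n:ℝ)*x + x := by push_cast; ring
    have e2 : D (((n+1:ℕ):ℝ)*x) u s = D x u (s + (n:ℝ)*x) + D ((n:ℝ)*x) u s := by
      rw [e1]; simp only [D]; ring_nf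
    rw [e2, ih, Finset.sum_range_succ]
    ring

lemma Aop_Dn_nat_mul : ∀ (c : ℕ) (v : ℝ → ℝ), Cl (c+1) v → ∀ (n : ℕ) (x y : ℝ),
    Aop (Dn ((n:ℝ)*x) c v) y = (n:ℝ)^c * Aop (Dn x c v) y := by
  intro c
  induction c with
  | zero => intro v hv n x y; simp [Dn]
  | succ c ih =>
    intro v hv n x y
    have hDxv : Cl (c+1) (D x v) := hv.D x
    have good0 : Good (Dn ((n:ℝ)*x) c (D x v)) := Good_Dn _ hDxv
    have e1 : Aop (Dn ((n:ℝ)*x) (c+1) v) y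
        = Aop (fun s => ∑ i ∈ Finset.range n, sh ((i:ℝ)*x) (Dn ((n:ℝ)*x) c (D x v)) s) y := by
      rw [Dn_succ', D_nat_mul]
      congr 1
      rw [show (fun s => ∑ i ∈ Finset.range n, D x v (s + (i:ℝ)*x))
          = fun s => ∑ i ∈ Finset.range n, sh ((i:ℝ)*x) (D x v) s from rfl]
      rw [Dn_sum]
      funext s
      exact Finset.sum_congr rfl fun i _ => by rw [Dn_sh]
    rw [e1, Aop_sum _ _ (fun i _ => Good_sh good0 _) y]
    have e2 : ∀ i ∈ Finset.range n,
        Aop (sh ((i:ℝ)*x) (Dn ((n:ℝ)*x) c (D x v))) y = Aop (Dn ((n:ℝ)*x) c (D x v)) y := by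
      intro i _
      exact Aop_sh good0 _ y
    rw [Finset.sum_congr rfl e2, Finset.sum_const, Finset.card_range, nsmul_eq_mul]
    rw [ih (D x v) hDxv n x y]
    rw [show Dn x (c+1) v = Dn x c (D x v) from Dn_succ' x c v]
    ring

lemma Aop_arg_nat_mul {u : ℝ → ℝ} (hu : Good u) (n : ℕ) (y : ℝ) :
    Aop u ((n:ℝ)*y) = (n:ℝ) * Aop u y := by
  induction n with
  | zero => simpa using Aop_zero u
  | succ n ih =>
    have : ((n+1:ℕ):ℝ)*y = (n:ℝ)*y + y := by push_cast; ring
    rw [this, Aop_add_arg hu, ih]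
    push_cast
    ring

lemma P_eval_zero (m : ℕ) (f : ℝ → ℝ) : P m f 0 = 0 := by
  cases m with
  | zero => rfl
  | succ m =>
    rw [P_succ]
    have : Dn (0:ℝ) m f = Dn (0:ℝ) m f := rfl
    rw [Aop_zero]
    simp

lemma P_hom : ∀ (m : ℕ) (f : ℝ → ℝ), Cl m f → ∀ (n : ℕ) (x : ℝ),
    P m f ((n:ℝ)*x) = (n:ℝ)^m * P m f x := by
  intro m
  induction m with
  | zero => intro f _ n x; simp [P]
  | succ m ih =>
    intro f hf n x
    rw [P_succ, P_succ]
    rw [Aop_Dn_nat_mul m f hf n x _, Aop_arg_nat_mul (Good_Dn x hf) n x]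
    rw [ih (D 1 f) (hf.D 1) n x]
    ring

/-- `Pord` for theta-type terms: pinned and diagonal versions -/
lemma Pord_theta : ∀ (b : ℕ) (g : ℝ → ℝ), Cl (b+1) g →
    (∀ y₀ : ℝ, Pord b (fun x => Aop (Dn x b g) y₀)) ∧
      Pord (b+1) (fun x => Aop (Dn x b g) x) := by
  intro b
  induction b using Nat.strong_induction_on with
  | _ b ih =>
    match b with
    | 0 =>
      intro g hg
      have hGood : Good g := Good_of_Cl1 hg
      constructor
      · intro y₀ h
        funext x
        simp [D, Dn]
      · intro h
        have e : D h (fun x => Aop (Dn x 0 g) x) = fun _ => Aop g h := by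
          funext x
          show Aop (Dn (x+h) 0 g) (x+h) - Aop (Dn x 0 g) x = Aop g h
          show Aop g (x+h) - Aop g x = Aop g h
          have := Aop_add_arg hGood x h
          linarith
        rw [e]
        exact fun h' => by rw [D_const]
    | (b+1) =>
      intro g hg
      have hsub : ∀ c ∈ Finset.range (b+1), ∀ h : ℝ, Cl ((b-c)+1) (Dn h (c+1) g) := by
        intro c hc h
        have hcb : c ≤ b := Nat.lt_succ_iff.1 (Finset.mem_range.1 hc)
        have e : (c+1) + ((b-c)+1) = b+2 := by omega
        exact Cl_Dn h (by rw [e]; exact hg)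
      have pinned : ∀ y₀ : ℝ, Pord (b+1) (fun x => Aop (Dn x (b+1) g) y₀) := by
        intro y₀ h
        have hDG : D h (fun x => Aop (Dn x (b+1) g) y₀)
            = fun x => ∑ c ∈ Finset.range (b+1),
                (((b+1).choose (c+1) : ℕ) : ℝ) * Aop (Dn x (b-c) (Dn h (c+1) g)) y₀ := by
          funext x
          have hb := Aop_binom (b+1) g hg x h y₀
          have hpeel : ∑ c ∈ Finset.range (b+2),
              (((b+1).choose c : ℕ) : ℝ) * Aop (Dn x (b+1-c) (Dn h c g)) y₀
            = (∑ c ∈ Finset.range (b+1),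
                (((b+1).choose (c+1) : ℕ) : ℝ) * Aop (Dn x (b-c) (Dn h (c+1) g)) y₀)
              + Aop (Dn x (b+1) g) y₀ := by
            rw [Finset.sum_range_succ'
              (fun c => (((b+1).choose c : ℕ) : ℝ) * Aop (Dn x (b+1-c) (Dn h c g)) y₀) (b+1)]
            congr 1
            · refine Finset.sum_congr rfl fun c hc => ?_
              have e : b + 1 - (c+1) = b - c := by omega
              rw [e]
            · simp [Dn]
          show Aop (Dn (x+h) (b+1) g) y₀ - Aop (Dn x (b+1) g) y₀ = _
          rw [hb, hpeel]
          ring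
        rw [hDG]
        refine Pord_sum _ _ fun c hc => ?_
        have hcb : c ≤ b := Nat.lt_succ_iff.1 (Finset.mem_range.1 hc)
        refine Pord_smul _ (Pord_of_le (by omega : b - c ≤ b) ?_)
        exact ((ih (b-c) (by omega) (Dn h (c+1) g) (hsub c hc h)).1) y₀
      refine ⟨pinned, ?_⟩
      intro h
      have hGoodc : ∀ c ∈ Finset.range (b+2), ∀ x : ℝ, Good (Dn x (b+1-c) (Dn h c g)) := by
        intro c hc x
        apply Good_Dn
        have e : c + ((b+1-c)+1) = b+2 := by
          have : c ≤ b+1 := Nat.lt_succ_iff.1 (Finset.mem_range.1 hc)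
          omega
        exact Cl_Dn h (by rw [e]; exact hg)
      have hDG : D h (fun x => Aop (Dn x (b+1) g) x)
          = fun x => (∑ c ∈ Finset.range (b+1), (((b+1).choose (c+1) : ℕ) : ℝ) *
                (Aop (Dn x (b-c) (Dn h (c+1) g)) x + Aop (Dn x (b-c) (Dn h (c+1) g)) h))
              + Aop (Dn x (b+1) g) h := by
        funext x
        have hb := Aop_binom (b+1) g hg x h (x+h)
        have hsplit : ∀ c ∈ Finset.range (b+2),
            (((b+1).choose c : ℕ) : ℝ) * Aop (Dn x (b+1-c) (Dn h c g)) (x+h)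
            = (((b+1).choose c : ℕ) : ℝ) *
                (Aop (Dn x (b+1-c) (Dn h c g)) x + Aop (Dn x (b+1-c) (Dn h c g)) h) := by
          intro c hc
          rw [Aop_add_arg (hGoodc c hc x) x h]
        rw [Finset.sum_congr rfl hsplit] at hb
        have hpeel : ∑ c ∈ Finset.range (b+2),
            (((b+1).choose c : ℕ) : ℝ) *
              (Aop (Dn x (b+1-c) (Dn h c g)) x + Aop (Dn x (b+1-c) (Dn h c g)) h)
          = (∑ c ∈ Finset.range (b+1),
              (((b+1).choose (c+1) : ℕ) : ℝ) *
                (Aop (Dn x (b-c) (Dn h (c+1) g)) x + Aop (Dn x (b-c) (Dn h (c+1) g)) h))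
            + (Aop (Dn x (b+1) g) x + Aop (Dn x (b+1) g) h) := by
          rw [Finset.sum_range_succ'
            (fun c => (((b+1).choose c : ℕ) : ℝ) *
              (Aop (Dn x (b+1-c) (Dn h c g)) x + Aop (Dn x (b+1-c) (Dn h c g)) h)) (b+1)]
          congr 1
          · refine Finset.sum_congr rfl fun c hc => ?_
            have e : b + 1 - (c+1) = b - c := by omega
            rw [e]
          · simp [Dn]
        show Aop (Dn (x+h) (b+1) g) (x+h) - Aop (Dn x (b+1) g) x = _
        rw [hb, hpeel]
        ring
      rw [hDG]
      refine Pord_add (Pord_sum _ _ fun c hc => ?_) (pinned h)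
      have hcb : c ≤ b := Nat.lt_succ_iff.1 (Finset.mem_range.1 hc)
      refine Pord_smul _ (Pord_add ?_ ?_)
      · exact Pord_of_le (by omega : (b-c)+1 ≤ b+1)
          ((ih (b-c) (by omega) (Dn h (c+1) g) (hsub c hc h)).2)
      · exact Pord_of_le (by omega : b-c ≤ b+1)
          (((ih (b-c) (by omega) (Dn h (c+1) g) (hsub c hc h)).1) h)

/-- `P m f` is a generalized polynomial of order `m` -/
lemma Pord_P : ∀ (m : ℕ) (f : ℝ → ℝ), Cl m f → Pord m (P m f) := by
  intro m
  induction m with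
  | zero =>
    intro f _
    exact Pord_congr (g := fun _ => (0:ℝ)) (fun x => rfl) (Pord_zero_fun 0)
  | succ m ih =>
    intro f hf
    have e : P (m+1) f = fun x =>
        (1/(m+1).factorial : ℝ) * Aop (Dn x m f) x
          + (1/((m:ℝ)+1)) * (x * P m (D 1 f) x) := by
      funext x
      rw [P_succ]
      push_cast
      ring
    rw [e]
    refine Pord_add (Pord_smul _ ?_) (Pord_smul _ (Pord_xmul (ih (D 1 f) (hf.D 1))))
    exact (Pord_theta m f hf).2

/-- evaluation of the iterated difference of `P` at the diagonal -/
lemma Dn_P_eval (m : ℕ) (f : ℝ → ℝ) (hf : Cl m f) (x : ℝ) :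
    Dn x m (P m f) 0 = (m.factorial : ℝ) * P m f x := by
  rw [Dn_expansion m (P m f) x 0]
  have e : ∀ i ∈ Finset.range (m+1),
      ((-1:ℝ))^(m+i) * (m.choose i : ℝ) * P m f (0 + (i:ℝ)*x)
        = (((-1:ℝ))^(m+i) * (m.choose i : ℝ) * ((i:ℝ))^m) * P m f x := by
    intro i _
    rw [zero_add, P_hom m f hf i x]
    ring
  rw [Finset.sum_congr rfl e, ← Finset.sum_mul, alt_sum_pow m]
-- Part 8: junk-integral continuity lemmas, peel and swap identities

/-- statement of the main reduction theorem at level `k` -/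
def Tstat (k : ℕ) : Prop :=
  ∀ f : ℝ → ℝ, Cl (k+1) f → Cl k (fun x => f x - P (k+1) f x)

lemma Kcont_base {w : ℝ → ℝ} (hw : Continuous w) (j : ℕ) (t : ℝ) :
    Continuous (fun x => ∫ s in (0:ℝ)..t, Dn x j w s) := by
  set W : ℝ → ℝ := fun y => ∫ s in (0:ℝ)..y, w s with hWdef
  have hW : Continuous W := continuous_primitive (fun a b => hw.intervalIntegrable a b) 0
  have key : ∀ x : ℝ, (∫ s in (0:ℝ)..t, Dn x j w s)
      = ∑ i ∈ Finset.range (j+1),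
          ((-1:ℝ))^(j+i) * (j.choose i : ℝ) * (W (t + i*x) - W ((i:ℝ)*x)) := by
    intro x
    have e1 : (∫ s in (0:ℝ)..t, Dn x j w s)
        = ∫ s in (0:ℝ)..t, ∑ i ∈ Finset.range (j+1),
            ((-1:ℝ))^(j+i) * (j.choose i : ℝ) * w (s + i*x) := by
      congr 1
      funext s
      exact Dn_expansion j w x s
    rw [e1, intervalIntegral.integral_finset_sum (fun i _ => by
      apply Continuous.intervalIntegrable
      exact continuous_const.mul (hw.comp (continuous_add_right _)))]
    refine Finset.sum_congr rfl fun i _ => ?_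
    rw [intervalIntegral.integral_const_mul]
    congr 1
    have e2 : (∫ s in (0:ℝ)..t, w (s + (i:ℝ)*x)) = ∫ s in ((i:ℝ)*x)..(t + (i:ℝ)*x), w s := by
      have := integral_comp_add_right (a := (0:ℝ)) (b := t) w ((i:ℝ)*x)
      simpa using this
    have e3 : (∫ s in ((i:ℝ)*x)..(t + (i:ℝ)*x), w s) = W (t + (i:ℝ)*x) - W ((i:ℝ)*x) := by
      have h7 := integral_add_adjacent_intervals
        (hw.intervalIntegrable (μ := MeasureTheory.volume) 0 ((i:ℝ)*x))
        (hw.intervalIntegrable (μ := MeasureTheory.volume) ((i:ℝ)*x) (t + (i:ℝ)*x))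
      simp only [hWdef]
      linarith
    rw [e2, e3]
  have : (fun x => ∫ s in (0:ℝ)..t, Dn x j w s)
      = fun x => ∑ i ∈ Finset.range (j+1),
          ((-1:ℝ))^(j+i) * (j.choose i : ℝ) * (W (t + i*x) - W ((i:ℝ)*x)) := funext key
  rw [this]
  apply continuous_finset_sum
  intro i _
  exact continuous_const.mul ((hW.comp (continuous_const.add
    (continuous_const.mul continuous_id))).sub (hW.comp (continuous_const.mul continuous_id)))

lemma Kcont_base' {w : ℝ → ℝ} (hw : Continuous w) (j : ℕ) :
    Continuous (fun x => ∫ s in (0:ℝ)..x, Dn x j w s) := by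
  set W : ℝ → ℝ := fun y => ∫ s in (0:ℝ)..y, w s with hWdef
  have hW : Continuous W := continuous_primitive (fun a b => hw.intervalIntegrable a b) 0
  have key : ∀ x : ℝ, (∫ s in (0:ℝ)..x, Dn x j w s)
      = ∑ i ∈ Finset.range (j+1),
          ((-1:ℝ))^(j+i) * (j.choose i : ℝ) * (W (x + i*x) - W ((i:ℝ)*x)) := by
    intro x
    have e1 : (∫ s in (0:ℝ)..x, Dn x j w s)
        = ∫ s in (0:ℝ)..x, ∑ i ∈ Finset.range (j+1),
            ((-1:ℝ))^(j+i) * (j.choose i : ℝ) * w (s + i*x) := by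
      congr 1
      funext s
      exact Dn_expansion j w x s
    rw [e1, intervalIntegral.integral_finset_sum (fun i _ => by
      apply Continuous.intervalIntegrable
      exact continuous_const.mul (hw.comp (continuous_add_right _)))]
    refine Finset.sum_congr rfl fun i _ => ?_
    rw [intervalIntegral.integral_const_mul]
    congr 1
    have e2 : (∫ s in (0:ℝ)..x, w (s + (i:ℝ)*x)) = ∫ s in ((i:ℝ)*x)..(x + (i:ℝ)*x), w s := by
      have := integral_comp_add_right (a := (0:ℝ)) (b := x) w ((i:ℝ)*x)
      simpa using this
    have e3 : (∫ s in ((i:ℝ)*x)..(x + (i:ℝ)*x), w s) = W (x + (i:ℝ)*x) - W ((i:ℝ)*x) := by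
      have h7 := integral_add_adjacent_intervals
        (hw.intervalIntegrable (μ := MeasureTheory.volume) 0 ((i:ℝ)*x))
        (hw.intervalIntegrable (μ := MeasureTheory.volume) ((i:ℝ)*x) (x + (i:ℝ)*x))
      simp only [hWdef]
      linarith
    rw [e2, e3]
  rw [funext key]
  apply continuous_finset_sum
  intro i _
  exact continuous_const.mul ((hW.comp (continuous_id.add
    (continuous_const.mul continuous_id))).sub (hW.comp (continuous_const.mul continuous_id)))

/-- peeling step: replacing `w` by its `Cl`-reduction under the integral -/
lemma K_reduce {m : ℕ} {w : ℝ → ℝ} (hw : Cl (m+1) w) {j : ℕ} (hj : m + 2 ≤ j) (x : ℝ) :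
    Dn x j w = Dn x j (fun y => w y - P (m+1) w y) := by
  have hzero : Dn x j (P (m+1) w) = fun _ => 0 :=
    Pord_Dn_zero_ge (Pord_P (m+1) w hw) (by omega) x
  rw [Dn_sub]
  funext s
  rw [hzero]
  simp

/-- continuity of `x ↦ ∫_0^t (Δ_x^j w)(s) ds` for `w ∈ Cl m`, `j > m` -/
lemma Kcont : ∀ (m : ℕ),
    (∀ m' : ℕ, m' < m → Tstat m') →
    ∀ (w : ℝ → ℝ), Cl m w → ∀ (j : ℕ), m < j → ∀ t : ℝ,
      Continuous (fun x => ∫ s in (0:ℝ)..t, Dn x j w s) := by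
  intro m
  induction m with
  | zero => intro _ w hw j _ t; exact Kcont_base (Cl_zero.1 hw) j t
  | succ m ihm =>
    intro hT w hw j hj t
    have hw' : Cl m (fun y => w y - P (m+1) w y) := hT m (Nat.lt_succ_self m) w hw
    have e : (fun x => ∫ s in (0:ℝ)..t, Dn x j w s)
        = fun x => ∫ s in (0:ℝ)..t, Dn x j (fun y => w y - P (m+1) w y) s := by
      funext x
      rw [K_reduce hw (by omega) x]
    rw [e]
    exact ihm (fun m' hm' => hT m' (by omega)) _ hw' j (by omega) t

/-- variant with the integral up to `x` -/
lemma Kcont' : ∀ (m : ℕ),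
    (∀ m' : ℕ, m' < m → Tstat m') →
    ∀ (w : ℝ → ℝ), Cl m w → ∀ (j : ℕ), m < j →
      Continuous (fun x => ∫ s in (0:ℝ)..x, Dn x j w s) := by
  intro m
  induction m with
  | zero => intro _ w hw j _; exact Kcont_base' (Cl_zero.1 hw) j
  | succ m ihm =>
    intro hT w hw j hj
    have hw' : Cl m (fun y => w y - P (m+1) w y) := hT m (Nat.lt_succ_self m) w hw
    have e : (fun x => ∫ s in (0:ℝ)..x, Dn x j w s)
        = fun x => ∫ s in (0:ℝ)..x, Dn x j (fun y => w y - P (m+1) w y) s := by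
      funext x
      rw [K_reduce hw (by omega) x]
    rw [e]
    exact ihm (fun m' hm' => hT m' (by omega)) _ hw' j (by omega)

/-- peel the polynomial part out of the integral -/
lemma peel (m : ℕ) (v : ℝ → ℝ) (hv : Cl m v) (x T : ℝ) :
    (∫ s in (0:ℝ)..T, Dn x m v s)
      = (∫ s in (0:ℝ)..T, Dn x m (fun y => v y - P m v y) s)
        + T * ((m.factorial : ℝ) * P m v x) := by
  have hconst : ∀ s, Dn x m (P m v) s = (m.factorial : ℝ) * P m v x := by
    intro s
    rw [Pord_Dn_base_const (Pord_P m v hv) x s, Dn_P_eval m v hv x]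
  have hpt : ∀ s, Dn x m v s
      = Dn x m (fun y => v y - P m v y) s + (m.factorial : ℝ) * P m v x := by
    intro s
    rw [Dn_sub]
    have := hconst s
    simp only [this]
    ring
  have e1 : (∫ s in (0:ℝ)..T, Dn x m v s)
      = ∫ s in (0:ℝ)..T, (Dn x m (fun y => v y - P m v y) s + (m.factorial : ℝ) * P m v x) := by
    congr 1
    funext s
    exact hpt s
  rw [e1]
  have hint : IntervalIntegrable (fun s => Dn x m (fun y => v y - P m v y) s) volume 0 T := by
    apply Continuous.intervalIntegrable
    exact Cl_Dn_continuous (Cl_sub hv (Pord_to_Cl (Pord_P m v hv))) (le_refl m) x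
  rw [integral_add hint intervalIntegrable_const]
  rw [intervalIntegral.integral_const, smul_eq_mul]
  ring

/-- the swap identity -/
lemma swap_identity (k : ℕ) (f : ℝ → ℝ) (x t : ℝ) :
    Aop (Dn x (k+1) f) t - Aop (Dn x k (D t f)) x
      = (∫ s in (0:ℝ)..x, Dn x k (D t (D 1 f)) s) - ∫ s in (0:ℝ)..t, Dn x (k+1) (D 1 f) s := by
  unfold Aop Bop Cop
  have hB : D t (Dn x (k+1) f) = D x (Dn x k (D t f)) := by
    have e1 : D t (Dn x (k+1) f) = Dn x (k+1) (D t f) := (Dn_comm_D x t (k+1) f).symm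
    rw [e1]
    rfl
  have hC1 : D 1 (Dn x k (D t f)) = Dn x k (D t (D 1 f)) := by
    have e1 : Dn x k (D 1 (D t f)) = D 1 (Dn x k (D t f)) := Dn_comm_D x 1 k (D t f)
    rw [← e1, D_comm]
  have hC2 : D 1 (Dn x (k+1) f) = Dn x (k+1) (D 1 f) := (Dn_comm_D x 1 (k+1) f).symm
  rw [hB, hC1, hC2]
  ring
-- Part 9: the main induction

lemma P_one (f : ℝ → ℝ) (x : ℝ) : P 1 f x = Aop f x := by
  rw [P_succ]
  have e1 : Dn x 0 f = f := rfl
  have e2 : P 0 (D 1 f) x = 0 := rfl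
  rw [e1, e2]
  norm_num [Nat.factorial]

lemma T_zero : Tstat 0 := by
  intro f hf
  refine Cl_zero.2 ?_
  have e : (fun x => f x - P 1 f x) = fun x => f x - Aop f x := by
    funext x; rw [P_one]
  rw [e]
  exact Aop_remainder_continuous (Good_of_Cl1 hf)

lemma S_step (k : ℕ) (ihT : ∀ j, j ≤ k → Tstat j)
    (ihS : ∀ j, j < k → ∀ f : ℝ → ℝ, Cl (j+2) f → ∀ t : ℝ,
      Cl j (fun x => D t (P (j+2) f) x - P (j+1) (D t f) x)) :
    ∀ f : ℝ → ℝ, Cl (k+2) f → ∀ t : ℝ,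
      Cl k (fun x => D t (P (k+2) f) x - P (k+1) (D t f) x) := by
  intro f hf t
  have hu : Cl (k+1) (D 1 f) := hf.D 1
  have hDtf : Cl (k+1) (D t f) := hf.D t
  have hDtu : Cl k (D t (D 1 f)) := hu.D t
  -- the lower-order mismatch component j4
  obtain ⟨j4, hj4eq, hxj4, hj4Cl⟩ :
      ∃ j4 : ℝ → ℝ, (∀ x, D t (P (k+1) (D 1 f)) x - P k (D t (D 1 f)) x = j4 x)
        ∧ Cl k (fun x => x * j4 x) ∧ Cl k j4 := by
    match k, hu, hDtu, ihS with
    | 0, hu, hDtu, _ =>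
      have hGu : Good (D 1 f) := Good_of_Cl1 hu
      refine ⟨fun _ => Aop (D 1 f) t, ?_, ?_, ?_⟩
      · intro x
        have e0 : P 0 (D t (D 1 f)) x = 0 := rfl
        have e3 : D t (P 1 (D 1 f)) x = P 1 (D 1 f) (x+t) - P 1 (D 1 f) x := rfl
        rw [e3, e0, P_one, P_one, Aop_add_arg hGu x t]
        ring
      · exact Cl_zero.2 (continuous_id.mul continuous_const)
      · exact Cl_const 0 _
    | (s+1), hu, hDtu, ihS =>
      have hj := ihS s (Nat.lt_succ_self s) (D 1 f) hu t
      exact ⟨_, fun x => rfl, Cl_xmul hj, Cl_mono hj⟩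
  -- integrability/Goodness side conditions
  have hGoodc : ∀ x : ℝ, ∀ c ∈ Finset.range (k+1+1), Good (Dn x (k+1-c) (Dn t c f)) := by
    intro x c hc
    apply Good_Dn
    have e : c + ((k+1-c)+1) = k+2 := by
      have : c ≤ k+1 := Nat.lt_succ_iff.1 (Finset.mem_range.1 hc)
      omega
    exact Cl_Dn t (by rw [e]; exact hf)
  -- the key pointwise identity
  have key : ∀ x : ℝ,
      D t (P (k+1+1) f) x - P (k+1) (D t f) x
        = (1/((k+1+1).factorial : ℝ)) *
            (∫ s in (0:ℝ)..x, Dn x k (fun y => D t (D 1 f) y - P k (D t (D 1 f)) y) s)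
          - (1/((k+1+1).factorial : ℝ)) *
            (∫ s in (0:ℝ)..t, Dn x (k+1) (fun y => D 1 f y - P (k+1) (D 1 f) y) s)
          + (1/((k+1+1).factorial : ℝ)) *
            (∑ c ∈ Finset.range k, (((k+1).choose (c+1+1) : ℕ) : ℝ)
              * (Aop (Dn x (k+1-(c+1+1)) (Dn t (c+1+1) f)) x
                  + Aop (Dn x (k+1-(c+1+1)) (Dn t (c+1+1) f)) t))
          + (1/((k+1+1).factorial : ℝ)) * ((k:ℝ)+1) * Aop (Dn x k (D t f)) t
          + (t/((k:ℝ)+2)) * P k (D t (D 1 f)) x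
          + ((x+t)/((k:ℝ)+2)) * j4 x := by
    intro x
    have hfact2 : ((k+1+1).factorial : ℝ) = ((k:ℝ)+2) * ((k+1).factorial : ℝ) := by
      rw [Nat.factorial_succ]; push_cast; ring
    have hfact1 : ((k+1).factorial : ℝ) = ((k:ℝ)+1) * (k.factorial : ℝ) := by
      rw [Nat.factorial_succ]; push_cast; ring
    have hfne : (k.factorial : ℝ) ≠ 0 := Nat.cast_ne_zero.2 (Nat.factorial_ne_zero k)
    have hk1 : ((k:ℝ)+1) ≠ 0 := by positivity
    have hk2 : ((k:ℝ)+2) ≠ 0 := by positivity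
    have h2 : P (k+1+1) f (x+t)
        = (1/((k+1+1).factorial : ℝ)) * Aop (Dn (x+t) (k+1) f) (x+t)
          + ((x+t)/((k:ℝ)+2)) * P (k+1) (D 1 f) (x+t) := by
      rw [P_succ]; push_cast; ring
    have h6 : P (k+1+1) f x
        = (1/((k+1+1).factorial : ℝ)) * Aop (Dn x (k+1) f) x
          + (x/((k:ℝ)+2)) * P (k+1) (D 1 f) x := by
      rw [P_succ]; push_cast; ring
    have h7 : P (k+1) (D t f) x
        = (1/((k+1).factorial : ℝ)) * Aop (Dn x k (D t f)) x
          + (x/((k:ℝ)+1)) * P k (D t (D 1 f)) x := by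
      rw [P_succ]
      have e : D 1 (D t f) = D t (D 1 f) := D_comm 1 t f
      rw [e]
      all_goals (push_cast; ring)
    have h3 : Aop (Dn (x+t) (k+1) f) (x+t)
        = ∑ c ∈ Finset.range (k+1+1), (((k+1).choose c : ℕ) : ℝ)
            * (Aop (Dn x (k+1-c) (Dn t c f)) x + Aop (Dn x (k+1-c) (Dn t c f)) t) := by
      rw [Aop_binom (k+1) f hf x t (x+t)]
      exact Finset.sum_congr rfl fun c hc => by rw [Aop_add_arg (hGoodc x c hc) x t]
    have h4 : ∑ c ∈ Finset.range (k+1+1), (((k+1).choose c : ℕ) : ℝ)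
          * (Aop (Dn x (k+1-c) (Dn t c f)) x + Aop (Dn x (k+1-c) (Dn t c f)) t)
        = (Aop (Dn x (k+1) f) x + Aop (Dn x (k+1) f) t)
          + ((k:ℝ)+1) * (Aop (Dn x k (D t f)) x + Aop (Dn x k (D t f)) t)
          + ∑ c ∈ Finset.range k, (((k+1).choose (c+1+1) : ℕ) : ℝ)
              * (Aop (Dn x (k+1-(c+1+1)) (Dn t (c+1+1) f)) x
                  + Aop (Dn x (k+1-(c+1+1)) (Dn t (c+1+1) f)) t) := by
      rw [Finset.sum_range_succ' (fun c => (((k+1).choose c : ℕ) : ℝ)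
            * (Aop (Dn x (k+1-c) (Dn t c f)) x + Aop (Dn x (k+1-c) (Dn t c f)) t)) (k+1)]
      rw [Finset.sum_range_succ' (fun c => (((k+1).choose (c+1) : ℕ) : ℝ)
            * (Aop (Dn x (k+1-(c+1)) (Dn t (c+1) f)) x + Aop (Dn x (k+1-(c+1)) (Dn t (c+1) f)) t)) k]
      have hF0 : (((k+1).choose 0 : ℕ) : ℝ)
            * (Aop (Dn x (k+1-0) (Dn t 0 f)) x + Aop (Dn x (k+1-0) (Dn t 0 f)) t)
          = Aop (Dn x (k+1) f) x + Aop (Dn x (k+1) f) t := by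
        show (((k+1).choose 0 : ℕ) : ℝ) * (Aop (Dn x (k+1-0) f) x + Aop (Dn x (k+1-0) f) t) = _
        rw [Nat.choose_zero_right, Nat.sub_zero]
        push_cast; ring
      have hF1 : (((k+1).choose (0+1) : ℕ) : ℝ)
            * (Aop (Dn x (k+1-(0+1)) (Dn t (0+1) f)) x + Aop (Dn x (k+1-(0+1)) (Dn t (0+1) f)) t)
          = ((k:ℝ)+1) * (Aop (Dn x k (D t f)) x + Aop (Dn x k (D t f)) t) := by
        have e1 : k+1-(0+1) = k := by omega
        have e2 : Dn t (0+1) f = D t f := rfl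
        rw [e1, e2, Nat.choose_one_right]
        push_cast; ring
      rw [hF0, hF1]
      ring
    have h5 : P (k+1) (D 1 f) (x+t)
        = P (k+1) (D 1 f) x + (P k (D t (D 1 f)) x + j4 x) := by
      have e : D t (P (k+1) (D 1 f)) x = P (k+1) (D 1 f) (x+t) - P (k+1) (D 1 f) x := rfl
      have h := hj4eq x
      rw [e] at h
      linarith
    have h8 : Aop (Dn x (k+1) f) t - Aop (Dn x k (D t f)) x
        = (∫ s in (0:ℝ)..x, Dn x k (D t (D 1 f)) s)
          - ∫ s in (0:ℝ)..t, Dn x (k+1) (D 1 f) s := swap_identity k f x t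
    have h9 : (∫ s in (0:ℝ)..x, Dn x k (D t (D 1 f)) s)
        = (∫ s in (0:ℝ)..x, Dn x k (fun y => D t (D 1 f) y - P k (D t (D 1 f)) y) s)
          + x * ((k.factorial : ℝ) * P k (D t (D 1 f)) x) := peel k (D t (D 1 f)) hDtu x x
    have h10 : (∫ s in (0:ℝ)..t, Dn x (k+1) (D 1 f) s)
        = (∫ s in (0:ℝ)..t, Dn x (k+1) (fun y => D 1 f y - P (k+1) (D 1 f) y) s)
          + t * (((k+1).factorial : ℝ) * P (k+1) (D 1 f) x) := peel (k+1) (D 1 f) hu x t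
    have hA2 : Aop (Dn x (k+1) f) t
        = Aop (Dn x k (D t f)) x
          + ((∫ s in (0:ℝ)..x, Dn x k (fun y => D t (D 1 f) y - P k (D t (D 1 f)) y) s)
              + x * ((k.factorial : ℝ) * P k (D t (D 1 f)) x))
          - ((∫ s in (0:ℝ)..t, Dn x (k+1) (fun y => D 1 f y - P (k+1) (D 1 f) y) s)
              + t * (((k+1).factorial : ℝ) * P (k+1) (D 1 f) x)) := by
      rw [← h9, ← h10]
      linarith
    have hD : D t (P (k+1+1) f) x = P (k+1+1) f (x+t) - P (k+1+1) f x := rfl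
    rw [hD, h2, h6, h7, h3, h4, h5, hA2, hfact2, hfact1]
    field_simp
    ring
  -- the Cl-class of the right-hand side
  have hCI1 : Continuous (fun x =>
      ∫ s in (0:ℝ)..x, Dn x k (fun y => D t (D 1 f) y - P k (D t (D 1 f)) y) s) := by
    match k, hDtu, ihT with
    | 0, hDtu, _ =>
      apply Kcont_base'
      exact Cl_zero.1 (Cl_sub hDtu (Pord_to_Cl (Pord_P 0 _ hDtu)))
    | (s+1), hDtu, ihT =>
      apply Kcont' s (fun m' hm' => ihT m' (by omega)) _ _ (s+1) (Nat.lt_succ_self s)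
      exact ihT s (by omega) (D t (D 1 f)) hDtu
  have hCI2 : Continuous (fun x =>
      ∫ s in (0:ℝ)..t, Dn x (k+1) (fun y => D 1 f y - P (k+1) (D 1 f) y) s) := by
    apply Kcont k (fun m' hm' => ihT m' (by omega)) _ _ (k+1) (Nat.lt_succ_self k) t
    exact ihT k (le_refl k) (D 1 f) hu
  have hJ1 : Cl k (fun x => ∑ c ∈ Finset.range k, (((k+1).choose (c+1+1) : ℕ) : ℝ)
      * (Aop (Dn x (k+1-(c+1+1)) (Dn t (c+1+1) f)) x
          + Aop (Dn x (k+1-(c+1+1)) (Dn t (c+1+1) f)) t)) := by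
    refine Cl_sum _ _ fun c hc => ?_
    have hck : c < k := Finset.mem_range.1 hc
    have hsubCl : Cl ((k+1-(c+1+1))+1) (Dn t (c+1+1) f) := by
      have e : (c+1+1) + ((k+1-(c+1+1))+1) = k+2 := by omega
      exact Cl_Dn t (by rw [e]; exact hf)
    have hth := Pord_theta (k+1-(c+1+1)) (Dn t (c+1+1) f) hsubCl
    refine Cl_smul _ (Cl_add ?_ ?_)
    · exact Cl_of_le (by omega : (k+1-(c+1+1))+1 ≤ k) (Pord_to_Cl hth.2)
    · exact Cl_of_le (by omega : k+1-(c+1+1) ≤ k) (Pord_to_Cl (hth.1 t))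
  have hB2 : Cl k (fun x => Aop (Dn x k (D t f)) t) :=
    Pord_to_Cl ((Pord_theta k (D t f) hDtf).1 t)
  have hQ : Cl k (fun x => P k (D t (D 1 f)) x) := Pord_to_Cl (Pord_P k _ hDtu)
  -- assemble
  refine Cl_congr (f := fun x =>
      (1/((k+1+1).factorial : ℝ)) *
          (∫ s in (0:ℝ)..x, Dn x k (fun y => D t (D 1 f) y - P k (D t (D 1 f)) y) s)
        - (1/((k+1+1).factorial : ℝ)) *
          (∫ s in (0:ℝ)..t, Dn x (k+1) (fun y => D 1 f y - P (k+1) (D 1 f) y) s)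
        + (1/((k+1+1).factorial : ℝ)) *
          (∑ c ∈ Finset.range k, (((k+1).choose (c+1+1) : ℕ) : ℝ)
            * (Aop (Dn x (k+1-(c+1+1)) (Dn t (c+1+1) f)) x
                + Aop (Dn x (k+1-(c+1+1)) (Dn t (c+1+1) f)) t))
        + (1/((k+1+1).factorial : ℝ)) * ((k:ℝ)+1) * Aop (Dn x k (D t f)) t
        + (t/((k:ℝ)+2)) * P k (D t (D 1 f)) x
        + ((x+t)/((k:ℝ)+2)) * j4 x) (fun x => (key x).symm) ?_
  refine Cl_add (Cl_add (Cl_add (Cl_add (Cl_sub ?_ ?_) (Cl_smul _ hJ1))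
    (Cl_smul _ hB2)) (Cl_smul _ hQ)) ?_
  · exact Cl_smul _ (Cl_of_le (Nat.zero_le k) (Cl_zero.2 hCI1))
  · exact Cl_smul _ (Cl_of_le (Nat.zero_le k) (Cl_zero.2 hCI2))
  · -- ((x+t)/(k+2)) * j4 x
    have e : (fun x => ((x+t)/((k:ℝ)+2)) * j4 x)
        = fun x => (1/((k:ℝ)+2)) * (x * j4 x) + (t/((k:ℝ)+2)) * j4 x := by
      funext x; field_simp
    rw [e]
    exact Cl_add (Cl_smul _ hxj4) (Cl_smul _ hj4Cl)

lemma T_succ (k : ℕ) (hT : Tstat k)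
    (hS : ∀ f : ℝ → ℝ, Cl (k+2) f → ∀ t : ℝ,
      Cl k (fun x => D t (P (k+2) f) x - P (k+1) (D t f) x)) : Tstat (k+1) := by
  intro f hf
  refine Cl_succ.2 fun t => ?_
  have e : D t (fun x => f x - P (k+2) f x)
      = fun x => (D t f x - P (k+1) (D t f) x)
          - (D t (P (k+2) f) x - P (k+1) (D t f) x) := by
    funext x
    simp only [D]
    ring
  rw [e]
  exact Cl_sub (hT (D t f) (hf.D t)) (hS f hf t)

/-- all levels of the reduction theorem -/
lemma T_all : ∀ k, Tstat k := by
  have main : ∀ k, Tstat k ∧ (∀ f : ℝ → ℝ, Cl (k+2) f → ∀ t : ℝ,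
      Cl k (fun x => D t (P (k+2) f) x - P (k+1) (D t f) x)) := by
    intro k
    induction k using Nat.strong_induction_on with
    | _ k ih =>
      have hTk : Tstat k := by
        match k, ih with
        | 0, _ => exact T_zero
        | (s+1), ih => exact T_succ s (ih s (Nat.lt_succ_self s)).1 (ih s (Nat.lt_succ_self s)).2
      refine ⟨hTk, S_step k ?_ ?_⟩
      · intro j hj
        rcases Nat.lt_or_ge j k with h | h
        · exact (ih j h).1
        · have : j = k := le_antisymm hj h
          rw [this]; exact hTk
      · intro j hj
        exact (ih j hj).2
  exact fun k => (main k).1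
-- Part 10: final assembly

lemma exists_decomp : ∀ (k : ℕ) (f : ℝ → ℝ), Cl k f →
    ∃ g H : ℝ → ℝ, Continuous g ∧ Pord k H ∧ H 0 = 0 ∧ ∀ x, f x = g x + H x := by
  intro k
  induction k with
  | zero =>
    intro f hf
    exact ⟨f, fun _ => 0, Cl_zero.1 hf, Pord_zero_fun 0, rfl, fun x => by ring⟩
  | succ k ih =>
    intro f hf
    have hf' : Cl k (fun x => f x - P (k+1) f x) := T_all k f hf
    obtain ⟨g, H, hg, hH, hH0, heq⟩ := ih _ hf'
    refine ⟨g, fun x => H x + P (k+1) f x, hg, ?_, ?_, ?_⟩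
    · exact Pord_add (Pord_mono hH) (Pord_P (k+1) f hf)
    · show H 0 + P (k+1) f 0 = 0
      rw [hH0, P_eval_zero]
      ring
    · intro x
      have h1 := heq x
      show f x = g x + (H x + P (k+1) f x)
      linarith

lemma iterate_eq_Dn : ∀ (n : ℕ) (u : ℝ → ℝ) (h : ℝ),
    (fun u : ℝ → ℝ => fun y => u (y + h) - u y)^[n] u = Dn h n u := by
  intro n
  induction n with
  | zero => intro u h; rfl
  | succ n ih =>
    intro u h
    rw [Function.iterate_succ_apply', ih u h]
    rfl

end DB

/-- If all `k`-th order mixed differences `Δ_{h₁...h_k} f` of `f : ℝ → ℝ` are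
continuous, then `f = g + H` where `g` is continuous and `H` is a polynomial
function of order `k` (i.e. `Δ_h^{k+1} H ≡ 0`) with `H(0) = 0`. -/
theorem stmt8 (k : ℕ) (f : ℝ → ℝ)
    (hf : ∀ l : List ℝ, l.length = k →
      Continuous (l.foldl (fun g h => fun x => g (x + h) - g x) f)) :
    ∃ g H : ℝ → ℝ, Continuous g ∧
      (∀ x h : ℝ, (fun u : ℝ → ℝ => fun y => u (y + h) - u y)^[k + 1] H x = 0) ∧
      H 0 = 0 ∧ ∀ x, f x = g x + H x := by
  have hCl : DB.Cl k f := hf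
  obtain ⟨g, H, hg, hH, hH0, heq⟩ := DB.exists_decomp k f hCl
  refine ⟨g, H, hg, ?_, hH0, heq⟩
  intro x h
  have e : (fun u : ℝ → ℝ => fun y => u (y + h) - u y)^[k + 1] H = DB.Dn h (k+1) H :=
    DB.iterate_eq_Dn (k+1) H h
  rw [e, DB.Pord_Dn_zero hH h]
end
end

section
/- Let f : ℝ → ℝ be a polynomial function of order k. Then there exists a polynomial function H of order k + 1 such that H(0) = 0 and f(x) = H(x + 1) − H(x) for all x ∈ ℝ. -/
open Finset Polynomial Function

namespace Stmt9Aux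

/-- `f` is a polynomial function of order (degree bound) `n`. -/
def PolyOrd (n : ℕ) (f : ℝ → ℝ) : Prop := ∀ h : ℝ, (fwdDiff h)^[n + 1] f = 0

lemma fwdDiff_zero_fn (h : ℝ) : fwdDiff h (0 : ℝ → ℝ) = 0 := by
  funext x; simp [fwdDiff]

lemma fwdDiff_iter_zero_fn (h : ℝ) (m : ℕ) : (fwdDiff h)^[m] (0 : ℝ → ℝ) = 0 := by
  induction m with
  | zero => rfl
  | succ m ih => rw [iterate_succ_apply, fwdDiff_zero_fn, ih]

lemma fwdDiff_comm (a b : ℝ) (f : ℝ → ℝ) : fwdDiff a (fwdDiff b f) = fwdDiff b (fwdDiff a f) := by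
  funext x
  simp only [fwdDiff]
  rw [add_right_comm]
  ring

lemma fwdDiff_iter_comm (a b : ℝ) (f : ℝ → ℝ) (m : ℕ) :
    (fwdDiff a)^[m] (fwdDiff b f) = fwdDiff b ((fwdDiff a)^[m] f) := by
  induction m generalizing f with
  | zero => rfl
  | succ m ih => rw [iterate_succ_apply, fwdDiff_comm, ih, ← iterate_succ_apply]

lemma fwdDiff_iter_iter_comm (a b : ℝ) (f : ℝ → ℝ) (m l : ℕ) :
    (fwdDiff a)^[m] ((fwdDiff b)^[l] f) = (fwdDiff b)^[l] ((fwdDiff a)^[m] f) := by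
  induction l generalizing f with
  | zero => rfl
  | succ l ih => rw [iterate_succ_apply, ih, fwdDiff_iter_comm, ← iterate_succ_apply]

lemma PolyOrd.mono {n m : ℕ} {f : ℝ → ℝ} (hf : PolyOrd n f) (hnm : n ≤ m) : PolyOrd m f := by
  intro h
  have : m + 1 = (m - n) + (n + 1) := by omega
  rw [this, iterate_add_apply, hf h, fwdDiff_iter_zero_fn]

lemma PolyOrd.add {n : ℕ} {f g : ℝ → ℝ} (hf : PolyOrd n f) (hg : PolyOrd n g) :
    PolyOrd n (f + g) := by
  intro h
  rw [fwdDiff_iter_add, hf h, hg h, add_zero]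

lemma PolyOrd.const_mul {n : ℕ} {f : ℝ → ℝ} (hf : PolyOrd n f) (c : ℝ) :
    PolyOrd n (fun x => c * f x) := by
  intro h
  have : (fun x => c * f x) = c • f := by funext x; simp
  rw [this, fwdDiff_iter_const_smul, hf h, smul_zero]

lemma PolyOrd.const (c : ℝ) (n : ℕ) : PolyOrd n (fun _ => c) := by
  intro h
  rw [iterate_succ_apply, fwdDiff_const,
    show (fun _ : ℝ => (0:ℝ)) = (0:ℝ→ℝ) from rfl, fwdDiff_iter_zero_fn]

lemma PolyOrd.sub {n : ℕ} {f g : ℝ → ℝ} (hf : PolyOrd n f) (hg : PolyOrd n g) :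
    PolyOrd n (fun x => f x - g x) := by
  have := hf.add ((hg.const_mul (-1)))
  have e : (fun x => f x - g x) = f + fun x => (-1) * g x := by funext x; simp; ring
  rw [e]; exact hf.add (hg.const_mul (-1))

lemma PolyOrd.constant {f : ℝ → ℝ} (hf : PolyOrd 0 f) (x : ℝ) : f x = f 0 := by
  have := congrFun (hf x) 0
  simp only [iterate_one, fwdDiff, zero_add, Pi.zero_apply] at this
  linarith

/-- Truncated Gregory--Newton formula. -/
lemma newton {n : ℕ} {u : ℝ → ℝ} {s : ℝ} (hu : (fwdDiff s)^[n + 1] u = 0) (z : ℝ) (m : ℕ) :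
    u (z + m * s) = ∑ i ∈ range (n + 1), m.choose i • (fwdDiff s)^[i] u z := by
  have base := shift_eq_sum_fwdDiff_iter s u m z
  rw [nsmul_eq_mul] at base
  -- both sums equal the sum over range (max m n + 1)
  set M := max (m + 1) (n + 1) with hM
  have h1 : ∑ i ∈ range (m + 1), m.choose i • (fwdDiff s)^[i] u z
      = ∑ i ∈ range M, m.choose i • (fwdDiff s)^[i] u z := by
    apply Finset.sum_subset (Finset.range_subset_range.2 (le_max_left _ _))
    intro i hi hmi
    simp only [Finset.mem_range, not_lt] at hmi
    rw [Nat.choose_eq_zero_of_lt (by omega)]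
    simp
  have h2 : ∑ i ∈ range (n + 1), m.choose i • (fwdDiff s)^[i] u z
      = ∑ i ∈ range M, m.choose i • (fwdDiff s)^[i] u z := by
    apply Finset.sum_subset (Finset.range_subset_range.2 (le_max_right _ _))
    intro i hi hni
    simp only [Finset.mem_range, not_lt] at hni
    have hz : (fwdDiff s)^[i] u = 0 := by
      have hieq : i = (i - (n+1)) + (n+1) := by omega
      rw [hieq, iterate_add_apply, hu, fwdDiff_iter_zero_fn]
    rw [hz]
    simp
  rw [base, h1, ← h2]

/-- `J m e = Δ₁^m (x ↦ x^e) 0`, a nonneg constant, positive iff `m ≤ e` (for `m ≥ 1`). -/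
noncomputable def J (m e : ℕ) : ℝ := (fwdDiff (1:ℝ))^[m] (fun x => x ^ e) 0

lemma fwdDiff_pow (e : ℕ) :
    fwdDiff (1:ℝ) (fun x => x ^ e) = ∑ i ∈ range e, (e.choose i : ℝ) • fun x : ℝ => x ^ i := by
  funext x
  simp only [fwdDiff, Finset.sum_apply, Pi.smul_apply, smul_eq_mul]
  rw [add_pow]
  rw [Finset.sum_range_succ]
  simp [mul_comm]

lemma J_succ (m e : ℕ) : J (m+1) e = ∑ i ∈ range e, (e.choose i : ℝ) * J m i := by
  unfold J
  rw [iterate_succ_apply, fwdDiff_pow, fwdDiff_iter_finset_sum]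
  simp only [fwdDiff_iter_const_smul]
  simp

lemma J_zero (e : ℕ) : J 0 e = if e = 0 then 1 else 0 := by
  unfold J
  simp only [iterate_zero, id_eq]
  rcases Nat.eq_zero_or_pos e with h | h
  · simp [h]
  · rw [if_neg (by omega)]
    exact zero_pow (by omega)

lemma J_nonneg (m e : ℕ) : 0 ≤ J m e := by
  induction m generalizing e with
  | zero => rw [J_zero]; split <;> norm_num
  | succ m ih =>
    rw [J_succ]
    exact Finset.sum_nonneg fun i _ => mul_nonneg (by positivity) (ih i)

lemma J_pos (m e : ℕ) (h1 : 1 ≤ m) (h2 : m ≤ e) : 0 < J m e := by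
  induction m generalizing e with
  | zero => omega
  | succ m ih =>
    rw [J_succ]
    rcases Nat.eq_zero_or_pos m with hm | hm
    · subst hm
      apply Finset.sum_pos' (fun i _ => mul_nonneg (by positivity) (J_nonneg 0 i))
      refine ⟨0, Finset.mem_range.2 (by omega), ?_⟩
      rw [J_zero]
      simp
    · apply Finset.sum_pos' (fun i _ => mul_nonneg (by positivity) (J_nonneg m i))
      refine ⟨e - 1, Finset.mem_range.2 (by omega), ?_⟩
      apply mul_pos
      · have : 0 < e.choose (e-1) := Nat.choose_pos (by omega)
        positivity
      · exact ih (e-1) (by omega) (by omega)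

/-- Explicit formula for `J`. -/
lemma J_eq_sum (m e : ℕ) :
    J m e = ∑ t ∈ range (m+1), ((-1:ℝ)) ^ (m - t) * (m.choose t : ℝ) * (t:ℝ) ^ e := by
  unfold J
  rw [fwdDiff_iter_eq_sum_shift]
  apply Finset.sum_congr rfl
  intro t _
  rw [zsmul_eq_mul]
  simp only [zero_add, nsmul_eq_mul, mul_one]
  push_cast
  ring

/-- Binomial coefficient polynomial `X choose j`. -/
noncomputable def bin (j : ℕ) : ℝ[X] := C ((j.factorial : ℝ)⁻¹) * descPochhammer ℝ j

lemma bin_natDegree (j : ℕ) : (bin j).natDegree ≤ j := by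
  unfold bin
  refine le_trans (natDegree_mul_le) ?_
  simp [descPochhammer_natDegree]

lemma bin_coeff_self (j : ℕ) : (bin j).coeff j = (j.factorial : ℝ)⁻¹ := by
  unfold bin
  rw [coeff_C_mul]
  have h := monic_descPochhammer ℝ j
  have hd := descPochhammer_natDegree (R := ℝ) j
  have : (descPochhammer ℝ j).coeff j = 1 := by
    have := h.leadingCoeff
    rwa [leadingCoeff, hd] at this
  rw [this, mul_one]

lemma bin_coeff_eq_zero {j i : ℕ} (h : j < i) : (bin j).coeff i = 0 :=
  coeff_eq_zero_of_natDegree_lt (lt_of_le_of_lt (bin_natDegree j) h)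

lemma bin_eval_nat (j q : ℕ) : (bin j).eval (q : ℝ) = (q.choose j : ℝ) := by
  unfold bin
  rw [eval_mul, eval_C, descPochhammer_eval_eq_descFactorial,
    Nat.descFactorial_eq_factorial_mul_choose]
  push_cast
  rw [← mul_assoc, inv_mul_cancel₀ (by positivity), one_mul]

/-- Coefficients of a composition with `C a * X`. -/
lemma coeff_comp_scale (u : ℝ[X]) (a : ℝ) (i : ℕ) :
    (u.comp (C a * X)).coeff i = u.coeff i * a ^ i := by
  induction u using Polynomial.induction_on' with
  | add p q hp hq => simp [add_comp, hp, hq, add_mul]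
  | monomial e c =>
    rw [monomial_comp, mul_pow, ← C_pow, ← mul_assoc, ← C_mul, coeff_C_mul, coeff_X_pow,
      coeff_monomial]
    by_cases h : i = e
    · subst h; simp
    · rw [if_neg h, if_neg (fun he => h he.symm)]
      simp

theorem keyM (n : ℕ) (f : ℝ → ℝ) (hf : ∀ s : ℝ, (fwdDiff s)^[n+1] f = 0)
    (h y x : ℝ) : (fwdDiff h)^[n] f (x + y) = (fwdDiff h)^[n] f x := by
  set V : ℝ → ℝ := (fwdDiff h)^[n] f with hV
  have hVord : ∀ s : ℝ, (fwdDiff s)^[n+1] V = 0 := by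
    intro s
    rw [hV, fwdDiff_iter_iter_comm, hf, fwdDiff_iter_zero_fn]
  set W : ℝ[X] := ∑ j ∈ range (n+1), C ((fwdDiff y)^[j] V x) * bin j with hW
  have hWeval : ∀ q : ℕ, W.eval (q:ℝ) = V (x + q * y) := by
    intro q
    rw [newton (hVord y) x q, hW, eval_finset_sum]
    apply Finset.sum_congr rfl
    intro j _
    rw [eval_mul, eval_C, bin_eval_nat, nsmul_eq_mul]
    ring
  have hWdeg : W.natDegree ≤ n := by
    apply natDegree_sum_le_of_forall_le
    intro j hj
    refine le_trans (natDegree_mul_le) ?_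
    simp only [natDegree_C, zero_add]
    exact le_trans (bin_natDegree j) (by exact Nat.lt_succ_iff.mp (mem_range.mp hj))
  set uP : ℕ → ℝ[X] :=
    fun q => ∑ i ∈ range (n+1), C ((fwdDiff h)^[i] f (x + q * y)) * bin i with huP
  have huPeval : ∀ q m : ℕ, (uP q).eval (m:ℝ) = f (x + m * h + q * y) := by
    intro q m
    have e1 : x + (m:ℝ) * h + (q:ℝ) * y = (x + q * y) + m * h := by ring
    rw [e1, newton (hf h) _ m, huP, eval_finset_sum]
    apply Finset.sum_congr rfl
    intro i _
    rw [eval_mul, eval_C, bin_eval_nat, nsmul_eq_mul]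
    ring
  have huPcoeff : ∀ q : ℕ, (uP q).coeff n = W.eval (q:ℝ) * ((n.factorial:ℝ))⁻¹ := by
    intro q
    rw [hWeval, huP]
    simp only
    rw [finset_sum_coeff, Finset.sum_range_succ,
      Finset.sum_eq_zero (fun i hi => by
        rw [coeff_C_mul, bin_coeff_eq_zero (mem_range.1 hi), mul_zero]),
      zero_add, coeff_C_mul, bin_coeff_self]
  have key1 : ∀ r : ℕ, ∑ t ∈ range (n+2),
      ((-1:ℝ))^(n+1-t) * ((n+1).choose t : ℝ) *
        (W.eval ((t*r : ℕ):ℝ) * ((n.factorial:ℝ))⁻¹ * (t:ℝ)^n) = 0 := by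
    intro r
    set g : ℝ[X] := ∑ t ∈ range (n+2),
      (((-1:ℝ))^(n+1-t) * ((n+1).choose t : ℝ)) • ((uP (t*r)).comp (C (t:ℝ) * X)) with hg
    have hgeval : ∀ p : ℕ, g.eval (p:ℝ) = 0 := by
      intro p
      have hs := congrFun (hf ((p:ℝ) * h + (r:ℝ) * y)) x
      rw [fwdDiff_iter_eq_sum_shift, Pi.zero_apply] at hs
      rw [hg, eval_finset_sum, ← hs]
      apply Finset.sum_congr rfl
      intro t _
      rw [eval_smul, smul_eq_mul, eval_comp, eval_mul, eval_C, eval_X]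
      have e2 : (t:ℝ) * (p:ℝ) = ((t*p : ℕ):ℝ) := by push_cast; ring
      rw [e2, huPeval]
      rw [zsmul_eq_mul]
      have e3 : x + t • ((p:ℝ) * h + (r:ℝ) * y) = x + (t*p : ℕ) * h + (t*r : ℕ) * y := by
        rw [nsmul_eq_mul]; push_cast; ring
      rw [e3]
      push_cast
      ring
    have hg0 : g = 0 := by
      apply Polynomial.eq_zero_of_infinite_isRoot
      exact Set.infinite_of_injective_forall_mem (f := fun p : ℕ => (p:ℝ))
        Nat.cast_injective (fun p => hgeval p)
    have hc := congrArg (fun q : ℝ[X] => q.coeff n) hg0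
    simp only [coeff_zero] at hc
    rw [hg, finset_sum_coeff] at hc
    rw [← hc]
    apply Finset.sum_congr rfl
    intro t _
    rw [coeff_smul, coeff_comp_scale, huPcoeff, smul_eq_mul]
    try ring
  -- second stage : the polynomial G in r
  set G : ℝ[X] := ∑ t ∈ range (n+2),
      (((-1:ℝ))^(n+1-t) * ((n+1).choose t : ℝ) * ((n.factorial:ℝ))⁻¹ * (t:ℝ)^n) •
        (W.comp (C (t:ℝ) * X)) with hG
  have hGeval : ∀ r : ℕ, G.eval (r:ℝ) = 0 := by
    intro r
    rw [hG, eval_finset_sum, ← key1 r]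
    apply Finset.sum_congr rfl
    intro t _
    rw [eval_smul, smul_eq_mul, eval_comp, eval_mul, eval_C, eval_X]
    have e2 : (t:ℝ) * (r:ℝ) = ((t*r : ℕ):ℝ) := by push_cast; ring
    rw [e2]
    ring
  have hG0 : G = 0 := by
    apply Polynomial.eq_zero_of_infinite_isRoot
    exact Set.infinite_of_injective_forall_mem (f := fun p : ℕ => (p:ℝ))
      Nat.cast_injective (fun p => hGeval p)
  have hWcoeff : ∀ j, 1 ≤ j → W.coeff j = 0 := by
    intro j hj
    rcases le_or_gt j n with hjn | hjn
    · have hc := congrArg (fun q : ℝ[X] => q.coeff j) hG0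
      simp only [coeff_zero] at hc
      rw [hG, finset_sum_coeff] at hc
      have hc2 : ∑ t ∈ range (n+2),
          ((-1:ℝ))^(n+1-t) * ((n+1).choose t : ℝ) * (t:ℝ)^(n+j)
            * (((n.factorial:ℝ))⁻¹ * W.coeff j) = 0 := by
        rw [← hc]
        apply Finset.sum_congr rfl
        intro t _
        rw [coeff_smul, coeff_comp_scale, smul_eq_mul, pow_add]
        ring
      rw [← Finset.sum_mul, ← J_eq_sum] at hc2
      have hJ : 0 < J (n+1) (n+j) := J_pos _ _ (by omega) (by omega)
      have hfac : ((n.factorial:ℝ))⁻¹ ≠ 0 := by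
        have := Nat.factorial_pos n
        positivity
      rcases mul_eq_zero.1 hc2 with h1 | h2
      · exact absurd h1 (ne_of_gt hJ)
      · rcases mul_eq_zero.1 h2 with h3 | h4
        · exact absurd h3 hfac
        · exact h4
    · exact coeff_eq_zero_of_natDegree_lt (lt_of_le_of_lt hWdeg hjn)
  have hWC : W = C (W.coeff 0) := by
    apply Polynomial.ext
    intro i
    rcases Nat.eq_zero_or_pos i with hi | hi
    · subst hi; simp
    · rw [hWcoeff i hi, coeff_C, if_neg (by omega)]
  have h1 : V (x + y) = W.eval ((1:ℕ):ℝ) := by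
    rw [hWeval 1]; norm_num
  have h0 : V x = W.eval ((0:ℕ):ℝ) := by
    rw [hWeval 0]; norm_num
  rw [h1, h0, hWC]
  simp

lemma fwdDiff_iter_id_mul (u : ℝ → ℝ) (s : ℝ) (m : ℕ) :
    ∀ x, (fwdDiff s)^[m+1] (fun z => z * u z) x
      = x * (fwdDiff s)^[m+1] u x + ((m:ℝ)+1) * s * (fwdDiff s)^[m] u (x + s) := by
  induction m with
  | zero =>
    intro x
    have h1 : ∀ v : ℝ → ℝ, (fwdDiff s)^[0+1] v = fwdDiff s v := fun _ => rfl
    rw [h1, h1]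
    simp only [iterate_zero, id_eq, fwdDiff, Nat.cast_zero]
    ring
  | succ m ih =>
    intro x
    have h1 : (fwdDiff s)^[m+2] (fun z => z * u z) x
        = (fwdDiff s)^[m+1] (fun z => z * u z) (x+s)
          - (fwdDiff s)^[m+1] (fun z => z * u z) x := by
      rw [iterate_succ_apply']; rfl
    have h2 : (fwdDiff s)^[m+2] u x = (fwdDiff s)^[m+1] u (x+s) - (fwdDiff s)^[m+1] u x := by
      rw [iterate_succ_apply']; rfl
    have h3 : (fwdDiff s)^[m+1] u (x+s)
        = (fwdDiff s)^[m] u (x+s+s) - (fwdDiff s)^[m] u (x+s) := by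
      rw [iterate_succ_apply']; rfl
    rw [h1, ih, ih, h2]
    push_cast
    rw [h3]
    ring

lemma PolyOrd.id_mul {j : ℕ} {u : ℝ → ℝ} (hu : PolyOrd j u) :
    PolyOrd (j+1) (fun x => x * u x) := by
  intro s
  funext x
  rw [Pi.zero_apply, fwdDiff_iter_id_mul]
  have h1 : (fwdDiff s)^[j+2] u = 0 := by
    rw [show j + 2 = 1 + (j+1) by omega, iterate_add_apply, hu, fwdDiff_iter_zero_fn]
  rw [h1, congrFun (hu s) (x+s)]
  simp

lemma PolyOrd.poly_mul : ∀ (d : ℕ) (p : ℝ[X]), p.natDegree ≤ d → ∀ {j : ℕ} {u : ℝ → ℝ},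
    PolyOrd j u → PolyOrd (d + j) (fun x => p.eval x * u x) := by
  intro d
  induction d with
  | zero =>
    intro p hp j u hu
    have hpc : p = C (p.coeff 0) := eq_C_of_natDegree_le_zero hp
    rw [hpc]
    simpa [eval_C] using hu.const_mul (p.coeff 0)
  | succ d ih =>
    intro p hp j u hu
    have h1 : PolyOrd (d + j + 1) (fun x => x * (p.divX.eval x * u x)) :=
      (ih p.divX (by rw [natDegree_divX_eq_natDegree_tsub_one]; omega) hu).id_mul
    have h2 : PolyOrd (d + j + 1) (fun x => p.coeff 0 * u x) :=
      (hu.const_mul _).mono (by omega)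
    have e : (fun x => p.eval x * u x)
        = (fun x => x * (p.divX.eval x * u x)) + fun x => p.coeff 0 * u x := by
      funext x
      have hd : p.eval x = x * p.divX.eval x + p.coeff 0 := by
        conv_lhs => rw [← divX_mul_X_add p]
        simp
        ring
      simp [hd]
      ring
    rw [show d + 1 + j = d + j + 1 by omega, e]
    exact h1.add h2

lemma PolyOrd.fwdDiff_one {j : ℕ} {u : ℝ → ℝ} (hu : PolyOrd (j+1) u) :
    PolyOrd j (fwdDiff 1 u) := by
  intro s
  funext x
  rw [Pi.zero_apply, fwdDiff_iter_comm]
  show (fwdDiff s)^[j+1] u (x + 1) - (fwdDiff s)^[j+1] u x = 0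
  rw [keyM (j+1) u hu s 1 x]
  ring

lemma poly_antidiff : ∀ (d : ℕ) (p : ℝ[X]), p.natDegree ≤ d →
    ∃ Q : ℝ[X], Q.natDegree ≤ d + 1 ∧ ∀ x : ℝ, Q.eval (x+1) - Q.eval x = p.eval x := by
  intro d
  induction d with
  | zero =>
    intro p hp
    refine ⟨C (p.coeff 0) * X, le_trans (natDegree_mul_le) (by simp), fun x => ?_⟩
    conv_rhs => rw [eq_C_of_natDegree_le_zero hp]
    simp
    ring
  | succ d ih =>
    intro p hp
    set a := p.coeff (d+1) with ha
    set B : ℝ[X] := C (a / (d+2)) * X^(d+2) with hB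
    set r : ℝ[X] := p - (B.comp (X + C 1) - B) with hr
    have hBcomp : B.comp (X + C 1) = C (a / (d+2)) * (X + C 1)^(d+2) := by
      rw [hB, mul_comp, C_comp, pow_comp, X_comp]
    have hrd : r.natDegree ≤ d := by
      apply natDegree_le_iff_coeff_eq_zero.mpr
      intro e he
      have hcomp : (B.comp (X + C 1)).coeff e = (a / (d+2)) * ((d+2).choose e : ℝ) := by
        rw [hBcomp, coeff_C_mul, coeff_X_add_C_pow]
        simp
      have hBc : B.coeff e = if e = d + 2 then a / (d+2) else 0 := by
        rw [hB, coeff_C_mul, coeff_X_pow]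
        split <;> simp_all
      rw [hr, coeff_sub, coeff_sub, hcomp, hBc]
      rcases Nat.lt_or_ge e (d+2) with he2 | he2
      · -- e = d + 1
        have hed : e = d + 1 := by omega
        subst hed
        rw [if_neg (by omega), ha]
        rw [Nat.choose_succ_self_right]
        have : ((d+2 : ℕ) : ℝ) ≠ 0 := by positivity
        field_simp
        push_cast
        ring
      · rcases Nat.eq_or_lt_of_le he2 with he3 | he3
        · -- e = d + 2
          rw [if_pos he3.symm]
          have : p.coeff e = 0 := coeff_eq_zero_of_natDegree_lt (by omega)
          rw [this, ← he3]
          rw [Nat.choose_self]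
          push_cast
          ring
        · rw [if_neg (by omega)]
          have h0 : p.coeff e = 0 := coeff_eq_zero_of_natDegree_lt (by omega)
          have h1 : (d+2).choose e = 0 := Nat.choose_eq_zero_of_lt (by omega)
          rw [h0, h1]
          push_cast
          ring
    obtain ⟨Q', hQ'd, hQ'⟩ := ih r hrd
    refine ⟨B + Q', ?_, fun x => ?_⟩
    · refine le_trans (natDegree_add_le _ _) (max_le ?_ (by omega))
      refine le_trans (natDegree_mul_le) ?_
      simp [natDegree_X_pow]
    · have hBx : (B.comp (X + C 1)).eval x = B.eval (x + 1) := by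
        rw [eval_comp]
        simp
      have hrx : r.eval x = p.eval x - (B.eval (x+1) - B.eval x) := by
        rw [hr]
        simp [hBx]
      have := hQ' x
      simp only [eval_add]
      rw [hrx] at this
      linarith

lemma PolyOrd.poly (d : ℕ) (p : ℝ[X]) (hp : p.natDegree ≤ d) :
    PolyOrd d (fun x => p.eval x) := by
  have h1 : PolyOrd 0 (fun _ : ℝ => (1:ℝ)) := PolyOrd.const 1 0
  have := PolyOrd.poly_mul d p hp h1
  simpa using this



/-- Main construction: an antidifference of `p · u` of the expected order. -/
lemma step : ∀ (j : ℕ) (u : ℝ → ℝ), PolyOrd j u → ∀ (d : ℕ) (p : ℝ[X]), p.natDegree ≤ d →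
    ∃ H : ℝ → ℝ, PolyOrd (d + j + 1) H ∧ ∀ x, H (x+1) - H x = p.eval x * u x := by
  intro j
  induction j with
  | zero =>
    intro u hu d p hp
    obtain ⟨Q, hQd, hQ⟩ := poly_antidiff d (C (u 0) * p)
      (le_trans (natDegree_mul_le) (by simpa using hp))
    refine ⟨fun x => Q.eval x, (PolyOrd.poly (d+1) Q hQd).mono (by omega), fun x => ?_⟩
    rw [hQ x, eval_mul, eval_C, hu.constant x]
    ring
  | succ j ih =>
    intro u hu d p hp
    obtain ⟨P, hPd, hP⟩ := poly_antidiff d p hp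
    set Q : ℝ[X] := P.comp (X + C 1) with hQ
    have hQd : Q.natDegree ≤ d + 1 := by
      rw [hQ]
      refine le_trans (natDegree_comp_le) ?_
      have : (X + C (1:ℝ)).natDegree = 1 := natDegree_X_add_C 1
      rw [this, mul_one]
      exact hPd
    have hQev : ∀ x : ℝ, Q.eval x = P.eval (x + 1) := by
      intro x
      rw [hQ, eval_comp]
      simp
    obtain ⟨K, hKord, hK⟩ := ih (fwdDiff 1 u) hu.fwdDiff_one (d+1) Q hQd
    refine ⟨(fun x => P.eval x * u x) - K, ?_, fun x => ?_⟩
    · have h1 : PolyOrd (d + (j+1) + 1) (fun x => P.eval x * u x) := by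
        have := PolyOrd.poly_mul (d+1) P hPd hu
        exact this.mono (by omega)
      have h2 : PolyOrd (d + (j+1) + 1) K := hKord.mono (by omega)
      have e : ((fun x => P.eval x * u x) - K) = fun x => (P.eval x * u x) - K x := rfl
      rw [e]
      exact h1.sub h2
    · have hKx := hK x
      rw [hQev x] at hKx
      have hfd : fwdDiff 1 u x = u (x + 1) - u x := rfl
      rw [hfd] at hKx
      simp only [Pi.sub_apply]
      rw [← hP x]
      have expand : P.eval (x+1) * u (x+1) - K (x+1) - (P.eval x * u x - K x)
          = P.eval (x+1) * u (x+1) - P.eval x * u x - (K (x+1) - K x) := by ring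
      rw [expand, hKx]
      ring

end Stmt9Aux

open Stmt9Aux

/-- If `f : ℝ → ℝ` is a polynomial function of order `k` (i.e.
`Δ_h^{k+1} f ≡ 0`), then there is a polynomial function `H` of order `k + 1`
with `H(0) = 0` and `f(x) = H(x+1) - H(x)` for all `x`. -/
theorem stmt9 (k : ℕ) (f : ℝ → ℝ)
    (hf : ∀ x h : ℝ, (fun u : ℝ → ℝ => fun y => u (y + h) - u y)^[k + 1] f x = 0) :
    ∃ H : ℝ → ℝ,
      (∀ x h : ℝ, (fun u : ℝ → ℝ => fun y => u (y + h) - u y)^[k + 2] H x = 0) ∧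
      H 0 = 0 ∧ ∀ x, f x = H (x + 1) - H x := by
  have hf' : PolyOrd k f := by
    intro h
    funext x
    exact hf x h
  obtain ⟨H0, hH0ord, hH0⟩ := step k f hf' 0 1 (by simp)
  refine ⟨fun x => H0 x - H0 0, ?_, by ring, fun x => ?_⟩
  · intro x h
    have hord : PolyOrd (k+1) (fun x => H0 x - H0 0) := by
      have := hH0ord.sub (PolyOrd.const (H0 0) (0 + k + 1))
      simpa using this
    exact congrFun (hord h) x
  · have := hH0 x
    rw [eval_one, one_mul] at this
    rw [← this]
    ring
end

section
/- Let a^1, ..., a^k be nonzero vectors in ℝ^n such that some k − 1 of them are linearly independent, let s ≥ 0 be an integer, and suppose a function f ∈ C^s(ℝ^n) has the form f(x) = ∑_{i=1}^k f_i(a^i·x), where f_1, ..., f_k : ℝ → ℝ are arbitrarily behaved functions. Then there exist functions g_1, ..., g_k ∈ C^s(ℝ) such that f(x) = ∑_{i=1}^k g_i(a^i·x) for all x ∈ ℝ^n. -/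
open MeasureTheory intervalIntegral Set

private theorem contDiff_param_integral (m : ℕ) (Θ : ℝ → ℝ → ℝ)
    (h : ContDiff ℝ m (fun p : ℝ × ℝ => Θ p.1 p.2)) :
    ContDiff ℝ m (fun t => ∫ s in (0:ℝ)..1, Θ t s) := by
  induction m generalizing Θ with
  | zero =>
    rw [show ((0:ℕ) : WithTop ℕ∞) = 0 by norm_cast, contDiff_zero]
    exact continuous_parametric_intervalIntegral_of_continuous'
      (f := fun t s => Θ t s) (by exact h.continuous) 0 1
  | succ m ih =>
    set D : ℝ → ℝ → ℝ := fun t s => fderiv ℝ (fun p : ℝ × ℝ => Θ p.1 p.2) (t, s) (1, 0) with hD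
    have hcast : ((m+1:ℕ) : WithTop ℕ∞) = (m : WithTop ℕ∞) + 1 := by push_cast; rfl
    rw [hcast] at h
    have hDc : ContDiff ℝ m (fun p : ℝ × ℝ => D p.1 p.2) := by
      have := (h.fderiv_right (le_refl _)).clm_apply (contDiff_const (c := ((1:ℝ),(0:ℝ))))
      exact this
    have hdiff : ∀ (x : ℝ) (s : ℝ), HasDerivAt (fun t => Θ t s) (D x s) x := by
      intro x s
      have h1 : HasFDerivAt (fun p : ℝ × ℝ => Θ p.1 p.2)
          (fderiv ℝ (fun p : ℝ × ℝ => Θ p.1 p.2) (x, s)) (x, s) :=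
        (h.differentiable (by simp)).differentiableAt.hasFDerivAt
      have h2 : HasDerivAt (fun t : ℝ => (t, s)) ((1:ℝ), (0:ℝ)) x :=
        (hasDerivAt_id x).prodMk (hasDerivAt_const x s)
      exact h1.comp_hasDerivAt x h2
    have key : ∀ x₀ : ℝ, HasDerivAt (fun t => ∫ s in (0:ℝ)..1, Θ t s)
        (∫ s in (0:ℝ)..1, D x₀ s) x₀ := by
      intro x₀
      have hK : IsCompact (Icc (x₀-1) (x₀+1) ×ˢ uIcc (0:ℝ) 1) :=
        isCompact_Icc.prod isCompact_uIcc
      obtain ⟨C, hC⟩ := hK.exists_bound_of_continuousOn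
        (hDc.continuous.continuousOn (s := Icc (x₀-1) (x₀+1) ×ˢ uIcc (0:ℝ) 1))
      have := (intervalIntegral.hasDerivAt_integral_of_dominated_loc_of_deriv_le
        (F := fun x t => Θ x t) (F' := fun x t => D x t) (x₀ := x₀)
        (a := (0:ℝ)) (b := 1) (μ := volume) (bound := fun _ => C)
        (s := Metric.ball x₀ 1) (Metric.ball_mem_nhds x₀ one_pos)
        (Filter.Eventually.of_forall (fun x =>
          ((h.continuous.comp (Continuous.prodMk_right x)).aestronglyMeasurable)))
        ((h.continuous.comp (Continuous.prodMk_right x₀)).intervalIntegrable 0 1)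
        ((hDc.continuous.comp (Continuous.prodMk_right x₀)).aestronglyMeasurable)
        (Filter.Eventually.of_forall (fun t ht => fun x hx => by
          have : ((x, t) : ℝ × ℝ) ∈ Icc (x₀-1) (x₀+1) ×ˢ uIcc (0:ℝ) 1 := by
            constructor
            · have := Metric.mem_ball.mp hx
              rw [Real.dist_eq] at this
              constructor <;> [linarith [abs_lt.mp this]; linarith [abs_lt.mp this]]
            · exact uIoc_subset_uIcc ht
          exact hC _ this))
        (intervalIntegrable_const)
        (Filter.Eventually.of_forall (fun t ht => fun x hx => hdiff x t))).2
      exact this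
    have hderiv : deriv (fun t => ∫ s in (0:ℝ)..1, Θ t s)
        = fun t => ∫ s in (0:ℝ)..1, D t s := funext (fun x => (key x).deriv)
    rw [hcast, contDiff_succ_iff_deriv]
    refine ⟨fun x => (key x).differentiableAt, by simp, ?_⟩
    rw [hderiv]
    exact ih D hDc

private theorem contDiff_primitive (m : ℕ) (u : ℝ → ℝ) (h : ContDiff ℝ m u) :
    ContDiff ℝ m (fun t => ∫ s in (0:ℝ)..t, u s) := by
  have key : ∀ x : ℝ, HasDerivAt (fun t => ∫ s in (0:ℝ)..t, u s) (u x) x := fun x =>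
    (intervalIntegral.integral_hasStrictDerivAt_right
      (h.continuous.intervalIntegrable 0 x)
      (h.continuous.stronglyMeasurableAtFilter _ _)
      h.continuous.continuousAt).hasDerivAt
  have h1 : ContDiff ℝ ((m:WithTop ℕ∞) + 1) (fun t => ∫ s in (0:ℝ)..t, u s) := by
    rw [contDiff_succ_iff_deriv]
    refine ⟨fun x => (key x).differentiableAt, by simp, ?_⟩
    rw [funext (fun x => (key x).deriv)]
    exact h
  exact h1.of_le (by exact_mod_cast le_self_add)

private theorem phi_coboundary (Θ : ℝ → ℝ → ℝ) (G : ℝ → ℝ)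
    (hc : Continuous (fun p : ℝ × ℝ => Θ p.1 p.2))
    (hG : ∀ t r, Θ t r = G (t+r) - G t - G r + G 0) (t r : ℝ) :
    ((∫ s in (0:ℝ)..(t+r), Θ s 1) - ∫ s in (0:ℝ)..1, Θ (t+r) s)
      - ((∫ s in (0:ℝ)..t, Θ s 1) - ∫ s in (0:ℝ)..1, Θ t s)
      - ((∫ s in (0:ℝ)..r, Θ s 1) - ∫ s in (0:ℝ)..1, Θ r s)
      + ((∫ s in (0:ℝ)..(0:ℝ), Θ s 1) - ∫ s in (0:ℝ)..1, Θ 0 s) = Θ t r := by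
  have hslice : ∀ c : ℝ, Continuous (fun s => Θ c s) := fun c =>
    hc.comp (Continuous.prodMk_right c)
  have hslice' : ∀ c : ℝ, Continuous (fun s => Θ s c) := fun c =>
    hc.comp (continuous_id.prodMk continuous_const)
  have hint : ∀ (c a b : ℝ), IntervalIntegrable (fun s => Θ c s) volume a b :=
    fun c a b => (hslice c).intervalIntegrable a b
  have hint' : ∀ (c a b : ℝ), IntervalIntegrable (fun s => Θ s c) volume a b :=
    fun c a b => (hslice' c).intervalIntegrable a b
  set U : ℝ → ℝ := fun y => ∫ s in (0:ℝ)..y, Θ t s with hU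
  -- the zero terms
  have hz0 : (∫ s in (0:ℝ)..(0:ℝ), Θ s 1) = 0 := integral_same
  have hz1 : (∫ s in (0:ℝ)..1, Θ 0 s) = 0 := by
    have : ∀ s ∈ uIcc (0:ℝ) 1, Θ 0 s = (fun _ => (0:ℝ)) s := by
      intro s _; rw [hG]; ring_nf
    rw [intervalIntegral.integral_congr this]; simp
  -- Q part
  have hQ1 : (∫ s in (0:ℝ)..1, Θ (t+r) s) - (∫ s in (0:ℝ)..1, Θ t s)
      - (∫ s in (0:ℝ)..1, Θ r s) = (U (r+1) - U r) - Θ t r - U 1 := by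
    rw [← integral_sub (hint _ _ _) (hint _ _ _),
      ← integral_sub ((hint _ _ _).sub (hint _ _ _)) (hint _ _ _)]
    have e1 : ∀ s ∈ uIcc (0:ℝ) 1, Θ (t+r) s - Θ t s - Θ r s
        = (fun x => Θ t (x+r) - Θ t r - Θ t x) s := by
      intro s _; simp only [hG]; ring
    rw [intervalIntegral.integral_congr e1]
    have i1 : IntervalIntegrable (fun x => Θ t (x+r)) volume 0 1 :=
      ((hslice t).comp (continuous_id.add continuous_const)).intervalIntegrable _ _
    have i2 : IntervalIntegrable (fun _ : ℝ => Θ t r) volume 0 1 :=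
      intervalIntegrable_const
    rw [integral_sub (i1.sub i2) (hint t 0 1), integral_sub i1 i2,
      intervalIntegral.integral_comp_add_right (fun s => Θ t s) r,
      intervalIntegral.integral_const]
    have hadj : U r + (∫ s in r..(r+1), Θ t s) = U (r+1) :=
      integral_add_adjacent_intervals (hint t 0 r) (hint t r (r+1))
    have : (∫ s in (0+r)..(1+r), Θ t s) = ∫ s in r..(r+1), Θ t s := by
      congr 1 <;> ring
    rw [this]
    simp only [smul_eq_mul]
    linarith [hadj]
  -- P part
  have hP1 : (∫ s in (0:ℝ)..(t+r), Θ s 1) - (∫ s in (0:ℝ)..t, Θ s 1)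
      - (∫ s in (0:ℝ)..r, Θ s 1) = (U (r+1) - U 1) - U r := by
    have hadj3 : (∫ s in (0:ℝ)..t, Θ s 1) + (∫ s in t..(t+r), Θ s 1)
        = ∫ s in (0:ℝ)..(t+r), Θ s 1 :=
      integral_add_adjacent_intervals (hint' 1 0 t) (hint' 1 t (t+r))
    have e2 : (∫ s in t..(t+r), Θ s 1) = ∫ x in (0:ℝ)..r, Θ (x+t) 1 := by
      rw [intervalIntegral.integral_comp_add_right (fun s => Θ s 1) t]
      congr 1 <;> ring
    have i3 : IntervalIntegrable (fun x => Θ (x+t) 1) volume 0 r :=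
      ((hslice' 1).comp (continuous_id.add continuous_const)).intervalIntegrable _ _
    have i4 : IntervalIntegrable (fun x => Θ t (x+1)) volume 0 r :=
      ((hslice t).comp (continuous_id.add continuous_const)).intervalIntegrable _ _
    have e3 : (∫ x in (0:ℝ)..r, Θ (x+t) 1) - (∫ x in (0:ℝ)..r, Θ x 1)
        = (∫ x in (0:ℝ)..r, Θ t (x+1)) - ∫ x in (0:ℝ)..r, Θ t x := by
      rw [← integral_sub i3 (hint' 1 0 r), ← integral_sub i4 (hint t 0 r)]
      apply intervalIntegral.integral_congr
      intro s _; simp only [hG]; ring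
    have e4 : (∫ x in (0:ℝ)..r, Θ t (x+1)) = U (r+1) - U 1 := by
      rw [intervalIntegral.integral_comp_add_right (fun s => Θ t s) 1]
      have hadj4 : U 1 + (∫ s in (1:ℝ)..(r+1), Θ t s) = U (r+1) :=
        integral_add_adjacent_intervals (hint t 0 1) (hint t 1 (r+1))
      have : (∫ s in (0+1:ℝ)..(r+1), Θ t s) = ∫ s in (1:ℝ)..(r+1), Θ t s := by
        congr 1; ring
      rw [this]; linarith
    have : U r = ∫ x in (0:ℝ)..r, Θ t x := rfl
    linarith [hadj3, e2, e3, e4]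
  have hQt : (∫ s in (0:ℝ)..1, Θ t s) = U 1 := rfl
  linarith [hQ1, hP1, hz0, hz1]
open Set

private theorem exists_dual {n : ℕ} {ι : Type} [Fintype ι] [DecidableEq ι]
    (v : ι → Fin n → ℝ) (hv : LinearIndependent ℝ v) :
    ∃ b : ι → Fin n → ℝ, ∀ i j, (∑ t, v j t * b i t) = if j = i then 1 else 0 := by
  classical
  set B := Module.Basis.span hv
  have h := fun i => LinearMap.exists_extend (B.coord i)
  choose ℓ hℓ using h
  refine ⟨fun i t => ℓ i (fun u => if t = u then 1 else 0), fun i j => ?_⟩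
  have hmem : v j ∈ Submodule.span ℝ (range v) := Submodule.subset_span (mem_range_self j)
  have h1 : ℓ i (v j) = ∑ t, v j t * ℓ i (fun u => if t = u then 1 else 0) := by
    rw [LinearMap.pi_apply_eq_sum_univ (ℓ i) (v j)]
    simp [smul_eq_mul]
  rw [← h1]
  have h2 : ℓ i (v j) = B.coord i (⟨v j, hmem⟩ : Submodule.span ℝ (range v)) := by
    have := congrArg (fun (m : Submodule.span ℝ (range v) →ₗ[ℝ] ℝ) =>
      m (⟨v j, hmem⟩ : Submodule.span ℝ (range v))) (hℓ i)
    simpa using this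
  have h3 : (⟨v j, hmem⟩ : Submodule.span ℝ (range v)) = B j := by
    apply Subtype.ext
    exact congrArg Subtype.val (Module.Basis.span_apply hv j).symm
  rw [h2, h3, Module.Basis.coord_apply, Module.Basis.repr_self, Finsupp.single_apply]

private theorem additive_finsum {A : ℝ → ℝ} (hA : ∀ t r, A (t+r) = A t + A r - A 0)
    {α : Type} (S : Finset α) (z : α → ℝ) :
    A (∑ i ∈ S, z i) = (∑ i ∈ S, (A (z i) - A 0)) + A 0 := by
  classical
  induction S using Finset.induction with
  | empty => simp
  | insert _ _ hnotmem ih =>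
    rw [Finset.sum_insert hnotmem, hA, ih, Finset.sum_insert hnotmem]; ring

private theorem tensor_trick {n k : ℕ} (a : Fin k → Fin n → ℝ) (S : Finset (Fin k))
    (b : Fin k → Fin n → ℝ) (H : Fin k → ℝ → ℝ) (h : (Fin n → ℝ) → ℝ)
    (hdual : ∀ i ∈ S, ∀ j ∈ S, (∑ t, a j t * b i t) = if j = i then 1 else 0)
    (hrep : ∀ x, h x = ∑ i ∈ S, H i (∑ t, a i t * x t)) (x : Fin n → ℝ) :
    h x = (∑ i ∈ S, h ((∑ t, a i t * x t) • b i)) - (S.card - 1 : ℝ) * h 0 := by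
  classical
  set y : Fin k → ℝ := fun i => ∑ t, a i t * x t with hy
  set C : ℝ := ∑ j ∈ S, H j 0 with hC
  have h0 : h 0 = C := by rw [hrep 0]; apply Finset.sum_congr rfl; intro j _; simp
  have harg : ∀ i ∈ S, ∀ j ∈ S, (∑ t, a j t * ((y i) • b i) t)
      = if j = i then y i else 0 := by
    intro i hi j hj
    have : (∑ t, a j t * ((y i) • b i) t) = y i * ∑ t, a j t * b i t := by
      rw [Finset.mul_sum]
      apply Finset.sum_congr rfl; intro t _; simp [Pi.smul_apply, smul_eq_mul]; ring
    rw [this, hdual i hi j hj]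
    split <;> simp
  have hb : ∀ i ∈ S, h ((y i) • b i) = C + H i (y i) - H i 0 := by
    intro i hi
    rw [hrep]
    have : ∀ j ∈ S, H j (∑ t, a j t * ((y i) • b i) t)
        = H j 0 + (if j = i then H j (y i) - H j 0 else 0) := by
      intro j hj
      rw [harg i hi j hj, apply_ite (H j)]
      split <;> ring
    rw [Finset.sum_congr rfl this, Finset.sum_add_distrib,
      Finset.sum_ite_eq' S i (fun j => H j (y i) - H j 0)]
    simp only [hi, if_pos]
    ring
  have hsum : (∑ i ∈ S, h ((y i) • b i)) = S.card * C + h x - C := by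
    rw [Finset.sum_congr rfl hb, hrep x]
    simp only [Finset.sum_add_distrib, Finset.sum_sub_distrib, Finset.sum_const,
      nsmul_eq_mul]
    rfl
  rw [hsum, h0]
  ring

section Aux

private theorem contDiff_dot {n : ℕ} (m : WithTop ℕ∞) (v : Fin n → ℝ) :
    ContDiff ℝ m (fun x : Fin n → ℝ => ∑ t, v t * x t) := by
  apply ContDiff.sum
  intro t _
  exact contDiff_const.mul (contDiff_pi.mp contDiff_id t)

end Aux

/-- If `f ∈ Cˢ(ℝⁿ)` is a sum of arbitrarily behaved ridge functions with
nonzero directions `a¹,...,aᵏ`, some `k - 1` of which are linearly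
independent, then it is a sum of `Cˢ` ridge functions with the same
directions. -/
theorem stmt13 {n k : ℕ} (s : ℕ) (a : Fin k → Fin n → ℝ) (ha : ∀ i, a i ≠ 0)
    (hind : ∃ T : Finset (Fin k), T.card = k - 1 ∧
      LinearIndependent ℝ (fun i : {x : Fin k // x ∈ T} => a i.1))
    (f : (Fin n → ℝ) → ℝ) (hf : ContDiff ℝ (s : ℕ∞) f)
    (F : Fin k → ℝ → ℝ)
    (hrepr : ∀ x : Fin n → ℝ, f x = ∑ i, F i (∑ t, a i t * x t)) :
    ∃ g : Fin k → ℝ → ℝ, (∀ i, ContDiff ℝ (s : ℕ∞) (g i)) ∧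
      ∀ x : Fin n → ℝ, f x = ∑ i, g i (∑ t, a i t * x t) := by
  classical
  obtain ⟨T, hTcard, hTind⟩ := hind
  rcases Nat.eq_zero_or_pos k with hk0 | hkpos
  · subst hk0
    exact ⟨fun _ => 0, fun i => contDiff_const, fun x => by simpa using hrepr x⟩
  -- identify the element outside T
  have hcompl : Tᶜ.card = 1 := by
    have := Finset.card_compl T
    rw [hTcard, Fintype.card_fin] at this
    omega
  obtain ⟨j₀, hj₀⟩ := Finset.card_eq_one.mp hcompl
  have hj₀T : j₀ ∉ T := by
    have : j₀ ∈ Tᶜ := by rw [hj₀]; exact Finset.mem_singleton_self j₀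
    simpa using this
  have hmemT : ∀ j : Fin k, j ≠ j₀ → j ∈ T := by
    intro j hj
    by_contra hjT
    have : j ∈ Tᶜ := Finset.mem_compl.mpr hjT
    rw [hj₀, Finset.mem_singleton] at this
    exact hj this
  have hsum_split : ∀ (u : Fin k → ℝ), (∑ j, u j) = (∑ j ∈ T, u j) + u j₀ := by
    intro u
    rw [← Finset.sum_add_sum_compl T u, hj₀, Finset.sum_singleton]
  by_cases hspan : a j₀ ∈ Submodule.span ℝ (Set.range (fun i : {x : Fin k // x ∈ T} => a i.1))
  · -- dependent case : a j₀ = ∑ lam i • a i over T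
    rw [Submodule.mem_span_range_iff_exists_fun] at hspan
    obtain ⟨c, hc⟩ := hspan
    set lam : Fin k → ℝ := fun j => if h : j ∈ T then c ⟨j, h⟩ else 0 with hlamdef
    have hlam : ∀ t, a j₀ t = ∑ i ∈ T, lam i * a i t := by
      intro t
      have h1 : (∑ i : {x : Fin k // x ∈ T}, c i • a i.1) t = a j₀ t := by rw [hc]
      rw [← h1, Finset.sum_apply]
      rw [← Finset.sum_attach T (fun i => lam i * a i t)]
      apply Finset.sum_congr rfl
      intro i _
      simp [hlamdef, i.2]
    have hyj₀ : ∀ x : Fin n → ℝ, (∑ t, a j₀ t * x t)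
        = ∑ i ∈ T, lam i * (∑ t, a i t * x t) := by
      intro x
      calc (∑ t, a j₀ t * x t) = ∑ t, ∑ i ∈ T, lam i * a i t * x t := by
            apply Finset.sum_congr rfl; intro t _; rw [hlam t, Finset.sum_mul]
        _ = ∑ i ∈ T, ∑ t, lam i * a i t * x t := Finset.sum_comm
        _ = ∑ i ∈ T, lam i * (∑ t, a i t * x t) := by
            apply Finset.sum_congr rfl; intro i _; rw [Finset.mul_sum]
            apply Finset.sum_congr rfl; intro t _; ring
    obtain ⟨bT, hdualT⟩ := exists_dual (fun i : {x : Fin k // x ∈ T} => a i.1) hTind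
    set b : Fin k → Fin n → ℝ := fun j => if h : j ∈ T then bT ⟨j, h⟩ else 0 with hbdef
    have hdual' : ∀ i ∈ T, ∀ j ∈ T, (∑ t, a j t * b i t) = if j = i then 1 else 0 := by
      intro i hi j hj
      have := hdualT ⟨i, hi⟩ ⟨j, hj⟩
      have hb : b i = bT ⟨i, hi⟩ := by simp [hbdef, hi]
      rw [hb]
      rw [this]
      by_cases h : j = i
      · subst h; simp
      · rw [if_neg h, if_neg (fun hh => h (by simpa using congrArg Subtype.val hh))]
    -- dot products with b i for the dependent direction
    have hdotj₀ : ∀ i ∈ T, (∑ t, a j₀ t * b i t) = lam i := by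
      intro i hi
      calc (∑ t, a j₀ t * b i t) = ∑ t, ∑ l ∈ T, lam l * a l t * b i t := by
            apply Finset.sum_congr rfl; intro t _; rw [hlam t, Finset.sum_mul]
        _ = ∑ l ∈ T, ∑ t, lam l * a l t * b i t := Finset.sum_comm
        _ = ∑ l ∈ T, lam l * (∑ t, a l t * b i t) := by
            apply Finset.sum_congr rfl; intro l _; rw [Finset.mul_sum]
            apply Finset.sum_congr rfl; intro t _; ring
        _ = lam i := by
            rw [Finset.sum_congr rfl (fun l hl => by rw [hdual' i hi l hl])]
            simp [Finset.sum_ite_eq' T i, hi]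
    -- some lam is nonzero
    have hfn : ContDiff ℝ ((s:ℕ) : WithTop ℕ∞) f := by exact_mod_cast hf
    have hlamnz : ∃ i₁ ∈ T, lam i₁ ≠ 0 := by
      by_contra h
      push_neg at h
      apply ha j₀
      funext t
      rw [Pi.zero_apply, hlam t]
      apply Finset.sum_eq_zero
      intro i hi
      rw [h i hi]; ring
    by_cases htwo : ∃ p ∈ T, ∃ q ∈ T, p ≠ q ∧ lam p ≠ 0 ∧ lam q ≠ 0
    · -- hard case : two nonzero coefficients
      obtain ⟨p, hpT, q, hqT, hpq, hlp, hlq⟩ := htwo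
      have hpj₀ : p ≠ j₀ := fun h => hj₀T (h ▸ hpT)
      have hqj₀ : q ≠ j₀ := fun h => hj₀T (h ▸ hqT)
      set G : ℝ → ℝ := F j₀ with hGdef
      set Bp : Fin n → ℝ := (lam p)⁻¹ • b p with hBpdef
      set Bq : Fin n → ℝ := (lam q)⁻¹ • b q with hBqdef
      have hdBp : ∀ j : Fin k, (∑ t, a j t * Bp t)
          = if j = j₀ then 1 else (if j = p then (lam p)⁻¹ else 0) := by
        intro j
        have e : (∑ t, a j t * Bp t) = (lam p)⁻¹ * ∑ t, a j t * b p t := by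
          rw [Finset.mul_sum]
          apply Finset.sum_congr rfl
          intro t _
          simp only [hBpdef, Pi.smul_apply, smul_eq_mul]; ring
        by_cases hj : j = j₀
        · subst hj
          rw [if_pos rfl, e, hdotj₀ p hpT, inv_mul_cancel₀ hlp]
        · rw [if_neg hj, e, hdual' p hpT j (hmemT j hj)]
          by_cases hjp : j = p
          · rw [if_pos hjp, if_pos hjp, mul_one]
          · rw [if_neg hjp, if_neg hjp, mul_zero]
      have hdBq : ∀ j : Fin k, (∑ t, a j t * Bq t)
          = if j = j₀ then 1 else (if j = q then (lam q)⁻¹ else 0) := by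
        intro j
        have e : (∑ t, a j t * Bq t) = (lam q)⁻¹ * ∑ t, a j t * b q t := by
          rw [Finset.mul_sum]
          apply Finset.sum_congr rfl
          intro t _
          simp only [hBqdef, Pi.smul_apply, smul_eq_mul]; ring
        by_cases hj : j = j₀
        · subst hj
          rw [if_pos rfl, e, hdotj₀ q hqT, inv_mul_cancel₀ hlq]
        · rw [if_neg hj, e, hdual' q hqT j (hmemT j hj)]
          by_cases hjq : j = q
          · rw [if_pos hjq, if_pos hjq, mul_one]
          · rw [if_neg hjq, if_neg hjq, mul_zero]
      have hfB : ∀ z w : ℝ, f (z • Bp + w • Bq)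
          = ∑ j, F j (z * (∑ t, a j t * Bp t) + w * (∑ t, a j t * Bq t)) := by
        intro z w
        rw [hrepr]
        apply Finset.sum_congr rfl
        intro j _
        congr 1
        have e : ∀ t, a j t * (z • Bp + w • Bq) t
            = z * (a j t * Bp t) + w * (a j t * Bq t) := by
          intro t
          simp only [Pi.add_apply, Pi.smul_apply, smul_eq_mul]; ring
        rw [Finset.sum_congr rfl (fun t _ => e t), Finset.sum_add_distrib,
          ← Finset.mul_sum, ← Finset.mul_sum]
      set Θ : ℝ → ℝ → ℝ := fun t r =>
        f (t • Bp + r • Bq) - f (t • Bp + (0:ℝ) • Bq)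
          - f ((0:ℝ) • Bp + r • Bq) + f ((0:ℝ) • Bp + (0:ℝ) • Bq) with hΘdef
      have hΘG : ∀ t r, Θ t r = G (t+r) - G t - G r + G 0 := by
        intro t r
        rw [hΘdef]
        simp only
        rw [hfB t r, hfB t 0, hfB 0 r, hfB 0 0,
          ← Finset.sum_sub_distrib, ← Finset.sum_sub_distrib, ← Finset.sum_add_distrib]
        rw [Finset.sum_eq_single_of_mem j₀ (Finset.mem_univ j₀)]
        · rw [hdBp j₀, hdBq j₀, if_pos rfl, if_pos rfl, ← hGdef]
          norm_num
        · intro j _ hjne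
          rw [hdBp j, hdBq j, if_neg hjne, if_neg hjne]
          by_cases hjp : j = p
          · have hjq : j ≠ q := fun h => hpq (hjp ▸ h ▸ rfl)
            rw [if_pos hjp, if_neg hjq]
            norm_num
          · by_cases hjq : j = q
            · rw [if_neg hjp, if_pos hjq]
              norm_num
            · rw [if_neg hjp, if_neg hjq]
              norm_num
      have hΘs : ContDiff ℝ ((s:ℕ) : WithTop ℕ∞) (fun pr : ℝ × ℝ => Θ pr.1 pr.2) := by
        simp only [hΘdef]
        exact (((hfn.comp ((contDiff_fst.smul contDiff_const).add
            (contDiff_snd.smul contDiff_const))).sub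
          (hfn.comp ((contDiff_fst.smul contDiff_const).add contDiff_const))).sub
          (hfn.comp (contDiff_const.add (contDiff_snd.smul contDiff_const)))).add
          contDiff_const
      have hΘc : Continuous (fun pr : ℝ × ℝ => Θ pr.1 pr.2) := hΘs.continuous
      set φ : ℝ → ℝ := fun x => (∫ u in (0:ℝ)..x, Θ u 1) - ∫ u in (0:ℝ)..1, Θ x u
        with hφdef
      have hφs : ContDiff ℝ ((s:ℕ) : WithTop ℕ∞) φ := by
        rw [hφdef]
        exact (contDiff_primitive s (fun u => Θ u 1)
            (hΘs.comp (contDiff_id.prodMk contDiff_const))).sub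
          (contDiff_param_integral s Θ hΘs)
      have hco : ∀ t r : ℝ, φ (t+r) - φ t - φ r + φ 0 = Θ t r := fun t r =>
        phi_coboundary Θ G hΘc hΘG t r
      set A : ℝ → ℝ := fun z => G z - φ z with hAdef
      have hAadd : ∀ t r, A (t+r) = A t + A r - A 0 := by
        intro t r
        have h1 := hco t r
        have h2 := hΘG t r
        simp only [hAdef]
        linarith [h1, h2]
      set H : Fin k → ℝ → ℝ := fun i z =>
        F i z + (A (lam i * z) - A 0) + (if i = p then A 0 else 0) with hHdef
      set ft : (Fin n → ℝ) → ℝ := fun x => f x - φ (∑ t, a j₀ t * x t) with hftdef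
      have hfts : ContDiff ℝ ((s:ℕ) : WithTop ℕ∞) ft := by
        rw [hftdef]
        exact hfn.sub (hφs.comp (contDiff_dot _ (a j₀)))
      have hrepT : ∀ x : Fin n → ℝ, ft x = ∑ i ∈ T, H i (∑ t, a i t * x t) := by
        intro x
        have hyx := hyj₀ x
        have hAsum := additive_finsum hAadd T (fun i => lam i * (∑ t, a i t * x t))
        have h1 : F j₀ (∑ t, a j₀ t * x t) - φ (∑ t, a j₀ t * x t)
            = A (∑ t, a j₀ t * x t) := by
          simp only [hAdef, hGdef]
        simp only [hftdef, hHdef]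
        rw [hrepr x, hsum_split (fun i => F i (∑ t, a i t * x t))]
        have h2 : (∑ i ∈ T, (F i (∑ t, a i t * x t)
            + (A (lam i * (∑ t, a i t * x t)) - A 0)
            + (if i = p then A 0 else 0)))
            = (∑ i ∈ T, F i (∑ t, a i t * x t))
              + (∑ i ∈ T, (A (lam i * (∑ t, a i t * x t)) - A 0)) + A 0 := by
          rw [Finset.sum_add_distrib, Finset.sum_add_distrib,
            Finset.sum_ite_eq' T p (fun _ => A 0), if_pos hpT]
        rw [h2]
        have h3 : A (∑ t, a j₀ t * x t)
            = (∑ i ∈ T, (A (lam i * (∑ t, a i t * x t)) - A 0)) + A 0 := by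
          rw [hyx]; exact hAsum
        linarith [h1, h3]
      have htt := fun x => tensor_trick a T b H ft hdual' hrepT x
      refine ⟨fun j z => (if j ∈ T then ft (z • b j) else φ z)
          - (if j = j₀ then ((T.card:ℝ) - 1) * ft 0 else 0), fun j => ?_, fun x => ?_⟩
      · have : ContDiff ℝ ((s:ℕ) : WithTop ℕ∞)
            (fun z : ℝ => (if j ∈ T then ft (z • b j) else φ z)
              - (if j = j₀ then ((T.card:ℝ) - 1) * ft 0 else 0)) := by
          apply ContDiff.sub _ contDiff_const
          by_cases h : j ∈ T
          · simp only [if_pos h]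
            exact hfts.comp (contDiff_id.smul contDiff_const)
          · simp only [if_neg h]
            exact hφs
        exact_mod_cast this
      · rw [hsum_split (fun j => (if j ∈ T then ft ((∑ t, a j t * x t) • b j)
          else φ (∑ t, a j t * x t))
          - (if j = j₀ then ((T.card:ℝ) - 1) * ft 0 else 0))]
        have e1 : ∀ j ∈ T, (if j ∈ T then ft ((∑ t, a j t * x t) • b j)
            else φ (∑ t, a j t * x t))
            - (if j = j₀ then ((T.card:ℝ) - 1) * ft 0 else 0)
            = ft ((∑ t, a j t * x t) • b j) := by
          intro j hj
          rw [if_pos hj, if_neg (fun hh : j = j₀ => hj₀T (hh ▸ hj)), sub_zero]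
        rw [Finset.sum_congr rfl e1, if_neg hj₀T, if_pos rfl]
        have h4 := htt x
        have h5 : ft x = f x - φ (∑ t, a j₀ t * x t) := by rw [hftdef]
        linarith [h4, h5]
    · -- easy case : only one nonzero coefficient
      obtain ⟨i₁, hi₁T, hi₁⟩ := hlamnz
      have hall : ∀ i ∈ T, i ≠ i₁ → lam i = 0 := by
        intro i hi hne
        by_contra hnz
        exact htwo ⟨i, hi, i₁, hi₁T, hne, hnz, hi₁⟩
      set H : Fin k → ℝ → ℝ := fun i z =>
        F i z + (if i = i₁ then F j₀ (lam i₁ * z) else 0) with hHdef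
      have hyj₀' : ∀ x : Fin n → ℝ, (∑ t, a j₀ t * x t)
          = lam i₁ * (∑ t, a i₁ t * x t) := by
        intro x
        rw [hyj₀ x]
        exact Finset.sum_eq_single_of_mem i₁ hi₁T
          (fun i hi hne => by rw [hall i hi hne]; ring)
      have hrepT : ∀ x : Fin n → ℝ, f x = ∑ i ∈ T, H i (∑ t, a i t * x t) := by
        intro x
        rw [hrepr x, hsum_split (fun i => F i (∑ t, a i t * x t))]
        simp only [hHdef]
        rw [Finset.sum_add_distrib,
          Finset.sum_ite_eq' T i₁ (fun i => F j₀ (lam i₁ * (∑ t, a i t * x t))),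
          if_pos hi₁T, ← hyj₀' x]
      have htt := fun x => tensor_trick a T b H f hdual' hrepT x
      refine ⟨fun j z => (if j ∈ T then f (z • b j) else 0)
          - (if j = j₀ then ((T.card:ℝ) - 1) * f 0 else 0), fun j => ?_, fun x => ?_⟩
      · have : ContDiff ℝ ((s:ℕ) : WithTop ℕ∞)
            (fun z : ℝ => (if j ∈ T then f (z • b j) else 0)
              - (if j = j₀ then ((T.card:ℝ) - 1) * f 0 else 0)) := by
          apply ContDiff.sub _ contDiff_const
          by_cases h : j ∈ T
          · simp only [if_pos h]
            exact hfn.comp (contDiff_id.smul contDiff_const)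
          · simp only [if_neg h]
            exact contDiff_const
        exact_mod_cast this
      · rw [hsum_split (fun j => (if j ∈ T then f ((∑ t, a j t * x t) • b j) else 0)
          - (if j = j₀ then ((T.card:ℝ) - 1) * f 0 else 0))]
        have e1 : ∀ j ∈ T, (if j ∈ T then f ((∑ t, a j t * x t) • b j) else 0)
            - (if j = j₀ then ((T.card:ℝ) - 1) * f 0 else 0)
            = f ((∑ t, a j t * x t) • b j) := by
          intro j hj
          rw [if_pos hj, if_neg (fun hh : j = j₀ => hj₀T (hh ▸ hj)), sub_zero]
        rw [Finset.sum_congr rfl e1, if_neg hj₀T, if_pos rfl]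
        have h4 := htt x
        linarith [h4]
  · -- independent case : full family is linearly independent
    have hoption : LinearIndependent ℝ
        (fun o : Option {x : Fin k // x ∈ T} =>
          Option.casesOn' o (a j₀) (fun i => a i.1)) :=
      LinearIndependent.option hTind hspan
    have hbij : Function.Bijective
        (fun o : Option {x : Fin k // x ∈ T} => Option.casesOn' o j₀ (fun i => i.1)) := by
      constructor
      · rintro (_ | i) (_ | j) h
        · rfl
        · exfalso
          simp only [Option.casesOn'_none, Option.casesOn'_some] at h
          exact hj₀T (by rw [h]; exact j.2)
        · exfalso
          simp only [Option.casesOn'_none, Option.casesOn'_some] at h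
          exact hj₀T (by rw [← h]; exact i.2)
        · simp only [Option.casesOn'_some] at h
          exact congrArg some (Subtype.ext h)
      · intro j
        by_cases hj : j = j₀
        · exact ⟨none, hj.symm⟩
        · exact ⟨some ⟨j, hmemT j hj⟩, rfl⟩
    set E := Equiv.ofBijective _ hbij
    have hfull : LinearIndependent ℝ a := by
      rw [← linearIndependent_equiv E]
      have : a ∘ E = (fun o : Option {x : Fin k // x ∈ T} =>
          Option.casesOn' o (a j₀) (fun i => a i.1)) := by
        funext o
        cases o <;> rfl
      rw [this]
      exact hoption
    obtain ⟨b, hdual⟩ := exists_dual a hfull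
    refine ⟨fun j z => f (z • b j) - (if j = j₀ then ((k:ℝ) - 1) * f 0 else 0),
      fun j => ?_, fun x => ?_⟩
    · exact (hf.comp (contDiff_id.smul contDiff_const)).sub contDiff_const
    · have hdual'' : ∀ i ∈ Finset.univ, ∀ j ∈ (Finset.univ : Finset (Fin k)),
          (∑ t, a j t * b i t) = if j = i then 1 else 0 := fun i _ j _ => hdual i j
      have hrepr' : ∀ x : Fin n → ℝ, f x = ∑ i ∈ Finset.univ, F i (∑ t, a i t * x t) :=
        hrepr
      have htt := tensor_trick a Finset.univ b F f hdual'' hrepr' x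
      rw [htt]
      have hcard : ((Finset.univ : Finset (Fin k)).card : ℝ) = (k : ℝ) := by
        rw [Finset.card_univ, Fintype.card_fin]
      rw [Finset.sum_sub_distrib, Finset.sum_ite_eq' Finset.univ j₀
        (fun _ => ((k:ℝ) - 1) * f 0)]
      simp only [Finset.mem_univ, if_pos, hcard]
      try ring
end

section
/- Let R = [a_1, b_1] × [a_2, b_2], let c ∈ (a_1, b_1], and set R_1 = [a_1, c] × [a_2, b_2]. Suppose f ∈ V_c(R). Then E(f, R) = L(f, R_1) = (1/4)(f(a_1, a_2) + f(c, b_2) − f(a_1, b_2) − f(c, a_2)). Moreover, the equation L(f, [a_1, c] × [a_2, y]) = (1/2) L(f, R_1) has at least one solution y_0 ∈ [a_2, b_2], and for any such y_0 the function φ_0(x) + ψ_0(y), with φ_0(x) = f(x, y_0) and ψ_0(y) = (1/2)(f(a_1, y) + f(c, y) − f(a_1, y_0) − f(c, y_0)), is a best approximating sum, i.e., max_{(x,y)∈R} |f(x, y) − φ_0(x) − ψ_0(y)| = E(f, R). -/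
/-- For `f` in the class `V_c(R)` on the rectangle `R = [a₁,b₁] × [a₂,b₂]`
with `c ∈ (a₁,b₁]` and `R₁ = [a₁,c] × [a₂,b₂]`: the error of best uniform
approximation by sums `φ(x) + ψ(y)` of univariate functions equals
`L(f,R₁) = (1/4)(f(a₁,a₂) + f(c,b₂) − f(a₁,b₂) − f(c,a₂))`; the equation
`L(f,[a₁,c]×[a₂,y]) = (1/2)L(f,R₁)` has a solution `y₀ ∈ [a₂,b₂]`; and for any
such `y₀` the sum `φ₀(x) + ψ₀(y)` with `φ₀(x) = f(x,y₀)`,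
`ψ₀(y) = (1/2)(f(a₁,y) + f(c,y) − f(a₁,y₀) − f(c,y₀))` is a best
approximating sum. -/
theorem stmt15 (a1 b1 a2 b2 c : ℝ) (ha2 : a2 < b2) (hc1 : a1 < c) (hc2 : c ≤ b1)
    (f : ℝ → ℝ → ℝ)
    (hfc : ContinuousOn (fun q : ℝ × ℝ => f q.1 q.2) (Set.Icc a1 b1 ×ˢ Set.Icc a2 b2))
    (hV1 : ∀ x1 x2 y1 y2 : ℝ, a1 ≤ x1 → x1 ≤ x2 → x2 ≤ c → a2 ≤ y1 → y1 ≤ y2 → y2 ≤ b2 →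
      0 ≤ (1 / 4) * (f x1 y1 + f x2 y2 - f x1 y2 - f x2 y1))
    (hV2 : ∀ x1 x2 y1 y2 : ℝ, c ≤ x1 → x1 ≤ x2 → x2 ≤ b1 → a2 ≤ y1 → y1 ≤ y2 → y2 ≤ b2 →
      (1 / 4) * (f x1 y1 + f x2 y2 - f x1 y2 - f x2 y1) ≤ 0)
    (hV3 : ∀ y1 y2 : ℝ, a2 ≤ y1 → y1 ≤ y2 → y2 ≤ b2 →
      0 ≤ (1 / 4) * (f a1 y1 + f b1 y2 - f a1 y2 - f b1 y1)) :
    (sInf {e : ℝ | ∃ φ ψ : ℝ → ℝ,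
        ContinuousOn φ (Set.Icc a1 b1) ∧ ContinuousOn ψ (Set.Icc a2 b2) ∧
        e = sSup ((fun q : ℝ × ℝ => |f q.1 q.2 - φ q.1 - ψ q.2|) ''
          (Set.Icc a1 b1 ×ˢ Set.Icc a2 b2))} =
      (1 / 4) * (f a1 a2 + f c b2 - f a1 b2 - f c a2)) ∧
    (∃ y0 ∈ Set.Icc a2 b2,
      (1 / 4) * (f a1 a2 + f c y0 - f a1 y0 - f c a2) =
        (1 / 2) * ((1 / 4) * (f a1 a2 + f c b2 - f a1 b2 - f c a2))) ∧
    (∀ y0 ∈ Set.Icc a2 b2,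
      (1 / 4) * (f a1 a2 + f c y0 - f a1 y0 - f c a2) =
        (1 / 2) * ((1 / 4) * (f a1 a2 + f c b2 - f a1 b2 - f c a2)) →
      sSup ((fun q : ℝ × ℝ =>
          |f q.1 q.2 - f q.1 y0 -
            (1 / 2) * (f a1 q.2 + f c q.2 - f a1 y0 - f c y0)|) ''
        (Set.Icc a1 b1 ×ˢ Set.Icc a2 b2)) =
      (1 / 4) * (f a1 a2 + f c b2 - f a1 b2 - f c a2)) := by
  set M : ℝ := (1 / 4) * (f a1 a2 + f c b2 - f a1 b2 - f c a2) with hM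
  have ha1b1 : a1 ≤ b1 := hc1.le.trans hc2
  have hM0 : 0 ≤ M := hV1 a1 c a2 b2 le_rfl hc1.le le_rfl le_rfl ha2.le le_rfl
  have ha1mem : a1 ∈ Set.Icc a1 b1 := ⟨le_rfl, ha1b1⟩
  have hcmem : c ∈ Set.Icc a1 b1 := ⟨hc1.le, hc2⟩
  -- continuity of slices
  have hcontx : ∀ y ∈ Set.Icc a2 b2, ContinuousOn (fun x => f x y) (Set.Icc a1 b1) := by
    intro y hy
    exact hfc.comp (continuousOn_id.prodMk continuousOn_const) (fun x hx => ⟨hx, hy⟩)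
  have hconty : ∀ x ∈ Set.Icc a1 b1, ContinuousOn (fun y => f x y) (Set.Icc a2 b2) := by
    intro x hx
    exact hfc.comp (continuousOn_const.prodMk continuousOn_id) (fun y hy => ⟨hx, hy⟩)
  -- KEY lemma: for any admissible y0, the sup equals M
  have key : ∀ y0 ∈ Set.Icc a2 b2,
      (1 / 4) * (f a1 a2 + f c y0 - f a1 y0 - f c a2) = (1 / 2) * M →
      sSup ((fun q : ℝ × ℝ =>
          |f q.1 q.2 - f q.1 y0 -
            (1 / 2) * (f a1 q.2 + f c q.2 - f a1 y0 - f c y0)|) ''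
        (Set.Icc a1 b1 ×ˢ Set.Icc a2 b2)) = M := by
    rintro y0 ⟨hy01, hy02⟩ hy0
    have hbound : ∀ x ∈ Set.Icc a1 b1, ∀ y ∈ Set.Icc a2 b2,
        |f x y - f x y0 - (1 / 2) * (f a1 y + f c y - f a1 y0 - f c y0)| ≤ M := by
      rintro x ⟨hx1, hx2⟩ y ⟨hy1, hy2⟩
      rw [abs_le]
      rcases le_total x c with hxc | hxc <;> rcases le_total y y0 with hyy | hyy
      · -- x ≤ c, y ≤ y0
        have h1 := hV1 a1 x y y0 le_rfl hx1 hxc hy1 hyy hy02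
        have h2 := hV1 x c y y0 hx1 hxc le_rfl hy1 hyy hy02
        have h3 := hV1 a1 c a2 y le_rfl hc1.le le_rfl le_rfl hy1 hy2
        constructor <;> linarith
      · -- x ≤ c, y0 ≤ y
        have h1 := hV1 a1 x y0 y le_rfl hx1 hxc hy01 hyy hy2
        have h2 := hV1 x c y0 y hx1 hxc le_rfl hy01 hyy hy2
        have h3 := hV1 a1 c y b2 le_rfl hc1.le le_rfl hy1 hy2 le_rfl
        constructor <;> linarith
      · -- c ≤ x, y ≤ y0
        have hA := hV2 x b1 y y0 hxc hx2 le_rfl hy1 hyy hy02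
        have hB := hV2 c x y y0 le_rfl hxc hx2 hy1 hyy hy02
        have hC := hV3 y y0 hy1 hyy hy02
        have hD := hV1 a1 c y y0 le_rfl hc1.le le_rfl hy1 hyy hy02
        have hE := hV1 a1 c a2 y le_rfl hc1.le le_rfl le_rfl hy1 hy2
        constructor <;> linarith
      · -- c ≤ x, y0 ≤ y
        have hA := hV2 x b1 y0 y hxc hx2 le_rfl hy01 hyy hy2
        have hB := hV2 c x y0 y le_rfl hxc hx2 hy01 hyy hy2
        have hC := hV3 y0 y hy01 hyy hy2
        have hD := hV1 a1 c y0 y le_rfl hc1.le le_rfl hy01 hyy hy2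
        have hE := hV1 a1 c y b2 le_rfl hc1.le le_rfl hy1 hy2 le_rfl
        constructor <;> linarith
    have hub : ∀ z ∈ (fun q : ℝ × ℝ =>
          |f q.1 q.2 - f q.1 y0 -
            (1 / 2) * (f a1 q.2 + f c q.2 - f a1 y0 - f c y0)|) ''
        (Set.Icc a1 b1 ×ˢ Set.Icc a2 b2), z ≤ M := by
      rintro z ⟨⟨x, y⟩, ⟨hx, hy⟩, rfl⟩
      exact hbound x hx y hy
    have hMval : |f a1 a2 - f a1 y0 - (1 / 2) * (f a1 a2 + f c a2 - f a1 y0 - f c y0)| = M := by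
      have h : f a1 a2 - f a1 y0 - (1 / 2) * (f a1 a2 + f c a2 - f a1 y0 - f c y0) = M := by
        linarith
      rw [h, abs_of_nonneg hM0]
    have hMmem : M ∈ (fun q : ℝ × ℝ =>
          |f q.1 q.2 - f q.1 y0 -
            (1 / 2) * (f a1 q.2 + f c q.2 - f a1 y0 - f c y0)|) ''
        (Set.Icc a1 b1 ×ˢ Set.Icc a2 b2) := by
      exact ⟨(a1, a2), ⟨ha1mem, ⟨le_rfl, ha2.le⟩⟩, hMval⟩
    exact le_antisymm (csSup_le ⟨M, hMmem⟩ hub) (le_csSup ⟨M, hub⟩ hMmem)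
  -- existence of y0 via IVT
  have hex : ∃ y0 ∈ Set.Icc a2 b2,
      (1 / 4) * (f a1 a2 + f c y0 - f a1 y0 - f c a2) = (1 / 2) * M := by
    set g : ℝ → ℝ := fun y => (1 / 4) * (f a1 a2 + f c y - f a1 y - f c a2) with hg
    have hgc : ContinuousOn g (Set.Icc a2 b2) := by
      have h1 := hconty a1 ha1mem
      have h2 := hconty c hcmem
      exact (continuousOn_const.mul
        (((continuousOn_const.add h2).sub h1).sub continuousOn_const))
    have hiv := intermediate_value_Icc ha2.le hgc
    have hga2 : g a2 = 0 := by simp [hg]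
    have hgb2 : g b2 = M := by simp [hg, hM]
    have : (1 / 2) * M ∈ Set.Icc (g a2) (g b2) := by
      rw [hga2, hgb2]; constructor <;> linarith
    obtain ⟨y0, hy0mem, hy0⟩ := hiv this
    exact ⟨y0, hy0mem, hy0⟩
  refine ⟨?_, hex, key⟩
  obtain ⟨y0, hy0mem, hy0⟩ := hex
  -- the candidate set
  apply le_antisymm
  · -- sInf ≤ M : exhibit φ0, ψ0
    apply csInf_le
    · refine ⟨0, ?_⟩
      rintro e ⟨φ, ψ, hφ, hψ, rfl⟩
      exact Real.sSup_nonneg (by rintro z ⟨q, hq, rfl⟩; positivity)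
    · refine ⟨fun x => f x y0, fun y => (1 / 2) * (f a1 y + f c y - f a1 y0 - f c y0),
        hcontx y0 hy0mem, ?_, ?_⟩
      · exact continuousOn_const.mul
          ((((hconty a1 ha1mem).add (hconty c hcmem)).sub continuousOn_const).sub
            continuousOn_const)
      · exact (key y0 hy0mem hy0).symm
  · -- M ≤ sInf
    apply le_csInf
    · exact ⟨M, fun x => f x y0, fun y => (1 / 2) * (f a1 y + f c y - f a1 y0 - f c y0),
        hcontx y0 hy0mem,
        continuousOn_const.mul
          ((((hconty a1 ha1mem).add (hconty c hcmem)).sub continuousOn_const).sub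
            continuousOn_const),
        (key y0 hy0mem hy0).symm⟩
    · rintro e ⟨φ, ψ, hφ, hψ, rfl⟩
      have hgc : ContinuousOn (fun q : ℝ × ℝ => |f q.1 q.2 - φ q.1 - ψ q.2|)
          (Set.Icc a1 b1 ×ˢ Set.Icc a2 b2) := by
        exact ((hfc.sub (hφ.comp continuousOn_fst (fun q hq => hq.1))).sub
          (hψ.comp continuousOn_snd (fun q hq => hq.2))).abs
      have hcomp : IsCompact ((fun q : ℝ × ℝ => |f q.1 q.2 - φ q.1 - ψ q.2|) ''
          (Set.Icc a1 b1 ×ˢ Set.Icc a2 b2)) :=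
        (isCompact_Icc.prod isCompact_Icc).image_of_continuousOn hgc
      have hbdd := hcomp.bddAbove
      have hle : ∀ p : ℝ × ℝ, p ∈ Set.Icc a1 b1 ×ˢ Set.Icc a2 b2 →
          |f p.1 p.2 - φ p.1 - ψ p.2| ≤
          sSup ((fun q : ℝ × ℝ => |f q.1 q.2 - φ q.1 - ψ q.2|) ''
            (Set.Icc a1 b1 ×ˢ Set.Icc a2 b2)) := by
        intro p hp
        exact le_csSup hbdd ⟨p, hp, rfl⟩
      have h1 := hle (a1, a2) ⟨ha1mem, le_rfl, ha2.le⟩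
      have h2 := hle (c, b2) ⟨hcmem, ha2.le, le_rfl⟩
      have h3 := hle (a1, b2) ⟨ha1mem, ha2.le, le_rfl⟩
      have h4 := hle (c, a2) ⟨hcmem, le_rfl, ha2.le⟩
      simp only at h1 h2 h3 h4
      have e1 := le_abs_self (f a1 a2 - φ a1 - ψ a2)
      have e2 := le_abs_self (f c b2 - φ c - ψ b2)
      have e3 := neg_abs_le (f a1 b2 - φ a1 - ψ b2)
      have e4 := neg_abs_le (f c a2 - φ c - ψ a2)
      linarith
end
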